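/- arXiv:1806.05095 — 13 statements merged into one kernel-verified Lean document; each statement's English description precedes it below -/
import Mathlib

section
/- If X_1, ..., X_n are independent nonnegative random variables, each with finite mean, then the k-th order statistic X_{k:n} satisfies E[(X_{k:n})^{n+1-k}] < ∞ for every k ∈ {1,...,n}. -/
open MeasureTheory ProbabilityTheory

/-- The `k`-th order statistic (0-indexed) of the values `X 0 ω, ..., X (n-1) ω`. -/
noncomputable def orderStat {Ω : Type*} {n : ℕ} (X : Fin n → Ω → ℝ) (k : Fin n) (ω : Ω) : ℝ :=
  X (Tuple.sort (fun i => X i ω) k) ω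

lemma measurable_orderStat {Ω : Type*} [MeasurableSpace Ω] {n : ℕ} (X : Fin n → Ω → ℝ)
    (hmeas : ∀ i, Measurable (X i)) (k : Fin n) :
    Measurable (fun ω => orderStat X k ω) := by
  classical
  have hA : ∀ σ : Equiv.Perm (Fin n),
      MeasurableSet {ω | Tuple.sort (fun i => X i ω) = σ} := by
    intro σ
    have hset : {ω | Tuple.sort (fun i => X i ω) = σ} =
        (⋂ (i : Fin n), ⋂ (j : Fin n), {ω | i ≤ j → X (σ i) ω ≤ X (σ j) ω}) ∩
        (⋂ (i : Fin n), ⋂ (j : Fin n),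
          {ω | i < j → X (σ i) ω = X (σ j) ω → σ i < σ j}) := by
      ext ω
      simp only [Set.mem_setOf_eq, Set.mem_inter_iff, Set.mem_iInter]
      rw [eq_comm, Tuple.eq_sort_iff]
      constructor
      · rintro ⟨h1, h2⟩
        exact ⟨fun i j hij => h1 hij, fun i j hij => h2 i j hij⟩
      · rintro ⟨h1, h2⟩
        exact ⟨fun i j hij => h1 i j hij, fun i j hij => h2 i j hij⟩
    rw [hset]
    apply MeasurableSet.inter
    · refine MeasurableSet.iInter fun i => MeasurableSet.iInter fun j => ?_
      by_cases hij : i ≤ j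
      · have : {ω | i ≤ j → X (σ i) ω ≤ X (σ j) ω} = {ω | X (σ i) ω ≤ X (σ j) ω} := by
          ext ω; simp [hij]
        rw [this]
        exact measurableSet_le (hmeas _) (hmeas _)
      · have : {ω | i ≤ j → X (σ i) ω ≤ X (σ j) ω} = Set.univ := by
          ext ω; simp [hij]
        rw [this]; exact MeasurableSet.univ
    · refine MeasurableSet.iInter fun i => MeasurableSet.iInter fun j => ?_
      by_cases hij : i < j
      · by_cases hσ : σ i < σ j
        · have : {ω | i < j → X (σ i) ω = X (σ j) ω → σ i < σ j} = Set.univ := by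
            ext ω; simp [hij, hσ]
          rw [this]; exact MeasurableSet.univ
        · have : {ω | i < j → X (σ i) ω = X (σ j) ω → σ i < σ j}
              = {ω | X (σ i) ω = X (σ j) ω}ᶜ := by
            ext ω; simp [hij, hσ]
          rw [this]
          exact (measurableSet_eq_fun (hmeas _) (hmeas _)).compl
      · have : {ω | i < j → X (σ i) ω = X (σ j) ω → σ i < σ j} = Set.univ := by
          ext ω; simp [hij]
        rw [this]; exact MeasurableSet.univ
  have hfun : (fun ω => orderStat X k ω) = fun ω =>
      ∑ σ : Equiv.Perm (Fin n),
        if Tuple.sort (fun i => X i ω) = σ then X (σ k) ω else 0 := by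
    funext ω
    rw [Finset.sum_ite_eq]
    simp [orderStat]
  rw [hfun]
  exact Finset.measurable_sum _ fun σ _ => Measurable.ite (hA σ) (hmeas _) measurable_const

lemma orderStat_pow_le {Ω : Type*} {n : ℕ} (X : Fin n → Ω → ℝ)
    (hnonneg : ∀ i ω, 0 ≤ X i ω) (k : Fin n) (ω : Ω) :
    orderStat X k ω ^ (n - (k : ℕ)) ≤
      ∑ S ∈ Finset.powersetCard (n - (k : ℕ)) Finset.univ, ∏ i ∈ S, X i ω := by
  classical
  set σ := Tuple.sort (fun i => X i ω) with hσ
  set S : Finset (Fin n) := (Finset.Ici k).image σ with hS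
  have hcard : S.card = n - (k : ℕ) := by
    rw [hS, Finset.card_image_of_injective _ σ.injective, Fin.card_Ici]
  have h1 : orderStat X k ω ^ (n - (k : ℕ)) ≤ ∏ i ∈ S, X i ω := by
    rw [hS, Finset.prod_image (fun a _ b _ h => σ.injective h)]
    calc orderStat X k ω ^ (n - (k : ℕ)) = ∏ _j ∈ Finset.Ici k, X (σ k) ω := by
          rw [Finset.prod_const, Fin.card_Ici]
          rfl
      _ ≤ ∏ j ∈ Finset.Ici k, X (σ j) ω :=
          Finset.prod_le_prod (fun j _ => hnonneg _ _)
            (fun j hj => Tuple.monotone_sort (fun i => X i ω) (Finset.mem_Ici.mp hj))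
  refine h1.trans (Finset.single_le_sum (f := fun T => ∏ i ∈ T, X i ω)
    (fun T _ => Finset.prod_nonneg fun i _ => hnonneg i ω) ?_)
  rw [Finset.mem_powersetCard]
  exact ⟨Finset.subset_univ _, hcard⟩

theorem exists_moment_orderStat
    {Ω : Type*} [MeasurableSpace Ω] (P : Measure Ω) [IsProbabilityMeasure P]
    {n : ℕ} (X : Fin n → Ω → ℝ)
    (hmeas : ∀ i, Measurable (X i))
    (hnonneg : ∀ i ω, 0 ≤ X i ω)
    (hindep : iIndepFun X P)
    (hint : ∀ i, Integrable (X i) P) :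
    ∀ k : Fin n, Integrable (fun ω => (orderStat X k ω) ^ (n - (k : ℕ))) P := by
  intro k
  classical
  have hprod : ∀ T : Finset (Fin n), Integrable (fun ω => ∏ i ∈ T, X i ω) P := by
    intro T
    induction T using Finset.induction_on with
    | empty => simp only [Finset.prod_empty]; exact (integrable_const (1 : ℝ) (μ := P))
    | @insert i T hi ih =>
      have hInd := (hindep.indepFun_finsetProd_of_notMem hmeas hi).symm
      have ih' : Integrable (∏ j ∈ T, X j) P := by
        have : (∏ j ∈ T, X j) = fun ω => ∏ j ∈ T, X j ω := by
          funext ω; simp [Finset.prod_apply]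
        rw [this]; exact ih
      have := hInd.integrable_mul (hint i) ih'
      have heq : (X i * ∏ j ∈ T, X j) = fun ω => ∏ j ∈ insert i T, X j ω := by
        funext ω
        simp [Finset.prod_insert hi, Finset.prod_apply]
      rwa [heq] at this
  have hg : Integrable
      (fun ω => ∑ S ∈ Finset.powersetCard (n - (k : ℕ)) Finset.univ, ∏ i ∈ S, X i ω) P :=
    integrable_finset_sum _ fun S _ => hprod S
  have hmeasf : Measurable fun ω => (orderStat X k ω) ^ (n - (k : ℕ)) :=
    (measurable_orderStat X hmeas k).pow_const _
  refine hg.mono' hmeasf.aestronglyMeasurable ?_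
  filter_upwards with ω
  have h0 : 0 ≤ orderStat X k ω := hnonneg _ ω
  rw [Real.norm_eq_abs, abs_of_nonneg (pow_nonneg h0 _)]
  exact orderStat_pow_le X hnonneg k ω
end

section
/- If X_1, ..., X_n are independent nonnegative random variables with E[X_i] = μ_i ∈ (0, ∞), then E[(X_{k:n})^{n+1-k}] ≤ Σ_{1≤i_1<...<i_{n+1-k}≤n} μ_{i_1} ⋯ μ_{i_{n+1-k}}, the (n+1-k)-th elementary symmetric polynomial in μ_1,...,μ_n. -/
open MeasureTheory ProbabilityTheory

private lemma prod_int_aux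
    {Ω : Type*} [MeasurableSpace Ω] (P : Measure Ω) [IsProbabilityMeasure P]
    {n : ℕ} (X : Fin n → Ω → ℝ)
    (hmeas : ∀ i, Measurable (X i))
    (hindep : iIndepFun X P)
    (hint : ∀ i, Integrable (X i) P) :
    ∀ s : Finset (Fin n), Integrable (fun ω => ∏ i ∈ s, X i ω) P ∧
      ∫ ω, ∏ i ∈ s, X i ω ∂P = ∏ i ∈ s, ∫ ω, X i ω ∂P := by
  intro s
  induction s using Finset.cons_induction with
  | empty => simp
  | cons a s ha ih =>
    have hIndep : IndepFun (∏ j ∈ s, X j) (X a) P :=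
      hindep.indepFun_finsetProd_of_notMem hmeas ha
    have hps : (∏ j ∈ s, X j) = fun ω => ∏ j ∈ s, X j ω := by
      funext ω; simp
    have hmul : Integrable ((∏ j ∈ s, X j) * X a) P := by
      exact hIndep.integrable_mul (hps ▸ ih.1) (hint a)
    constructor
    · have : (fun ω => ∏ i ∈ Finset.cons a s ha, X i ω) =
        (∏ j ∈ s, X j) * X a := by
        funext ω; simp [Finset.prod_cons, Finset.prod_insert ha, mul_comm]
      rw [this]; exact hmul
    · have hi := hIndep.integral_mul_eq_mul_integral (hps ▸ ih.1).aestronglyMeasurable (hint a).aestronglyMeasurable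
      have h1 : (fun ω => ∏ i ∈ Finset.cons a s ha, X i ω) =
          fun ω => (∏ j ∈ s, X j) ω * X a ω := by
        funext ω; simp [Finset.prod_cons, Finset.prod_insert ha, mul_comm]
      calc ∫ ω, ∏ i ∈ Finset.cons a s ha, X i ω ∂P
          = ∫ ω, (∏ j ∈ s, X j) ω * X a ω ∂P := by rw [h1]
        _ = (∫ ω, (∏ j ∈ s, X j) ω ∂P) * ∫ ω, X a ω ∂P := hi
        _ = (∏ i ∈ s, ∫ ω, X i ω ∂P) * ∫ ω, X a ω ∂P := by
            rw [hps]; rw [ih.2]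
        _ = ∏ i ∈ Finset.cons a s ha, ∫ ω, X i ω ∂P := by
            rw [Finset.prod_cons, mul_comm]

theorem moment_orderStat_le_esymm
    {Ω : Type*} [MeasurableSpace Ω] (P : Measure Ω) [IsProbabilityMeasure P]
    {n : ℕ} (X : Fin n → Ω → ℝ) (μ : Fin n → ℝ)
    (hmeas : ∀ i, Measurable (X i))
    (hnonneg : ∀ i ω, 0 ≤ X i ω)
    (hindep : iIndepFun X P)
    (hint : ∀ i, Integrable (X i) P)
    (hmean : ∀ i, ∫ ω, X i ω ∂P = μ i)
    (hpos : ∀ i, 0 < μ i) :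
    ∀ k : Fin n,
      ∫ ω, (orderStat X k ω) ^ (n - (k : ℕ)) ∂P ≤
        ∑ s ∈ Finset.univ.powersetCard (n - (k : ℕ)), ∏ i ∈ s, μ i := by
  intro k
  have haux := prod_int_aux P X hmeas hindep hint
  -- the dominating function
  set g : Ω → ℝ := fun ω => ∑ s ∈ Finset.univ.powersetCard (n - (k : ℕ)), ∏ i ∈ s, X i ω
    with hg
  have hgint : Integrable g P := integrable_finset_sum _ (fun s _ => (haux s).1)
  -- pointwise bound
  have hpt : ∀ ω, (orderStat X k ω) ^ (n - (k : ℕ)) ≤ g ω := by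
    intro ω
    set σ := Tuple.sort (fun i => X i ω) with hσ
    set s : Finset (Fin n) := (Finset.Ici k).image σ with hs
    have hcard : s.card = n - (k : ℕ) := by
      rw [hs, Finset.card_image_of_injective _ σ.injective, Fin.card_Ici]
    have hmem : s ∈ Finset.univ.powersetCard (n - (k : ℕ)) := by
      rw [Finset.mem_powersetCard]
      exact ⟨Finset.subset_univ _, hcard⟩
    have h1 : (orderStat X k ω) ^ (n - (k : ℕ)) ≤ ∏ i ∈ s, X i ω := by
      rw [hs, Finset.prod_image (fun a _ b _ h => σ.injective h)]
      calc (orderStat X k ω) ^ (n - (k : ℕ))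
          = ∏ j ∈ Finset.Ici k, orderStat X k ω := by
            rw [Finset.prod_const, Fin.card_Ici]
        _ ≤ ∏ j ∈ Finset.Ici k, X (σ j) ω := by
            apply Finset.prod_le_prod
            · intro j _; exact hnonneg _ _
            · intro j hj
              exact Tuple.monotone_sort (fun i => X i ω) (Finset.mem_Ici.mp hj)
    refine h1.trans ?_
    exact Finset.single_le_sum (f := fun s => ∏ i ∈ s, X i ω)
      (fun t _ => Finset.prod_nonneg fun i _ => hnonneg i ω) hmem
  have hle : ∫ ω, (orderStat X k ω) ^ (n - (k : ℕ)) ∂P ≤ ∫ ω, g ω ∂P := by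
    apply integral_mono_of_nonneg
    · exact Filter.Eventually.of_forall fun ω =>
        pow_nonneg (hnonneg _ _) _
    · exact hgint
    · exact Filter.Eventually.of_forall hpt
  refine hle.trans_eq ?_
  rw [hg]
  rw [integral_finset_sum _ (fun s _ => (haux s).1)]
  refine Finset.sum_congr rfl fun s _ => ?_
  rw [(haux s).2]
  exact Finset.prod_congr rfl fun i _ => hmean i
end

section
/- If X_1, ..., X_n are independent nonnegative random variables, k ≥ 2, E[X_i] = μ_i > 0 for all i, then equality E[(X_{k:n})^{n+1-k}] = Σ_{1≤i_1<...<i_{n+1-k}≤n} μ_{i_1} ⋯ μ_{i_{n+1-k}} cannot hold. -/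
open MeasureTheory ProbabilityTheory

lemma aux_prod_integral {Ω : Type*} [MeasurableSpace Ω] (P : Measure Ω) [IsProbabilityMeasure P]
    {n : ℕ} (X : Fin n → Ω → ℝ)
    (hmeas : ∀ i, Measurable (X i))
    (hindep : iIndepFun X P)
    (hint : ∀ i, Integrable (X i) P) (s : Finset (Fin n)) :
    Integrable (fun ω => ∏ i ∈ s, X i ω) P ∧
      (∫ ω, ∏ i ∈ s, X i ω ∂P) = ∏ i ∈ s, ∫ ω, X i ω ∂P := by
  induction s using Finset.cons_induction with
  | empty => simp
  | cons a s ha ih =>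
    have hIndep : IndepFun (X a) (∏ j ∈ s, X j) P :=
      (hindep.indepFun_finsetProd_of_notMem hmeas ha).symm
    have h1 : Integrable (X a * ∏ j ∈ s, X j) P := by
      refine hIndep.integrable_mul (hint a) ?_
      have : (∏ j ∈ s, X j) = fun ω => ∏ i ∈ s, X i ω := by
        funext ω; simp [Finset.prod_apply]
      rw [this]; exact ih.1
    have h2 := hIndep.integral_mul_eq_mul_integral (hint a).aestronglyMeasurable (by
      have : (∏ j ∈ s, X j) = fun ω => ∏ i ∈ s, X i ω := by
        funext ω; simp [Finset.prod_apply]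
      rw [this]; exact ih.1.aestronglyMeasurable)
    constructor
    · have : (fun ω => ∏ i ∈ Finset.cons a s ha, X i ω) = X a * ∏ j ∈ s, X j := by
        funext ω; simp [Finset.prod_cons, Finset.prod_insert ha, Finset.prod_apply]
      rw [this]; exact h1
    · rw [show (fun ω => ∏ i ∈ Finset.cons a s ha, X i ω) = X a * ∏ j ∈ s, X j from by
        funext ω; simp [Finset.prod_cons, Finset.prod_insert ha, Finset.prod_apply]] at *
      rw [Finset.prod_cons]
      calc ∫ ω, (X a * ∏ j ∈ s, X j) ω ∂P
          = (∫ ω, X a ω ∂P) * ∫ ω, (∏ j ∈ s, X j) ω ∂P := h2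
        _ = _ := by
            rw [show (fun ω => (∏ j ∈ s, X j) ω) = fun ω => ∏ i ∈ s, X i ω from by
              funext ω; simp [Finset.prod_apply], ih.2]

theorem moment_orderStat_ne_esymm_of_two_le
    {Ω : Type*} [MeasurableSpace Ω] (P : Measure Ω) [IsProbabilityMeasure P]
    {n : ℕ} (X : Fin n → Ω → ℝ) (μ : Fin n → ℝ)
    (hmeas : ∀ i, Measurable (X i))
    (hnonneg : ∀ i ω, 0 ≤ X i ω)
    (hindep : iIndepFun X P)
    (hint : ∀ i, Integrable (X i) P)
    (hmean : ∀ i, ∫ ω, X i ω ∂P = μ i)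
    (hpos : ∀ i, 0 < μ i)
    (k : Fin n) (hk : 1 ≤ (k : ℕ)) :
    ∫ ω, (orderStat X k ω) ^ (n - (k : ℕ)) ∂P ≠
      ∑ s ∈ Finset.univ.powersetCard (n - (k : ℕ)), ∏ i ∈ s, μ i := by
  haveI : Nonempty (Fin n) := ⟨k⟩
  set m : ℕ := n - (k : ℕ) with hm
  have hkn : (k : ℕ) < n := k.isLt
  have hm1 : 1 ≤ m := by omega
  have hmn : m < n := by omega
  -- Z : sum of subset products
  set Z : Ω → ℝ := fun ω => ∑ s ∈ Finset.univ.powersetCard m, ∏ i ∈ s, X i ω with hZ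
  have haux := fun s => aux_prod_integral P X hmeas hindep hint s
  have hZint : Integrable Z P := by
    apply integrable_finset_sum
    intro s _; exact (haux s).1
  have hZval : ∫ ω, Z ω ∂P = ∑ s ∈ Finset.univ.powersetCard m, ∏ i ∈ s, μ i := by
    rw [integral_finset_sum _ (fun s _ => (haux s).1)]
    refine Finset.sum_congr rfl fun s _ => ?_
    rw [(haux s).2]
    exact Finset.prod_congr rfl fun i _ => hmean i
  -- RHS is positive
  have hRHSpos : 0 < ∑ s ∈ Finset.univ.powersetCard m, ∏ i ∈ s, μ i := by
    apply Finset.sum_pos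
    · intro s _; exact Finset.prod_pos fun i _ => hpos i
    · exact Finset.powersetCard_nonempty.mpr (by simpa using hmn.le)
  -- the min function
  set W : Ω → ℝ := fun ω => Finset.univ.inf' Finset.univ_nonempty (fun i => X i ω) with hW
  have hWnonneg : ∀ ω, 0 ≤ W ω := fun ω => Finset.le_inf' _ _ fun i _ => hnonneg i ω
  have hWle : ∀ i ω, W ω ≤ X i ω := fun i ω => Finset.inf'_le _ (Finset.mem_univ i)
  have hOSnonneg : ∀ ω, 0 ≤ orderStat X k ω := fun ω => hnonneg _ ω
  -- key pointwise inequality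
  have m' : Fin n := ⟨m, hmn⟩
  have hpt : ∀ ω, orderStat X k ω ^ m + W ω ^ m ≤ Z ω := by
    intro ω
    set σ := Tuple.sort (fun i => X i ω) with hσ
    obtain ⟨S, hSdef⟩ : ∃ S : Finset (Fin n), S = (Finset.Ici k).image σ := ⟨_, rfl⟩
    obtain ⟨T, hTdef⟩ : ∃ T : Finset (Fin n), T = (Finset.Iio (⟨m, hmn⟩ : Fin n)).image σ := ⟨_, rfl⟩
    have hScard : S.card = m := by
      rw [hSdef, Finset.card_image_of_injective _ σ.injective, Fin.card_Ici]
    have hTcard : T.card = m := by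
      rw [hTdef, Finset.card_image_of_injective _ σ.injective, Fin.card_Iio]
    have hSmem : S ∈ Finset.univ.powersetCard m := by
      rw [Finset.mem_powersetCard]; exact ⟨Finset.subset_univ _, hScard⟩
    have hTmem : T ∈ Finset.univ.powersetCard m := by
      rw [Finset.mem_powersetCard]; exact ⟨Finset.subset_univ _, hTcard⟩
    have h0 : (⟨0, by omega⟩ : Fin n) ∈ Finset.Iio (⟨m, hmn⟩ : Fin n) := by
      simp [Fin.lt_def]; omega
    have h0' : (⟨0, by omega⟩ : Fin n) ∉ Finset.Ici k := by
      simp [Fin.le_def]; omega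
    have hST : S ≠ T := by
      subst hSdef hTdef
      intro h
      have hmem : σ ⟨0, by omega⟩ ∈ (Finset.Iio (⟨m, hmn⟩ : Fin n)).image σ :=
        Finset.mem_image_of_mem (⇑σ) h0
      obtain ⟨j, hj, hjeq⟩ := Finset.mem_image.mp ((le_of_eq h.symm) hmem)
      exact h0' (by rwa [σ.injective hjeq] at hj)
    have hprodS : orderStat X k ω ^ m ≤ ∏ i ∈ S, X i ω := by
      rw [hSdef, Finset.prod_image (fun a _ b _ h => σ.injective h)]
      calc orderStat X k ω ^ m = ∏ _j ∈ Finset.Ici k, orderStat X k ω := by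
            rw [Finset.prod_const, Fin.card_Ici]
        _ ≤ ∏ j ∈ Finset.Ici k, X (σ j) ω := by
            apply Finset.prod_le_prod (fun j _ => hOSnonneg ω)
            intro j hj
            exact Tuple.monotone_sort (fun i => X i ω) (Finset.mem_Ici.mp hj)
    have hprodT : W ω ^ m ≤ ∏ i ∈ T, X i ω := by
      rw [hTdef, Finset.prod_image (fun a _ b _ h => σ.injective h)]
      calc W ω ^ m = ∏ _j ∈ Finset.Iio (⟨m, hmn⟩ : Fin n), W ω := by
            rw [Finset.prod_const, Fin.card_Iio]
        _ ≤ ∏ j ∈ Finset.Iio (⟨m, hmn⟩ : Fin n), X (σ j) ω := by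
            exact Finset.prod_le_prod (fun j _ => hWnonneg ω) (fun j _ => hWle _ ω)
    have hsub : ({S, T} : Finset (Finset (Fin n))) ⊆ Finset.univ.powersetCard m := by
      intro s hs
      rcases Finset.mem_insert.mp hs with h | h
      · exact h ▸ hSmem
      · exact (Finset.mem_singleton.mp h) ▸ hTmem
    calc orderStat X k ω ^ m + W ω ^ m
        ≤ (∏ i ∈ S, X i ω) + ∏ i ∈ T, X i ω := add_le_add hprodS hprodT
      _ = ∑ s ∈ ({S, T} : Finset (Finset (Fin n))), ∏ i ∈ s, X i ω := by
          rw [Finset.sum_pair hST]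
      _ ≤ Z ω := Finset.sum_le_sum_of_subset_of_nonneg hsub
          (fun s _ _ => Finset.prod_nonneg fun i _ => hnonneg i ω)
  by_cases hI : Integrable (fun ω => orderStat X k ω ^ m) P
  · -- integrable case: strict inequality
    have hWmeas : Measurable W := by
      have : W = fun ω => ⨅ i, X i ω :=
        funext fun ω => Finset.inf'_univ_eq_ciInf _
      rw [this]
      exact Measurable.iInf hmeas
    have hWmle : ∀ ω, W ω ^ m ≤ Z ω := fun ω =>
      le_trans (le_add_of_nonneg_left (pow_nonneg (hOSnonneg ω) m)) (hpt ω)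
    have hWmint : Integrable (fun ω => W ω ^ m) P := by
      refine Integrable.mono' hZint ((hWmeas.pow_const m).aestronglyMeasurable) ?_
      filter_upwards with ω
      rw [Real.norm_eq_abs, abs_of_nonneg (pow_nonneg (hWnonneg ω) m)]
      exact hWmle ω
    have hWmpos : 0 < ∫ ω, W ω ^ m ∂P := by
      rw [integral_pos_iff_support_of_nonneg (fun ω => pow_nonneg (hWnonneg ω) m) hWmint]
      have hA : (⋂ i, {ω | 0 < X i ω}) ⊆ Function.support fun ω => W ω ^ m := by
        intro ω hω
        have : 0 < W ω := by
          rw [hW]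
          rw [Finset.lt_inf'_iff]
          intro i _
          exact Set.mem_iInter.mp hω i
        exact (pow_pos this m).ne'
      refine lt_of_lt_of_le ?_ (measure_mono hA)
      have hmeasA := hindep.meas_iInter (s := fun i => {ω | 0 < X i ω})
        (fun i => ⟨Set.Ioi 0, measurableSet_Ioi, rfl⟩)
      rw [hmeasA]
      rw [pos_iff_ne_zero, Finset.prod_ne_zero_iff]
      intro i _
      intro h0
      have : ∀ᵐ ω ∂P, ¬ (0 < X i ω) := by
        rw [ae_iff]; simpa using h0
      have hzero : ∀ᵐ ω ∂P, X i ω = 0 := by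
        filter_upwards [this] with ω hω
        exact le_antisymm (not_lt.mp hω) (hnonneg i ω)
      have : μ i = 0 := by
        rw [← hmean i, integral_eq_zero_of_ae hzero]
      exact absurd this (hpos i).ne'
    have hle : ∫ ω, orderStat X k ω ^ m ∂P ≤ (∫ ω, Z ω ∂P) - ∫ ω, W ω ^ m ∂P := by
      rw [← integral_sub hZint hWmint]
      apply integral_mono hI (hZint.sub hWmint)
      intro ω
      have := hpt ω
      simp only [Pi.sub_apply]
      linarith
    intro heq
    rw [heq, hZval] at hle
    linarith
  · -- non-integrable case: integral is 0 ≠ positive RHS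
    rw [integral_undef hI]
    exact fun h => absurd h.symm hRHSpos.ne'
end

section
/- For any k ∈ {2,...,n}, the supremum of E[(X_{k:n})^{n+1-k}] over all choices of independent nonnegative random variables X_1,...,X_n with prescribed means E[X_i] = μ_i > 0 equals Σ_{1≤i_1<...<i_{n+1-k}≤n} μ_{i_1} ⋯ μ_{i_{n+1-k}}. In particular, for each M ≥ max_i μ_i, the two-valued independent random variables with P(X_i = M) = μ_i/M = 1 − P(X_i = 0) satisfy E[(X_{k:n})^{n+1-k}] ≥ (1 − max_i μ_i / M)^{k−1} Σ μ_{i_1}⋯μ_{i_{n+1-k}}. -/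
open MeasureTheory ProbabilityTheory

lemma aux_pointwise {n : ℕ} (f : Fin n → ℝ) (hf : ∀ i, 0 ≤ f i) (k : Fin n) :
    f (Tuple.sort f k) ^ (n - (k : ℕ)) ≤
      ∑ s ∈ Finset.univ.powersetCard (n - (k : ℕ)), ∏ i ∈ s, f i := by
  set σ := Tuple.sort f with hσ
  have hmono : Monotone (f ∘ σ) := Tuple.monotone_sort f
  have hcard : (Finset.Ici k).card = n - (k : ℕ) := Fin.card_Ici k
  calc f (σ k) ^ (n - (k : ℕ)) = ∏ _j ∈ Finset.Ici k, f (σ k) := by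
        rw [Finset.prod_const, hcard]
    _ ≤ ∏ j ∈ Finset.Ici k, f (σ j) :=
        Finset.prod_le_prod (fun j _ => hf _) (fun j hj => hmono (Finset.mem_Ici.mp hj))
    _ = ∏ i ∈ (Finset.Ici k).image σ, f i :=
        (Finset.prod_image (fun a _ b _ h => σ.injective h)).symm
    _ ≤ ∑ s ∈ Finset.univ.powersetCard (n - (k : ℕ)), ∏ i ∈ s, f i := by
        refine Finset.single_le_sum (f := fun s => ∏ i ∈ s, f i)
          (fun s _ => Finset.prod_nonneg fun i _ => hf i) ?_
        rw [Finset.mem_powersetCard]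
        exact ⟨Finset.subset_univ _,
          by rw [Finset.card_image_of_injective _ σ.injective, hcard]⟩

lemma aux_sort_two_valued {n : ℕ} (f : Fin n → ℝ) (M : ℝ) (hM : 0 < M)
    (hv : ∀ i, f i = 0 ∨ f i = M) (k : Fin n)
    (hcard : n - (k : ℕ) ≤ (Finset.univ.filter (fun i => f i = M)).card) :
    f (Tuple.sort f k) = M := by
  set σ := Tuple.sort f with hσ
  have hmono : Monotone (f ∘ σ) := Tuple.monotone_sort f
  by_contra hne
  have hk0 : f (σ k) = 0 := (hv (σ k)).resolve_right hne
  -- every index with value M is > k after sorting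
  have hsub : (Finset.univ.filter (fun j => f (σ j) = M)) ⊆ Finset.Ioi k := by
    intro j hj
    rw [Finset.mem_filter] at hj
    rw [Finset.mem_Ioi]
    by_contra hle
    push_neg at hle
    have : f (σ j) ≤ f (σ k) := hmono hle
    rw [hj.2, hk0] at this
    exact absurd this (not_le.mpr hM)
  have hcard2 : (Finset.univ.filter (fun j => f (σ j) = M)).card =
      (Finset.univ.filter (fun i => f i = M)).card := by
    have himg : (Finset.univ.filter (fun j => f (σ j) = M)).image σ =
        Finset.univ.filter (fun i => f i = M) := by
      ext i
      simp only [Finset.mem_image, Finset.mem_filter, Finset.mem_univ, true_and]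
      constructor
      · rintro ⟨j, hj, rfl⟩; exact hj
      · intro hi; exact ⟨σ.symm i, by simpa using hi, σ.apply_symm_apply i⟩
    rw [← himg, Finset.card_image_of_injective _ σ.injective]
  have hIoi : (Finset.Ioi k).card = n - 1 - (k : ℕ) := Fin.card_Ioi k
  have h1 : n - (k : ℕ) ≤ n - 1 - (k : ℕ) := by
    calc n - (k : ℕ) ≤ (Finset.univ.filter (fun j => f (σ j) = M)).card := by
          rw [hcard2]; exact hcard
      _ ≤ (Finset.Ioi k).card := Finset.card_le_card hsub
      _ = n - 1 - (k : ℕ) := hIoi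
  have hkn : (k : ℕ) < n := k.isLt
  omega

lemma aux_integrable_dirac {α : Type*} [MeasurableSpace α] [MeasurableSingletonClass α]
    (F : α → ℝ) (a : α) : Integrable F (Measure.dirac a) := by
  have : F =ᵐ[Measure.dirac a] fun _ => F a := by
    rw [MeasureTheory.ae_dirac_eq]; exact Filter.eventually_pure.mpr rfl
  exact (integrable_congr this.symm).mp (integrable_const _)

lemma aux_integral_sum_dirac {α : Type*} [MeasurableSpace α] [MeasurableSingletonClass α]
    {ι : Type*} [Fintype ι] (c : ι → ENNReal) (hc : ∀ i, c i ≠ ⊤) (x : ι → α) (F : α → ℝ) :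
    ∫ a, F a ∂(∑ i : ι, c i • Measure.dirac (x i)) =
      ∑ i : ι, (c i).toReal * F (x i) := by
  rw [integral_finset_sum_measure (fun i _ =>
    ((aux_integrable_dirac F (x i)).smul_measure (hc i)))]
  · congr 1
    ext i
    rw [integral_smul_measure, integral_dirac, smul_eq_mul]

set_option maxHeartbeats 1000000 in
lemma aux_pi_two_point {n : ℕ} (w : Fin n → Bool → ENNReal) (hw : ∀ i b, w i b ≠ ⊤)
    (v : Bool → ℝ) :
    Measure.pi (fun i =>
        w i false • Measure.dirac (v false) + w i true • Measure.dirac (v true)) =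
      ∑ g : Fin n → Bool, (∏ i, w i (g i)) • Measure.dirac (fun i => v (g i)) := by
  haveI : ∀ i, IsFiniteMeasure
      (w i false • Measure.dirac (v false) + w i true • Measure.dirac (v true)) := fun i => by
    constructor
    simp only [Measure.add_apply, Measure.smul_apply, smul_eq_mul]
    refine ENNReal.add_lt_top.mpr ⟨?_, ?_⟩ <;>
      exact ENNReal.mul_lt_top (hw i _).lt_top (measure_lt_top _ _)
  refine Measure.pi_eq fun s hs => ?_
  rw [Measure.finset_sum_apply]
  have hterm : ∀ g : Fin n → Bool,
      ((∏ i, w i (g i)) • Measure.dirac (fun i => v (g i))) (Set.pi Set.univ s)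
        = ∏ i, (w i (g i) * Set.indicator (s i) (1 : ℝ → ENNReal) (v (g i))) := by
    intro g
    rw [Measure.smul_apply, smul_eq_mul, Measure.dirac_apply]
    have hind : Set.indicator (Set.pi Set.univ s) (1 : (Fin n → ℝ) → ENNReal) (fun i => v (g i)) =
        ∏ i, Set.indicator (s i) (1 : ℝ → ENNReal) (v (g i)) := by
      by_cases h : (fun i => v (g i)) ∈ Set.pi Set.univ s
      · rw [Set.indicator_of_mem h]
        have h2 : ∀ i, v (g i) ∈ s i := fun i => h i (Set.mem_univ i)
        simp [Set.indicator_of_mem, h2]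
      · rw [Set.indicator_of_notMem h]
        rw [Set.mem_univ_pi] at h; push_neg at h
        obtain ⟨i, hi⟩ := h
        exact (Finset.prod_eq_zero (Finset.mem_univ i)
          (by simp [Set.indicator_of_notMem hi])).symm
    rw [hind, ← Finset.prod_mul_distrib]
  calc ∑ g : Fin n → Bool,
        ((∏ i, w i (g i)) • Measure.dirac (fun i => v (g i))) (Set.pi Set.univ s)
      = ∑ g ∈ Fintype.piFinset (fun _ : Fin n => (Finset.univ : Finset Bool)),
          ∏ i, (w i (g i) * Set.indicator (s i) (1 : ℝ → ENNReal) (v (g i))) := by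
        rw [Fintype.piFinset_univ]; exact Finset.sum_congr rfl fun g _ => hterm g
    _ = ∏ i, ∑ b : Bool, (w i b * Set.indicator (s i) (1 : ℝ → ENNReal) (v b)) :=
        (Finset.prod_univ_sum (fun _ : Fin n => (Finset.univ : Finset Bool))
          (fun i b => w i b * Set.indicator (s i) (1 : ℝ → ENNReal) (v b))).symm
    _ = ∏ i, (w i false • Measure.dirac (v false) + w i true • Measure.dirac (v true)) (s i) := by
        refine Finset.prod_congr rfl fun i _ => ?_
        rw [Fintype.sum_bool, Measure.add_apply, Measure.smul_apply, Measure.smul_apply,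
          Measure.dirac_apply, Measure.dirac_apply, smul_eq_mul, smul_eq_mul, add_comm]

lemma aux_integral_pi_prod {n : ℕ} (ν : Fin n → Measure ℝ)
    (hprob : ∀ i, IsProbabilityMeasure (ν i)) (s : Finset (Fin n)) :
    ∫ f : Fin n → ℝ, ∏ i ∈ s, f i ∂(Measure.pi ν) = ∏ i ∈ s, ∫ x, x ∂(ν i) := by
  haveI := hprob
  have h := @MeasureTheory.integral_fin_nat_prod_eq_prod ℝ _ n (fun _ => ℝ)
    (fun _ => inferInstance) ν (fun i => inferInstanceAs (SigmaFinite (ν i)))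
    (fun i x => if i ∈ s then x else 1)
  calc ∫ f : Fin n → ℝ, ∏ i ∈ s, f i ∂(Measure.pi ν)
      = ∫ f : Fin n → ℝ, ∏ i : Fin n, (if i ∈ s then f i else 1) ∂(Measure.pi ν) := by
        simp_rw [Finset.prod_ite_mem, Finset.univ_inter]
    _ = ∏ i : Fin n, ∫ x, (if i ∈ s then x else 1) ∂(ν i) := h
    _ = ∏ i : Fin n, (if i ∈ s then ∫ x, x ∂(ν i) else 1) := by
        refine Finset.prod_congr rfl fun i _ => ?_
        split_ifs with hi
        · rfl
        · simp
    _ = ∏ i ∈ s, ∫ x, x ∂(ν i) := by rw [Finset.prod_ite_mem, Finset.univ_inter]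

lemma aux_integrable_pi_prod {n : ℕ} (ν : Fin n → Measure ℝ)
    (hprob : ∀ i, IsProbabilityMeasure (ν i))
    (hint : ∀ i, Integrable (fun x => x) (ν i)) (s : Finset (Fin n)) :
    Integrable (fun f : Fin n → ℝ => ∏ i ∈ s, f i) (Measure.pi ν) := by
  haveI := hprob
  have hint' : ∀ i : Fin n,
      Integrable ((fun (i : Fin n) (x : ℝ) => if i ∈ s then x else 1) i) (ν i) := by
    intro i
    by_cases hi : i ∈ s
    · simpa only [hi, if_true] using hint i
    · simp only [hi, if_false]; exact integrable_const 1
  have h := @MeasureTheory.Integrable.fin_nat_prod ℝ _ n (fun _ => ℝ)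
    (fun _ => inferInstance) ν (fun i => inferInstanceAs (SigmaFinite (ν i)))
    (fun i x => if i ∈ s then x else 1) hint'
  have he : (fun f : Fin n → ℝ => ∏ i ∈ s, f i) =
      fun f => ∏ i : Fin n, (if i ∈ s then f i else 1) := by
    funext f; rw [Finset.prod_ite_mem, Finset.univ_inter]
  rw [he]; exact h

lemma aux_ae_nonneg {n : ℕ} (ν : Fin n → Measure ℝ)
    (hprob : ∀ i, IsProbabilityMeasure (ν i)) (hae : ∀ i, ∀ᵐ x ∂(ν i), 0 ≤ x) :
    ∀ᵐ f ∂(Measure.pi ν), ∀ i, 0 ≤ f i := by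
  haveI := hprob
  exact Filter.eventually_all.2 fun i => Measure.tendsto_eval_ae_ae.eventually (hae i)

lemma aux_upper {n : ℕ} (μ : Fin n → ℝ) (hpos : ∀ i, 0 < μ i) (k : Fin n)
    (ν : Fin n → Measure ℝ) (hprob : ∀ i, IsProbabilityMeasure (ν i))
    (hae : ∀ i, ∀ᵐ x ∂(ν i), 0 ≤ x) (hmean : ∀ i, ∫ x, x ∂(ν i) = μ i) :
    ∫ f, (orderStat (fun i (f : Fin n → ℝ) => f i) k f) ^ (n - (k : ℕ)) ∂(Measure.pi ν) ≤
      ∑ s ∈ Finset.univ.powersetCard (n - (k : ℕ)), ∏ i ∈ s, μ i := by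
  haveI := hprob
  have hint : ∀ i, Integrable (fun x : ℝ => x) (ν i) := by
    intro i
    by_contra hni
    have h0 := integral_undef hni
    rw [hmean i] at h0
    exact (hpos i).ne' h0
  have hco : ∀ᵐ f ∂(Measure.pi ν), ∀ i, 0 ≤ f i := aux_ae_nonneg ν hprob hae
  have hH : Integrable (fun f : Fin n → ℝ =>
      ∑ s ∈ Finset.univ.powersetCard (n - (k : ℕ)), ∏ i ∈ s, f i) (Measure.pi ν) :=
    integrable_finset_sum _ (fun s _ => aux_integrable_pi_prod ν hprob hint s)
  have hle : ∫ f, (orderStat (fun i (f : Fin n → ℝ) => f i) k f) ^ (n - (k : ℕ))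
        ∂(Measure.pi ν) ≤
      ∫ f : Fin n → ℝ, ∑ s ∈ Finset.univ.powersetCard (n - (k : ℕ)), ∏ i ∈ s, f i
        ∂(Measure.pi ν) := by
    refine integral_mono_of_nonneg ?_ hH ?_
    · filter_upwards [hco] with f hf
      exact pow_nonneg (hf _) _
    · filter_upwards [hco] with f hf
      exact aux_pointwise f hf k
  refine hle.trans ?_
  rw [integral_finset_sum _ (fun s _ => aux_integrable_pi_prod ν hprob hint s)]
  refine le_of_eq (Finset.sum_congr rfl fun s _ => ?_)
  rw [aux_integral_pi_prod ν hprob s]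
  exact Finset.prod_congr rfl fun i _ => hmean i

lemma aux_part2 {n : ℕ} (μ : Fin n → ℝ) (hpos : ∀ i, 0 < μ i) (k : Fin n)
    (M : ℝ) (hM : ∀ i, μ i ≤ M) :
    ((1 - (⨆ i, μ i) / M) ^ ((k : ℕ)) *
        ∑ s ∈ Finset.univ.powersetCard (n - (k : ℕ)), ∏ i ∈ s, μ i) ≤
      ∫ f, (orderStat (fun i (f : Fin n → ℝ) => f i) k f) ^ (n - (k : ℕ))
        ∂(Measure.pi (fun i =>
          ENNReal.ofReal (1 - μ i / M) • Measure.dirac (0 : ℝ) +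
            ENNReal.ofReal (μ i / M) • Measure.dirac M)) := by
  have hM0 : 0 < M := (hpos k).trans_le (hM k)
  have hp0 : ∀ i, 0 ≤ μ i / M := fun i => (div_pos (hpos i) hM0).le
  have hp1 : ∀ i, μ i / M ≤ 1 := fun i => (div_le_one hM0).mpr (hM i)
  set w : Fin n → Bool → ENNReal := fun i b =>
    if b then ENNReal.ofReal (μ i / M) else ENNReal.ofReal (1 - μ i / M) with hwdef
  set v : Bool → ℝ := fun b => if b then M else 0 with hvdef
  have hw : ∀ i b, w i b ≠ ⊤ := by
    intro i b; cases b <;> simp [hwdef, ENNReal.ofReal_ne_top]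
  have hν : (fun i => ENNReal.ofReal (1 - μ i / M) • Measure.dirac (0 : ℝ) +
      ENNReal.ofReal (μ i / M) • Measure.dirac M) =
      (fun i => w i false • Measure.dirac (v false) + w i true • Measure.dirac (v true)) := by
    funext i; simp [hwdef, hvdef]
  rw [hν, aux_pi_two_point w hw v,
    aux_integral_sum_dirac _ (fun g => ENNReal.prod_ne_top (fun i _ => hw i (g i))) _ _]
  -- abbreviations
  set c := ⨆ i, μ i with hcdef
  haveI : Nonempty (Fin n) := ⟨k⟩
  have hcM : c ≤ M := ciSup_le hM
  have hμc : ∀ i, μ i ≤ c := fun i => le_ciSup (Set.Finite.bddAbove (Set.finite_range μ)) i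
  have hq0 : 0 ≤ 1 - c / M := by
    have : c / M ≤ 1 := (div_le_one hM0).mpr hcM
    linarith
  set a : (Fin n → Bool) → ℝ := fun g =>
    (∏ i, w i (g i)).toReal *
      orderStat (fun i (f : Fin n → ℝ) => f i) k (fun i => v (g i)) ^ (n - (k : ℕ)) with hadef
  have hvnn : ∀ b, 0 ≤ v b := by intro b; cases b <;> simp [hvdef, hM0.le]
  have hanonneg : ∀ g, 0 ≤ a g := by
    intro g
    exact mul_nonneg ENNReal.toReal_nonneg (pow_nonneg (hvnn _) _)
  -- the injection from subsets to boolean configurations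
  set ind : Finset (Fin n) → (Fin n → Bool) := fun T i => decide (i ∈ T) with hinddef
  have hinj : ∀ T ∈ Finset.univ.powersetCard (n - (k : ℕ)),
      ∀ T' ∈ Finset.univ.powersetCard (n - (k : ℕ)), ind T = ind T' → T = T' := by
    intro T _ T' _ h
    ext i
    have := congrFun h i
    simpa [hinddef] using this
  have key : ∀ T ∈ Finset.univ.powersetCard (n - (k : ℕ)),
      (1 - c / M) ^ (k : ℕ) * ∏ i ∈ T, μ i ≤ a (ind T) := by
    intro T hT
    rw [Finset.mem_powersetCard] at hT
    obtain ⟨-, hTcard⟩ := hT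
    -- the configuration function
    have hE : (fun i => v (ind T i)) = fun i => if i ∈ T then M else 0 := by
      funext i; by_cases hi : i ∈ T <;> simp [hinddef, hvdef, hi]
    -- value of the order statistic
    have hval : orderStat (fun i (f : Fin n → ℝ) => f i) k (fun i => v (ind T i)) = M := by
      rw [hE]
      refine aux_sort_two_valued _ M hM0 ?_ k ?_
      · intro i; by_cases hi : i ∈ T <;> simp [hi]
      · have hfil : Finset.univ.filter (fun i => (if i ∈ T then M else 0) = M) = T := by
          ext i
          by_cases hi : i ∈ T <;> simp [hi, hM0.ne, hM0.ne']
        rw [hfil, hTcard]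
    -- the weight
    have hwt : (∏ i, w i (ind T i)).toReal =
        (∏ i ∈ T, μ i / M) * ∏ i ∈ Tᶜ, (1 - μ i / M) := by
      rw [ENNReal.toReal_prod, ← Finset.prod_mul_prod_compl T]
      congr 1
      · refine Finset.prod_congr rfl fun i hi => ?_
        simp [hwdef, hinddef, hi, ENNReal.toReal_ofReal (hp0 i)]
      · refine Finset.prod_congr rfl fun i hi => ?_
        rw [Finset.mem_compl] at hi
        have h1 : 0 ≤ 1 - μ i / M := by linarith [hp1 i]
        simp [hwdef, hinddef, hi, ENNReal.toReal_ofReal h1]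
    have hcompl : (Tᶜ : Finset (Fin n)).card = (k : ℕ) := by
      rw [Finset.card_compl, hTcard, Fintype.card_fin]
      have := k.isLt
      omega
    have hprodc : (1 - c / M) ^ (k : ℕ) ≤ ∏ i ∈ Tᶜ, (1 - μ i / M) := by
      calc (1 - c / M) ^ (k : ℕ) = ∏ _i ∈ Tᶜ, (1 - c / M) := by
            rw [Finset.prod_const, hcompl]
        _ ≤ ∏ i ∈ Tᶜ, (1 - μ i / M) := by
            refine Finset.prod_le_prod (fun i _ => hq0) (fun i _ => ?_)
            have h2 : μ i / M ≤ c / M := by gcongr; exact hμc i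
            linarith
    have hpm : (∏ i ∈ T, μ i / M) * M ^ (n - (k : ℕ)) = ∏ i ∈ T, μ i := by
      rw [show M ^ (n - (k : ℕ)) = ∏ _i ∈ T, M by rw [Finset.prod_const, hTcard],
        ← Finset.prod_mul_distrib]
      exact Finset.prod_congr rfl fun i _ => div_mul_cancel₀ (μ i) hM0.ne'
    have hμT : (0:ℝ) ≤ ∏ i ∈ T, μ i := Finset.prod_nonneg fun i _ => (hpos i).le
    calc (1 - c / M) ^ (k : ℕ) * ∏ i ∈ T, μ i
        = (∏ i ∈ T, μ i) * (1 - c / M) ^ (k : ℕ) := by ring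
      _ ≤ (∏ i ∈ T, μ i) * ∏ i ∈ Tᶜ, (1 - μ i / M) := by
          exact mul_le_mul_of_nonneg_left hprodc hμT
      _ = a (ind T) := by
          rw [hadef]
          simp only [hval, hwt, ← hpm]
          ring
  -- assemble
  calc (1 - c / M) ^ (k : ℕ) * ∑ s ∈ Finset.univ.powersetCard (n - (k : ℕ)), ∏ i ∈ s, μ i
      = ∑ T ∈ Finset.univ.powersetCard (n - (k : ℕ)),
          (1 - c / M) ^ (k : ℕ) * ∏ i ∈ T, μ i := by rw [Finset.mul_sum]
    _ ≤ ∑ T ∈ Finset.univ.powersetCard (n - (k : ℕ)), a (ind T) :=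
        Finset.sum_le_sum key
    _ = ∑ g ∈ (Finset.univ.powersetCard (n - (k : ℕ))).image ind, a g :=
        (Finset.sum_image hinj).symm
    _ ≤ ∑ g : Fin n → Bool, a g :=
        Finset.sum_le_sum_of_subset_of_nonneg (Finset.subset_univ _)
          (fun g _ _ => hanonneg g)

lemma aux_bern_prob {n : ℕ} (μ : Fin n → ℝ) (hpos : ∀ i, 0 < μ i) (M : ℝ) (hM0 : 0 < M)
    (hM : ∀ i, μ i ≤ M) (i : Fin n) :
    IsProbabilityMeasure (ENNReal.ofReal (1 - μ i / M) • Measure.dirac (0 : ℝ) +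
      ENNReal.ofReal (μ i / M) • Measure.dirac M) := by
  have hp0 : 0 ≤ μ i / M := (div_pos (hpos i) hM0).le
  have h1 : 0 ≤ 1 - μ i / M := by
    have := (div_le_one hM0).mpr (hM i); linarith
  constructor
  rw [Measure.add_apply, Measure.smul_apply, Measure.smul_apply, measure_univ, measure_univ,
    smul_eq_mul, smul_eq_mul, mul_one, mul_one, ← ENNReal.ofReal_add h1 hp0]
  norm_num

lemma aux_bern_ae {n : ℕ} (μ : Fin n → ℝ) (M : ℝ) (hM0 : 0 < M) (i : Fin n) :
    ∀ᵐ x ∂(ENNReal.ofReal (1 - μ i / M) • Measure.dirac (0 : ℝ) +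
      ENNReal.ofReal (μ i / M) • Measure.dirac M), 0 ≤ x := by
  rw [ae_iff, Measure.add_apply, Measure.smul_apply, Measure.smul_apply,
    Measure.dirac_apply, Measure.dirac_apply]
  simp [Set.indicator_apply, hM0.le]

lemma aux_bern_mean {n : ℕ} (μ : Fin n → ℝ) (hpos : ∀ i, 0 < μ i) (M : ℝ) (hM0 : 0 < M)
    (hM : ∀ i, μ i ≤ M) (i : Fin n) :
    ∫ x, x ∂(ENNReal.ofReal (1 - μ i / M) • Measure.dirac (0 : ℝ) +
      ENNReal.ofReal (μ i / M) • Measure.dirac M) = μ i := by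
  have hp0 : 0 ≤ μ i / M := (div_pos (hpos i) hM0).le
  have h1 : 0 ≤ 1 - μ i / M := by
    have := (div_le_one hM0).mpr (hM i); linarith
  rw [integral_add_measure
      ((aux_integrable_dirac (fun x : ℝ => x) 0).smul_measure ENNReal.ofReal_ne_top)
      ((aux_integrable_dirac (fun x : ℝ => x) M).smul_measure ENNReal.ofReal_ne_top),
    integral_smul_measure, integral_smul_measure, integral_dirac, integral_dirac,
    ENNReal.toReal_ofReal h1, ENNReal.toReal_ofReal hp0]
  simp only [smul_eq_mul, mul_zero, zero_add]
  exact div_mul_cancel₀ (μ i) hM0.ne'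

theorem sSup_moment_orderStat_eq_esymm
    {n : ℕ} (μ : Fin n → ℝ) (hpos : ∀ i, 0 < μ i)
    (k : Fin n) (hk : 1 ≤ (k : ℕ)) :
    sSup {y : ℝ | ∃ ν : Fin n → Measure ℝ,
        (∀ i, IsProbabilityMeasure (ν i)) ∧
        (∀ i, ∀ᵐ x ∂(ν i), 0 ≤ x) ∧
        (∀ i, ∫ x, x ∂(ν i) = μ i) ∧
        y = ∫ f, (orderStat (fun i (f : Fin n → ℝ) => f i) k f) ^ (n - (k : ℕ))
              ∂(Measure.pi ν)} =
      ∑ s ∈ Finset.univ.powersetCard (n - (k : ℕ)), ∏ i ∈ s, μ i ∧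
    ∀ M : ℝ, (∀ i, μ i ≤ M) →
      ((1 - (⨆ i, μ i) / M) ^ ((k : ℕ)) *
          ∑ s ∈ Finset.univ.powersetCard (n - (k : ℕ)), ∏ i ∈ s, μ i) ≤
        ∫ f, (orderStat (fun i (f : Fin n → ℝ) => f i) k f) ^ (n - (k : ℕ))
          ∂(Measure.pi (fun i =>
            ENNReal.ofReal (1 - μ i / M) • Measure.dirac (0 : ℝ) +
              ENNReal.ofReal (μ i / M) • Measure.dirac M)) := by
  haveI : Nonempty (Fin n) := ⟨k⟩
  set e := ∑ s ∈ Finset.univ.powersetCard (n - (k : ℕ)), ∏ i ∈ s, μ i with hedef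
  have he0 : 0 ≤ e := Finset.sum_nonneg fun s _ => Finset.prod_nonneg fun i _ => (hpos i).le
  set S := {y : ℝ | ∃ ν : Fin n → Measure ℝ,
      (∀ i, IsProbabilityMeasure (ν i)) ∧
      (∀ i, ∀ᵐ x ∂(ν i), 0 ≤ x) ∧
      (∀ i, ∫ x, x ∂(ν i) = μ i) ∧
      y = ∫ f, (orderStat (fun i (f : Fin n → ℝ) => f i) k f) ^ (n - (k : ℕ))
            ∂(Measure.pi ν)} with hSdef
  have hub : ∀ y ∈ S, y ≤ e := by
    rintro y ⟨ν, hprob, hae, hmean, rfl⟩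
    exact aux_upper μ hpos k ν hprob hae hmean
  have hbdd : BddAbove S := ⟨e, hub⟩
  constructor
  · refine le_antisymm (Real.sSup_le hub he0) ?_
    set c := ⨆ i, μ i with hcdef
    have hμc : ∀ i, μ i ≤ c := fun i =>
      le_ciSup (Set.Finite.bddAbove (Set.finite_range μ)) i
    have htend : Filter.Tendsto (fun M : ℝ => (1 - c / M) ^ (k : ℕ) * e)
        Filter.atTop (nhds e) := by
      have h1 : Filter.Tendsto (fun M : ℝ => c / M) Filter.atTop (nhds 0) := by
        simpa [div_eq_mul_inv] using tendsto_inv_atTop_zero.const_mul c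
      have h2 : Filter.Tendsto (fun M : ℝ => (1 - c / M) ^ (k : ℕ) * e)
          Filter.atTop (nhds ((1 - 0) ^ (k : ℕ) * e)) :=
        (((tendsto_const_nhds.sub h1).pow (k : ℕ)).mul_const e)
      simpa using h2
    refine le_of_tendsto htend ?_
    filter_upwards [Filter.eventually_ge_atTop c] with M hMc
    have hM : ∀ i, μ i ≤ M := fun i => (hμc i).trans hMc
    have hM0 : 0 < M := (hpos k).trans_le (hM k)
    refine le_trans (aux_part2 μ hpos k M hM) (le_csSup hbdd ?_)
    exact ⟨fun i => ENNReal.ofReal (1 - μ i / M) • Measure.dirac (0 : ℝ) +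
        ENNReal.ofReal (μ i / M) • Measure.dirac M,
      fun i => aux_bern_prob μ hpos M hM0 hM i,
      fun i => aux_bern_ae μ M hM0 i,
      fun i => aux_bern_mean μ hpos M hM0 hM i, rfl⟩
  · intro M hM
    exact aux_part2 μ hpos k M hM
end

section
/- If X_1,...,X_n are iid nonnegative random variables with common mean μ > 0, then E[(X_{k:n})^{n+1-k}] ≤ C(n, k−1) μ^{n+1-k} for each k ∈ {1,...,n}, where C(n, k−1) is the binomial coefficient. -/
open MeasureTheory ProbabilityTheory

lemma integrable_prod_aux {Ω : Type*} [MeasurableSpace Ω] (P : Measure Ω) [IsProbabilityMeasure P]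
    {n : ℕ} (X : Fin n → Ω → ℝ)
    (hmeas : ∀ i, Measurable (X i))
    (hindep : iIndepFun X P)
    (hint : ∀ i, Integrable (X i) P) (s : Finset (Fin n)) :
    Integrable (∏ i ∈ s, X i) P := by
  classical
  induction s using Finset.induction with
  | empty => rw [Finset.prod_empty]; exact integrable_const (1:ℝ)
  | @insert i s hi ih =>
    rw [Finset.prod_insert hi]
    exact ((hindep.indepFun_finset_prod_of_notMem hmeas hi).symm).integrable_mul (hint i) ih

lemma integral_prod_aux {Ω : Type*} [MeasurableSpace Ω] (P : Measure Ω) [IsProbabilityMeasure P]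
    {n : ℕ} (X : Fin n → Ω → ℝ) (μ : ℝ)
    (hmeas : ∀ i, Measurable (X i))
    (hindep : iIndepFun X P)
    (hint : ∀ i, Integrable (X i) P)
    (hmean : ∀ i, ∫ ω, X i ω ∂P = μ) (s : Finset (Fin n)) :
    ∫ ω, ∏ i ∈ s, X i ω ∂P = μ ^ s.card := by
  classical
  induction s using Finset.induction with
  | empty => simp
  | @insert i s hi ih =>
    have hprod : ∫ ω, (X i * ∏ j ∈ s, X j) ω ∂P = (∫ ω, X i ω ∂P) * ∫ ω, (∏ j ∈ s, X j) ω ∂P :=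
      ((hindep.indepFun_finset_prod_of_notMem hmeas hi).symm).integral_mul_eq_mul_integral
        (hint i).aestronglyMeasurable (integrable_prod_aux P X hmeas hindep hint s).aestronglyMeasurable
    have h1 : ∫ ω, ∏ j ∈ insert i s, X j ω ∂P = ∫ ω, (X i * ∏ j ∈ s, X j) ω ∂P := by
      congr 1; ext ω; simp [Finset.prod_insert hi, Finset.prod_apply]
    have h2 : ∫ ω, (∏ j ∈ s, X j) ω ∂P = μ ^ s.card := by
      rw [← ih]; congr 1; ext ω; simp [Finset.prod_apply]
    rw [h1, hprod, h2, hmean i, Finset.card_insert_of_notMem hi, pow_succ']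

theorem moment_orderStat_le_choose_mul_pow_of_iid
    {Ω : Type*} [MeasurableSpace Ω] (P : Measure Ω) [IsProbabilityMeasure P]
    {n : ℕ} (X : Fin n → Ω → ℝ) (μ : ℝ) (hμ : 0 < μ)
    (hmeas : ∀ i, Measurable (X i))
    (hnonneg : ∀ i ω, 0 ≤ X i ω)
    (hindep : iIndepFun X P)
    (hident : ∀ i j, IdentDistrib (X i) (X j) P P)
    (hint : ∀ i, Integrable (X i) P)
    (hmean : ∀ i, ∫ ω, X i ω ∂P = μ) :
    ∀ k : Fin n,
      ∫ ω, (orderStat X k ω) ^ (n - (k : ℕ)) ∂P ≤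
        (n.choose (k : ℕ)) * μ ^ (n - (k : ℕ)) := by
  classical
  intro k
  set m := n - (k : ℕ) with hm
  set 𝒮 := Finset.powersetCard m (Finset.univ : Finset (Fin n)) with h𝒮
  set g : Ω → ℝ := fun ω => ∑ S ∈ 𝒮, ∏ i ∈ S, X i ω with hg
  -- pointwise bound
  have hpt : ∀ ω, (orderStat X k ω) ^ m ≤ g ω := by
    intro ω
    set σ := Tuple.sort (fun i => X i ω) with hσ
    have hmono : Monotone ((fun i => X i ω) ∘ σ) := Tuple.monotone_sort _
    have hcard : (Finset.Ici k).card = m := by rw [hm, Fin.card_Ici]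
    have step1 : (orderStat X k ω) ^ m ≤ ∏ j ∈ Finset.Ici k, X (σ j) ω := by
      rw [← hcard, ← Finset.prod_const]
      apply Finset.prod_le_prod (fun j _ => hnonneg _ _)
      intro j hj
      exact hmono (Finset.mem_Ici.mp hj)
    have step2 : ∏ j ∈ Finset.Ici k, X (σ j) ω = ∏ i ∈ (Finset.Ici k).image σ, X i ω := by
      rw [Finset.prod_image (fun a _ b _ h => σ.injective h)]
    have hmem : (Finset.Ici k).image σ ∈ 𝒮 := by
      rw [h𝒮, Finset.mem_powersetCard]
      exact ⟨Finset.subset_univ _,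
        by rw [Finset.card_image_of_injective _ σ.injective, hcard]⟩
    have step3 : ∏ i ∈ (Finset.Ici k).image σ, X i ω ≤ g ω :=
      Finset.single_le_sum (f := fun S => ∏ i ∈ S, X i ω)
        (fun S _ => Finset.prod_nonneg fun i _ => hnonneg i ω) hmem
    calc (orderStat X k ω) ^ m ≤ ∏ j ∈ Finset.Ici k, X (σ j) ω := step1
      _ = _ := step2
      _ ≤ g ω := step3
  have hgint : Integrable g P := by
    apply integrable_finset_sum
    intro S _
    have h := integrable_prod_aux P X hmeas hindep hint S
    convert h using 1
    · rfl
    ext a; simp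
  have hmono : ∫ ω, (orderStat X k ω) ^ m ∂P ≤ ∫ ω, g ω ∂P := by
    apply integral_mono_of_nonneg
    · exact ae_of_all _ fun ω => pow_nonneg (hnonneg _ _) m
    · exact hgint
    · exact ae_of_all _ hpt
  have hgval : ∫ ω, g ω ∂P = (n.choose (k : ℕ)) * μ ^ m := by
    rw [hg]
    rw [integral_finset_sum _ (fun S _ => by
      have h := integrable_prod_aux P X hmeas hindep hint S
      convert h using 1
      ext a; simp)]
    have : ∀ S ∈ 𝒮, ∫ ω, ∏ i ∈ S, X i ω ∂P = μ ^ m := by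
      intro S hS
      rw [integral_prod_aux P X μ hmeas hindep hint hmean S,
        (Finset.mem_powersetCard.mp hS).2]
    rw [Finset.sum_congr rfl this, Finset.sum_const, nsmul_eq_mul]
    congr 2
    rw [h𝒮, Finset.card_powersetCard, Finset.card_univ, Fintype.card_fin, hm,
      Nat.choose_symm (le_of_lt k.isLt)]
  · exact hgval ▸ hmono
end

section
/- The function R_1(x) defined by R_1(x) = 1 for x ≤ 1/2 and R_1(x) = 1/((2x)(1 + log(2x))^2) for x ≥ 1/2 is a reliability (survival) function of a nonnegative random variable Y_1 with E[Y_1] = 1, and for α > 0, E[Y_1^α] < ∞ if and only if α ∈ (0,1]. -/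
open MeasureTheory ProbabilityTheory Set Filter Topology

/-- The reliability function `R₁`. -/
noncomputable def R1 (x : ℝ) : ℝ :=
  if x ≤ 1 / 2 then 1 else 1 / ((2 * x) * (1 + Real.log (2 * x)) ^ 2)

lemma one_le_D {x : ℝ} (hx : 1/2 ≤ x) : 1 ≤ (2 * x) * (1 + Real.log (2 * x)) ^ 2 := by
  have h1 : (1:ℝ) ≤ 2 * x := by linarith
  have h2 : 0 ≤ Real.log (2 * x) := Real.log_nonneg h1
  nlinarith [sq_nonneg (Real.log (2 * x))]

lemma D_pos {x : ℝ} (hx : 1/2 ≤ x) : 0 < (2 * x) * (1 + Real.log (2 * x)) ^ 2 :=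
  lt_of_lt_of_le one_pos (one_le_D hx)

lemma R1_of_gt {x : ℝ} (hx : 1/2 < x) : R1 x = 1 / ((2 * x) * (1 + Real.log (2 * x)) ^ 2) := by
  rw [R1, if_neg (not_le.2 hx)]

lemma R1_of_le {x : ℝ} (hx : x ≤ 1/2) : R1 x = 1 := by rw [R1, if_pos hx]

lemma R1_nonneg (x : ℝ) : 0 ≤ R1 x := by
  rcases le_or_gt x (1/2) with h | h
  · rw [R1_of_le h]; norm_num
  · rw [R1_of_gt h]
    positivity

lemma R1_le_one (x : ℝ) : R1 x ≤ 1 := by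
  rcases le_or_gt x (1/2) with h | h
  · rw [R1_of_le h]
  · rw [R1_of_gt h]
    rw [div_le_one (D_pos h.le)]
    exact one_le_D h.le

lemma R1_anti : Antitone R1 := by
  intro x y hxy
  rcases le_or_gt y (1/2) with hy | hy
  · rw [R1_of_le hy, R1_of_le (hxy.trans hy)]
  · rw [R1_of_gt hy]
    rcases le_or_gt x (1/2) with hx | hx
    · rw [R1_of_le hx, div_le_one (D_pos hy.le)]
      exact one_le_D hy.le
    · rw [R1_of_gt hx]
      apply one_div_le_one_div_of_le (D_pos hx.le)
      have hlx : 0 ≤ Real.log (2 * x) := Real.log_nonneg (by linarith)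
      have hll : Real.log (2 * x) ≤ Real.log (2 * y) :=
        Real.log_le_log (by linarith) (by linarith)
      have : (1 + Real.log (2 * x)) ^ 2 ≤ (1 + Real.log (2 * y)) ^ 2 := by nlinarith
      have h2 : (0:ℝ) ≤ (1 + Real.log (2 * x)) ^ 2 := sq_nonneg _
      nlinarith

lemma R1_continuous : Continuous R1 := by
  have hG : Continuous (fun x : ℝ =>
      1 / ((2 * max x (1/2)) * (1 + Real.log (2 * max x (1/2))) ^ 2)) := by
    rw [continuous_iff_continuousAt]
    intro x
    have hm : Continuous fun x : ℝ => 2 * max x (1/2) :=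
      continuous_const.mul (continuous_id.max continuous_const)
    have hm1 : (1:ℝ) ≤ 2 * max x (1/2) := by
      have := le_max_right x (1/2); linarith
    have hlog : ContinuousAt (fun x : ℝ => Real.log (2 * max x (1/2))) x :=
      (Real.continuousAt_log (by linarith)).comp hm.continuousAt
    have hden : ContinuousAt (fun x : ℝ =>
        (2 * max x (1/2)) * (1 + Real.log (2 * max x (1/2))) ^ 2) x :=
      hm.continuousAt.mul ((continuousAt_const.add hlog).pow 2)
    exact continuousAt_const.div hden (ne_of_gt (D_pos (le_max_right x _)))
  have : R1 = fun x : ℝ => if x ≤ 1/2 then (1:ℝ) else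
      1 / ((2 * max x (1/2)) * (1 + Real.log (2 * max x (1/2))) ^ 2) := by
    funext x
    rcases le_or_gt x (1/2) with h | h
    · rw [R1_of_le h, if_pos h]
    · rw [R1_of_gt h, if_neg (not_le.2 h), max_eq_left h.le]
  rw [this]
  apply Continuous.if_le continuous_const hG continuous_id continuous_const
  intro x hx
  simp only [id_eq] at hx
  subst hx
  norm_num [Real.log_one]

lemma R1_tendsto_atTop : Tendsto R1 atTop (𝓝 0) := by
  have hmul : Tendsto (fun x : ℝ => 2 * x) atTop atTop :=
    Tendsto.const_mul_atTop two_pos tendsto_id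
  have h2x : Tendsto (fun x : ℝ => 1 / (2 * x)) atTop (𝓝 0) :=
    Tendsto.const_div_atTop hmul 1
  refine tendsto_of_tendsto_of_tendsto_of_le_of_le' tendsto_const_nhds h2x
    (Eventually.of_forall fun x => R1_nonneg x) ?_
  filter_upwards [eventually_gt_atTop (1/2 : ℝ)] with x hx
  rw [R1_of_gt hx]
  have h1 : (0:ℝ) < 2 * x := by linarith
  have h2 : 0 ≤ Real.log (2 * x) := Real.log_nonneg (by linarith)
  apply one_div_le_one_div_of_le h1
  nlinarith [sq_nonneg (Real.log (2 * x))]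

/-- The distribution function. -/
noncomputable def F1 : StieltjesFunction ℝ where
  toFun := fun x => 1 - R1 x
  mono' := fun x y hxy => by simp only; linarith [R1_anti hxy]
  right_continuous' := fun x =>
    ((continuous_const.sub R1_continuous).continuousAt).continuousWithinAt

lemma F1_apply (x : ℝ) : F1 x = 1 - R1 x := rfl

lemma F1_tendsto_atBot : Tendsto F1 atBot (𝓝 0) := by
  have : (fun x : ℝ => (0:ℝ)) =ᶠ[atBot] F1 := by
    filter_upwards [eventually_le_atBot (1/2 : ℝ)] with x hx
    rw [F1_apply, R1_of_le hx]; ring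
  exact Tendsto.congr' this tendsto_const_nhds

lemma F1_tendsto_atTop : Tendsto F1 atTop (𝓝 1) := by
  have : Tendsto (fun x => 1 - R1 x) atTop (𝓝 (1 - 0)) :=
    tendsto_const_nhds.sub R1_tendsto_atTop
  exact (by simpa using this : Tendsto (fun x => 1 - R1 x) atTop (𝓝 1))

/-- The measure. -/
noncomputable def nu1 : Measure ℝ := F1.measure

instance : IsProbabilityMeasure nu1 :=
  F1.isProbabilityMeasure F1_tendsto_atBot F1_tendsto_atTop

lemma nu1_Iic (x : ℝ) : nu1 (Set.Iic x) = ENNReal.ofReal (1 - R1 x) := by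
  rw [nu1, F1.measure_Iic F1_tendsto_atBot x, F1_apply, sub_zero]

lemma nu1_Ioi (x : ℝ) : nu1 (Set.Ioi x) = ENNReal.ofReal (R1 x) := by
  rw [← Set.compl_Iic, measure_compl measurableSet_Iic (measure_ne_top _ _), measure_univ,
    nu1_Iic]
  apply ENNReal.sub_eq_of_eq_add ENNReal.ofReal_ne_top
  rw [← ENNReal.ofReal_add (R1_nonneg x) (by linarith [R1_le_one x])]
  norm_num

lemma nu1_ae_nonneg : ∀ᵐ x ∂nu1, 0 ≤ x := by
  rw [ae_iff]
  have hsub : {x : ℝ | ¬ 0 ≤ x} ⊆ Set.Iic 0 := fun x hx => le_of_lt (not_le.1 hx)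
  apply measure_mono_null hsub
  rw [nu1_Iic, R1_of_le (by norm_num)]
  simp

/-- antiderivative of the tail density -/
noncomputable def H (t : ℝ) : ℝ := -(1/2) * (1 + Real.log (2 * t))⁻¹

lemma H_hasDerivAt {t : ℝ} (ht : 1/2 ≤ t) :
    HasDerivAt H (1 / ((2 * t) * (1 + Real.log (2 * t)) ^ 2)) t := by
  have ht0 : (2:ℝ) * t ≠ 0 := by positivity
  have ht0' : t ≠ 0 := by intro h; rw [h] at ht; norm_num at ht
  have h2t : HasDerivAt (fun y : ℝ => 2 * y) 2 t := by
    simpa using (hasDerivAt_id t).const_mul 2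
  have hlog : HasDerivAt (fun t : ℝ => Real.log (2 * t)) ((2 * t)⁻¹ * 2) t := by
    exact (Real.hasDerivAt_log ht0).comp t h2t
  have hu : HasDerivAt (fun t : ℝ => 1 + Real.log (2 * t)) ((2 * t)⁻¹ * 2) t :=
    hlog.const_add 1
  have hne : 1 + Real.log (2 * t) ≠ 0 := by
    have := Real.log_nonneg (by linarith : (1:ℝ) ≤ 2 * t); positivity
  have := (hu.inv hne).const_mul (-(1/2) : ℝ)
  refine this.congr_deriv ?_
  field_simp

lemma H_tendsto : Tendsto H atTop (𝓝 0) := by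
  have hmul : Tendsto (fun t : ℝ => 2 * t) atTop atTop :=
    Tendsto.const_mul_atTop two_pos tendsto_id
  have hlog : Tendsto (fun t : ℝ => Real.log (2 * t)) atTop atTop :=
    Real.tendsto_log_atTop.comp hmul
  have hu : Tendsto (fun t : ℝ => 1 + Real.log (2 * t)) atTop atTop :=
    tendsto_atTop_add_const_left _ 1 hlog
  have h0 : Tendsto (fun t : ℝ => (1 + Real.log (2 * t))⁻¹) atTop (𝓝 0) :=
    hu.inv_tendsto_atTop
  have := h0.const_mul (-(1/2) : ℝ)
  simp only [mul_zero] at this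
  exact this.congr (fun t => by rw [H])

lemma g_integrableOn : IntegrableOn (fun t : ℝ =>
    1 / ((2 * t) * (1 + Real.log (2 * t)) ^ 2)) (Set.Ioi (1/2 : ℝ)) :=
  integrableOn_Ioi_deriv_of_nonneg' (fun x hx => H_hasDerivAt hx)
    (fun x hx => le_of_lt (one_div_pos.2 (D_pos (le_of_lt hx)))) H_tendsto

lemma g_integral : ∫ t in Set.Ioi (1/2 : ℝ),
    1 / ((2 * t) * (1 + Real.log (2 * t)) ^ 2) = 1/2 := by
  rw [integral_Ioi_of_hasDerivAt_of_nonneg' (fun x hx => H_hasDerivAt hx)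
    (fun x hx => le_of_lt (one_div_pos.2 (D_pos (le_of_lt hx)))) H_tendsto]
  norm_num [H, Real.log_one]

lemma R1_integrableOn_Ioi_half : IntegrableOn R1 (Set.Ioi (1/2 : ℝ)) :=
  g_integrableOn.congr_fun (fun x hx => (R1_of_gt hx).symm) measurableSet_Ioi

lemma R1_integral_Ioi_half : ∫ t in Set.Ioi (1/2 : ℝ), R1 t = 1/2 := by
  rw [setIntegral_congr_fun measurableSet_Ioi (fun x hx => R1_of_gt hx), g_integral]

lemma R1_integrableOn_Ioc : IntegrableOn R1 (Set.Ioc (0:ℝ) (1/2)) := by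
  exact (integrableOn_const (C := (1:ℝ)) (s := Set.Ioc (0:ℝ) (1/2)) (μ := volume) (hs := measure_Ioc_lt_top.ne)).congr_fun
    (fun x hx => (R1_of_le hx.2).symm) measurableSet_Ioc

lemma R1_integral_Ioc : ∫ t in Set.Ioc (0:ℝ) (1/2), R1 t = 1/2 := by
  rw [setIntegral_congr_fun measurableSet_Ioc (fun x hx => R1_of_le hx.2)]
  simp [Real.volume_Ioc]

lemma Ioi_split : Set.Ioc (0:ℝ) (1/2) ∪ Set.Ioi (1/2 : ℝ) = Set.Ioi 0 :=
  Set.Ioc_union_Ioi_eq_Ioi (by norm_num)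

lemma R1_integrableOn_Ioi : IntegrableOn R1 (Set.Ioi (0:ℝ)) := by
  rw [← Ioi_split]
  exact R1_integrableOn_Ioc.union R1_integrableOn_Ioi_half

lemma R1_integral_Ioi : ∫ t in Set.Ioi (0:ℝ), R1 t = 1 := by
  rw [← Ioi_split, setIntegral_union (Set.Ioc_disjoint_Ioi le_rfl) measurableSet_Ioi
    R1_integrableOn_Ioc R1_integrableOn_Ioi_half, R1_integral_Ioc, R1_integral_Ioi_half]
  norm_num

lemma R1_lintegral : ∫⁻ t in Set.Ioi (0:ℝ), ENNReal.ofReal (R1 t) = 1 := by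
  rw [← ofReal_integral_eq_lintegral_ofReal R1_integrableOn_Ioi
    (Eventually.of_forall fun x => R1_nonneg x), R1_integral_Ioi, ENNReal.ofReal_one]

/-- generic: lintegral of `ofReal f` is finite when `f` is integrable -/
lemma lintegral_ofReal_lt_top_of_integrableOn {f : ℝ → ℝ} {s : Set ℝ}
    (hf : IntegrableOn f s) : ∫⁻ t in s, ENNReal.ofReal (f t) < ⊤ := by
  calc ∫⁻ t in s, ENNReal.ofReal (f t)
      ≤ ∫⁻ t in s, (‖f t‖₊ : ENNReal) := by
        apply lintegral_mono
        intro t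
        simp only [← enorm_eq_nnnorm, ← ofReal_norm, Real.norm_eq_abs]
        exact ENNReal.ofReal_le_ofReal (le_abs_self _)
    _ < ⊤ := hf.2

noncomputable def Jint (α : ℝ) : ENNReal :=
  ∫⁻ t in Set.Ioi (0:ℝ), ENNReal.ofReal (R1 t) * ENNReal.ofReal (t ^ (α - 1))

lemma Jint_one : Jint 1 = 1 := by
  rw [Jint, ← R1_lintegral]
  apply setLIntegral_congr_fun measurableSet_Ioi
  intro t _
  simp [Real.rpow_zero]

lemma Jint_lt_top {α : ℝ} (hα : 0 < α) (hα1 : α ≤ 1) : Jint α < ⊤ := by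
  have hsplit : Jint α ≤
      (∫⁻ t in Set.Ioc (0:ℝ) (1/2), ENNReal.ofReal (R1 t) * ENNReal.ofReal (t ^ (α - 1)))
      + ∫⁻ t in Set.Ioi (1/2:ℝ), ENNReal.ofReal (R1 t) * ENNReal.ofReal (t ^ (α - 1)) := by
    rw [Jint, ← Ioi_split]
    exact lintegral_union_le _ _ _
  have h1 : (∫⁻ t in Set.Ioc (0:ℝ) (1/2),
      ENNReal.ofReal (R1 t) * ENNReal.ofReal (t ^ (α - 1))) < ⊤ := by
    have hb : ∀ t ∈ Set.Ioc (0:ℝ) (1/2),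
        ENNReal.ofReal (R1 t) * ENNReal.ofReal (t ^ (α - 1)) ≤
          ENNReal.ofReal (t ^ (α - 1)) := by
      intro t ht
      calc ENNReal.ofReal (R1 t) * ENNReal.ofReal (t ^ (α - 1))
          ≤ 1 * ENNReal.ofReal (t ^ (α - 1)) := by
            apply mul_le_mul_left
            rw [← ENNReal.ofReal_one]
            exact ENNReal.ofReal_le_ofReal (R1_le_one t)
        _ = ENNReal.ofReal (t ^ (α - 1)) := one_mul _
    apply lt_of_le_of_lt (setLIntegral_mono ((measurable_id.pow measurable_const).ennreal_ofReal) hb)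
    apply lintegral_ofReal_lt_top_of_integrableOn
    rw [← intervalIntegrable_iff_integrableOn_Ioc_of_le (by norm_num : (0:ℝ) ≤ 1/2)]
    exact intervalIntegral.intervalIntegrable_rpow' (by linarith)
  have h2 : (∫⁻ t in Set.Ioi (1/2:ℝ),
      ENNReal.ofReal (R1 t) * ENNReal.ofReal (t ^ (α - 1))) < ⊤ := by
    have hb : ∀ t ∈ Set.Ioi (1/2:ℝ),
        ENNReal.ofReal (R1 t) * ENNReal.ofReal (t ^ (α - 1)) ≤
          ENNReal.ofReal (2 * R1 t) := by
      intro t ht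
      have ht' : (1/2:ℝ) < t := ht
      have htpos : (0:ℝ) < t := by linarith
      have hpow : t ^ (α - 1) ≤ 2 := by
        have h1 : (t⁻¹ : ℝ) ^ (1 - α) = t ^ (α - 1) := by
          rw [← Real.rpow_neg_one t, ← Real.rpow_mul htpos.le]
          congr 1
          ring
        have h2 : (t⁻¹ : ℝ) ^ (1 - α) ≤ (2:ℝ) ^ (1 - α) := by
          apply Real.rpow_le_rpow (by positivity) _ (by linarith)
          rw [inv_le_comm₀ htpos (by norm_num)]
          linarith
        have h3 : (2:ℝ) ^ (1 - α) ≤ (2:ℝ) ^ (1:ℝ) :=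
          Real.rpow_le_rpow_of_exponent_le (by norm_num) (by linarith)
        rw [Real.rpow_one] at h3
        linarith [h1 ▸ le_trans h2 h3]
      rw [← ENNReal.ofReal_mul (R1_nonneg t), mul_comm (R1 t)]
      exact ENNReal.ofReal_le_ofReal (by nlinarith [R1_nonneg t])
    apply lt_of_le_of_lt (setLIntegral_mono
      ((R1_continuous.measurable.const_mul 2).ennreal_ofReal) hb)
    exact lintegral_ofReal_lt_top_of_integrableOn (R1_integrableOn_Ioi_half.const_mul 2)
  exact lt_of_le_of_lt hsplit (ENNReal.add_lt_top.2 ⟨h1, h2⟩)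

lemma lintegral_inv_Ioi_top {c : ℝ} (hc : 0 < c) :
    ∫⁻ t in Set.Ioi (1:ℝ), ENNReal.ofReal (c * t⁻¹) = ⊤ := by
  by_contra h
  have hlt : ∫⁻ t in Set.Ioi (1:ℝ), ENNReal.ofReal (c * t⁻¹) < ⊤ := lt_top_iff_ne_top.2 h
  have hint : IntegrableOn (fun t : ℝ => c * t⁻¹) (Set.Ioi 1) := by
    constructor
    · exact (measurable_const.mul measurable_inv).aestronglyMeasurable
    · rw [hasFiniteIntegral_iff_ofReal]
      · exact hlt
      · filter_upwards [ae_restrict_mem measurableSet_Ioi] with t ht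
        have : (0:ℝ) < t := lt_trans one_pos ht
        positivity
  have hinv : IntegrableOn (fun t : ℝ => t⁻¹) (Set.Ioi 1) := by
    have h3 : (fun t : ℝ => c⁻¹ * (c * t⁻¹)) = fun t : ℝ => t⁻¹ := by
      funext t; field_simp
    have := hint.const_mul c⁻¹
    rwa [h3] at this
  have hrpow : IntegrableOn (fun t : ℝ => t ^ (-1 : ℝ)) (Set.Ioi 1) := by
    apply hinv.congr_fun (fun x _ => ?_) measurableSet_Ioi
    rw [Real.rpow_neg_one]
  rw [integrableOn_Ioi_rpow_iff one_pos] at hrpow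
  exact lt_irrefl _ hrpow

lemma Jint_top {α : ℝ} (hα : 1 < α) : Jint α = ⊤ := by
  set s : ℝ := (α - 1) / 2 with hs
  have hspos : 0 < s := by rw [hs]; linarith
  set C : ℝ := 3 + 1 / s with hC
  have hCpos : 0 < C := by rw [hC]; positivity
  set c : ℝ := 1 / (2 * C ^ 2) with hc
  have hcpos : 0 < c := by rw [hc]; positivity
  clear_value s C c
  have key : ∀ t ∈ Set.Ioi (1:ℝ),
      ENNReal.ofReal (c * t⁻¹) ≤ ENNReal.ofReal (R1 t) * ENNReal.ofReal (t ^ (α - 1)) := by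
    intro t ht
    have ht1 : (1:ℝ) < t := ht
    have htpos : (0:ℝ) < t := lt_trans one_pos ht1
    have hts : (1:ℝ) ≤ t ^ s := Real.one_le_rpow ht1.le hspos.le
    set L : ℝ := Real.log (2 * t) with hL
    have hLnn : 0 ≤ L := Real.log_nonneg (by linarith)
    have hlog2t : L ≤ 2 + t ^ s / s := by
      have h1 : L = Real.log 2 + Real.log t := Real.log_mul two_ne_zero htpos.ne'
      have h2 : Real.log 2 ≤ 1 := by linarith [Real.log_le_sub_one_of_pos two_pos]
      have h3 : Real.log t ≤ t ^ s / s := Real.log_le_rpow_div htpos.le hspos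
      linarith
    have hbound : 1 + L ≤ C * t ^ s := by
      have e1 : t ^ s / s = (1 / s) * t ^ s := by ring
      have e2 : C * t ^ s = 3 * t ^ s + (1 / s) * t ^ s := by rw [hC]; ring
      nlinarith [hts, hlog2t, hspos, e1, e2]
    have hsq : (1 + L) ^ 2 ≤ C ^ 2 * t ^ (α - 1) := by
      have hts2 : t ^ s * t ^ s = t ^ (α - 1) := by
        rw [← Real.rpow_add htpos]
        congr 1
        rw [hs]; ring
      nlinarith [hLnn, hbound, hCpos, hts]
    rw [← ENNReal.ofReal_mul (R1_nonneg t)]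
    apply ENNReal.ofReal_le_ofReal
    rw [R1_of_gt (by linarith)]
    have hP : 0 < t ^ (α - 1) := Real.rpow_pos_of_pos htpos _
    have hD : (0:ℝ) < 2 * t * (1 + Real.log (2 * t)) ^ 2 := D_pos (by linarith)
    rw [show (1:ℝ) / (2 * t * (1 + Real.log (2 * t)) ^ 2) * t ^ (α - 1)
        = t ^ (α - 1) / (2 * t * (1 + Real.log (2 * t)) ^ 2) from by ring,
      show c * t⁻¹ = c / t from by ring, div_le_div_iff₀ htpos hD]
    calc c * (2 * t * (1 + L) ^ 2) ≤ c * (2 * t * (C ^ 2 * t ^ (α - 1))) := by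
          apply mul_le_mul_of_nonneg_left _ hcpos.le
          apply mul_le_mul_of_nonneg_left hsq (by positivity)
      _ = t ^ (α - 1) * t := by
          rw [hc]; field_simp
  rw [eq_top_iff]
  calc (⊤ : ENNReal) = ∫⁻ t in Set.Ioi (1:ℝ), ENNReal.ofReal (c * t⁻¹) :=
        (lintegral_inv_Ioi_top hcpos).symm
    _ ≤ ∫⁻ t in Set.Ioi (1:ℝ), ENNReal.ofReal (R1 t) * ENNReal.ofReal (t ^ (α - 1)) :=
        setLIntegral_mono ((R1_continuous.measurable.ennreal_ofReal).mul
          ((measurable_id.pow measurable_const).ennreal_ofReal)) key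
    _ ≤ Jint α := lintegral_mono_set (Set.Ioi_subset_Ioi zero_le_one)

lemma layercake (α : ℝ) (hα : 0 < α) :
    ∫⁻ x, ENNReal.ofReal (x ^ α) ∂nu1 = ENNReal.ofReal α * Jint α := by
  rw [MeasureTheory.lintegral_rpow_eq_lintegral_meas_lt_mul nu1 nu1_ae_nonneg
    measurable_id.aemeasurable hα]
  congr 1
  apply setLIntegral_congr_fun measurableSet_Ioi
  intro t _
  have : {a : ℝ | t < a} = Set.Ioi t := rfl
  dsimp only
  rw [this, nu1_Ioi]

lemma lintegral_id_nu1 : ∫⁻ x, ENNReal.ofReal x ∂nu1 = 1 := by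
  have h := layercake 1 one_pos
  simp only [Real.rpow_one] at h
  rw [h, Jint_one, ENNReal.ofReal_one, one_mul]

theorem R1_is_survival_of_mean_one_rv :
    ∃ ν : Measure ℝ, IsProbabilityMeasure ν ∧
      (∀ᵐ x ∂ν, 0 ≤ x) ∧
      (∀ x : ℝ, (ν (Set.Ioi x)).toReal = R1 x) ∧
      (∫ x, x ∂ν = 1) ∧
      (∀ α : ℝ, 0 < α → ((∫⁻ x, ENNReal.ofReal (x ^ α) ∂ν) < ⊤ ↔ α ≤ 1)) := by
  refine ⟨nu1, inferInstance, nu1_ae_nonneg, fun x => ?_, ?_, fun α hα => ?_⟩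
  · rw [nu1_Ioi, ENNReal.toReal_ofReal (R1_nonneg x)]
  · rw [MeasureTheory.integral_eq_lintegral_of_nonneg_ae nu1_ae_nonneg
      aestronglyMeasurable_id, lintegral_id_nu1, ENNReal.toReal_one]
  · rw [layercake α hα]
    constructor
    · intro h
      by_contra hgt
      rw [Jint_top (not_le.1 hgt), ENNReal.mul_top (by simpa using hα)] at h
      exact (lt_irrefl _ h).elim
    · intro h
      exact ENNReal.mul_lt_top ENNReal.ofReal_lt_top (Jint_lt_top hα h)
end

section
/- For each μ_1,...,μ_n > 0 there exist independent nonnegative random variables X_1,...,X_n with E[X_i] = μ_i such that for every k ∈ {1,...,n} and every δ > 0, E[(X_{k:n})^{n+1-k+δ}] = ∞; moreover if all μ_i are equal, the X_i can be taken iid. -/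
open MeasureTheory ProbabilityTheory Filter
open scoped ENNReal

noncomputable def Mc : ℝ := ∑' j : ℕ, (((j:ℝ)+1)⁻¹) ^ 2

noncomputable def pR (j : ℕ) : ℝ := (2:ℝ)⁻¹^(j+1) * (((j:ℝ)+1)⁻¹)^2

lemma summable_u : Summable (fun j : ℕ => (((j:ℝ)+1)⁻¹) ^ 2) := by
  have h : Summable (fun n : ℕ => ((n:ℝ)⁻¹) ^ 2) := by
    simpa [one_div] using Real.summable_one_div_nat_pow.2 (by norm_num : 1 < 2)
  have := (summable_nat_add_iff 1).2 h
  exact this.congr (by intro j; push_cast; ring)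

lemma Mc_ge_one : 1 ≤ Mc := by
  have h0 : (((0:ℕ):ℝ)+1)⁻¹ ^ 2 = 1 := by norm_num
  calc (1:ℝ) = (((0:ℕ):ℝ)+1)⁻¹ ^ 2 := h0.symm
    _ ≤ Mc := Summable.le_tsum summable_u 0 (fun j _ => by positivity)

lemma Mc_pos : 0 < Mc := lt_of_lt_of_le one_pos Mc_ge_one

lemma pR_pos (j : ℕ) : 0 < pR j := by unfold pR; positivity

lemma one_le_add_nat (j : ℕ) : (1:ℝ) ≤ (j:ℝ) + 1 := by
  have := Nat.cast_nonneg (α := ℝ) j; linarith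

lemma pR_le (j : ℕ) : pR j ≤ (2:ℝ)⁻¹^(j+1) := by
  have h : (((j:ℝ)+1)⁻¹)^2 ≤ 1 := by
    have h1 := inv_le_one_of_one_le₀ (one_le_add_nat j)
    have h2 : (0:ℝ) ≤ ((j:ℝ)+1)⁻¹ := by positivity
    nlinarith
  calc pR j ≤ (2:ℝ)⁻¹^(j+1) * 1 := by
        unfold pR; apply mul_le_mul_of_nonneg_left h (by positivity)
    _ = _ := mul_one _

noncomputable def Sp : ℝ≥0∞ := ∑' j : ℕ, ENNReal.ofReal (pR j)

lemma Sp_le_one : Sp ≤ 1 := by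
  have h1 : Sp ≤ ∑' j : ℕ, (2⁻¹ : ℝ≥0∞)^(j+1) := by
    apply ENNReal.tsum_le_tsum
    intro j
    calc ENNReal.ofReal (pR j) ≤ ENNReal.ofReal ((2:ℝ)⁻¹^(j+1)) :=
          ENNReal.ofReal_le_ofReal (pR_le j)
      _ = (2⁻¹ : ℝ≥0∞)^(j+1) := by
          rw [show ((2:ℝ)⁻¹) = ((2⁻¹:ℝ≥0∞)).toReal by simp,
            ← ENNReal.ofReal_toReal (a := (2⁻¹:ℝ≥0∞)^(j+1)) (by simp),
            ENNReal.toReal_pow]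
  have h2 : ∑' j : ℕ, (2⁻¹ : ℝ≥0∞)^(j+1) = 1 := by
    rw [ENNReal.tsum_geometric_add_one, ENNReal.one_sub_inv_two]
    rw [inv_inv]; exact ENNReal.inv_mul_cancel (by norm_num) (by norm_num)
  exact h1.trans h2.le

noncomputable def nu (c : ℝ) : Measure ℝ :=
  Measure.sum (fun j => ENNReal.ofReal (pR j) • Measure.dirac (c * 2^(j+1)))
  + (1 - Sp) • Measure.dirac 0

instance nu_prob (c : ℝ) : IsProbabilityMeasure (nu c) := by
  constructor
  rw [nu, Measure.add_apply, Measure.sum_apply _ MeasurableSet.univ]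
  simp only [Measure.smul_apply, measure_univ, smul_eq_mul, mul_one]
  rw [← Sp, add_comm]
  exact tsub_add_cancel_of_le Sp_le_one

lemma nu_ae_nonneg (c : ℝ) (hc : 0 ≤ c) : ∀ᵐ x ∂(nu c), 0 ≤ x := by
  rw [ae_iff]
  have hms : MeasurableSet {x : ℝ | ¬ 0 ≤ x} := by
    have h : {x : ℝ | ¬ 0 ≤ x} = Set.Iio 0 := by ext x; simp [not_le]
    rw [h]; exact measurableSet_Iio
  rw [nu, Measure.add_apply, Measure.sum_apply _ hms]
  have h1 : ∀ j : ℕ, (ENNReal.ofReal (pR j) • Measure.dirac (c * 2^(j+1))) {x : ℝ | ¬ 0 ≤ x} = 0 := by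
    intro j
    rw [Measure.smul_apply, Measure.dirac_apply' _ hms]
    have : (0:ℝ) ≤ c * 2^(j+1) := by positivity
    simp [Set.indicator_of_notMem, this]
  have h2 : ((1 - Sp) • Measure.dirac (0:ℝ)) {x : ℝ | ¬ 0 ≤ x} = 0 := by
    rw [Measure.smul_apply, Measure.dirac_apply' _ hms]
    simp
  simp only [h1, tsum_zero, h2, add_zero]

lemma nu_tail (c : ℝ) (j : ℕ) (t : ℝ) (ht : t ≤ c * 2^(j+1)) :
    ENNReal.ofReal (pR j) ≤ nu c (Set.Ici t) := by
  have h1 : (ENNReal.ofReal (pR j) • Measure.dirac (c * 2^(j+1))) (Set.Ici t)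
      = ENNReal.ofReal (pR j) := by
    rw [Measure.smul_apply, Measure.dirac_apply' _ measurableSet_Ici]
    simp [Set.indicator_of_mem, Set.mem_Ici.2 ht]
  calc ENNReal.ofReal (pR j)
      = (ENNReal.ofReal (pR j) • Measure.dirac (c * 2^(j+1))) (Set.Ici t) := h1.symm
    _ ≤ Measure.sum (fun j => ENNReal.ofReal (pR j) • Measure.dirac (c * 2^(j+1))) (Set.Ici t) :=
        Measure.le_sum _ j _
    _ ≤ nu c (Set.Ici t) := by
        rw [nu]; exact Measure.le_add_right le_rfl _

lemma pow_mul_cancel (c : ℝ) (j : ℕ) : pR j * (c * 2^(j+1)) = c * (((j:ℝ)+1)⁻¹)^2 := by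
  unfold pR
  have h : (2:ℝ)⁻¹^(j+1) * 2^(j+1) = 1 := by
    rw [← mul_pow]; norm_num
  linear_combination ((((j:ℝ)+1)⁻¹)^2 * c) * h

lemma nu_lintegral (c : ℝ) (f : ℝ → ℝ≥0∞) :
    ∫⁻ x, f x ∂(nu c) =
      (∑' j : ℕ, ENNReal.ofReal (pR j) * f (c * 2^(j+1))) + (1 - Sp) * f 0 := by
  rw [nu, lintegral_add_measure, lintegral_sum_measure, lintegral_smul_measure,
    lintegral_dirac]
  congr 1
  exact tsum_congr fun j => by rw [lintegral_smul_measure, lintegral_dirac, smul_eq_mul]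

lemma nu_integrable (c : ℝ) (hc : 0 ≤ c) : Integrable (fun x : ℝ => x) (nu c) := by
  refine ⟨measurable_id.aestronglyMeasurable, ?_⟩
  unfold HasFiniteIntegral
  rw [nu_lintegral]
  have h0 : ‖(fun x : ℝ => x) 0‖ₑ = 0 := by simp
  rw [h0, mul_zero, add_zero]
  have heq : ∀ j : ℕ, ENNReal.ofReal (pR j) * ‖(fun x : ℝ => x) (c * 2^(j+1))‖ₑ
      = ENNReal.ofReal (c * (((j:ℝ)+1)⁻¹)^2) := by
    intro j
    have hnn : (0:ℝ) ≤ c * 2^(j+1) := by positivity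
    show ENNReal.ofReal (pR j) * ‖c * 2^(j+1)‖ₑ = _
    rw [← ofReal_norm_eq_enorm, Real.norm_of_nonneg hnn,
      ← ENNReal.ofReal_mul (pR_pos j).le, pow_mul_cancel]
  rw [tsum_congr heq, ← ENNReal.ofReal_tsum_of_nonneg (fun j => by positivity)
    (summable_u.mul_left c)]
  exact ENNReal.ofReal_lt_top

lemma nu_integral (c : ℝ) (hc : 0 ≤ c) : ∫ x, x ∂(nu c) = c * Mc := by
  have hint := nu_integrable c hc
  rw [nu] at hint ⊢
  have hint1 : Integrable (fun x : ℝ => x)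
      (Measure.sum (fun j => ENNReal.ofReal (pR j) • Measure.dirac (c * 2^(j+1)))) :=
    hint.mono_measure (Measure.le_add_right le_rfl)
  have hint2 : Integrable (fun x : ℝ => x) ((1 - Sp) • Measure.dirac (0:ℝ)) :=
    hint.mono_measure (Measure.le_add_left le_rfl)
  rw [integral_add_measure hint1 hint2, integral_sum_measure hint1]
  have h2 : ∫ x, x ∂((1 - Sp) • Measure.dirac (0:ℝ)) = 0 := by
    rw [integral_smul_measure, integral_dirac]; simp
  have h1 : ∀ j : ℕ, ∫ x, x ∂(ENNReal.ofReal (pR j) • Measure.dirac (c * 2^(j+1)))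
      = c * (((j:ℝ)+1)⁻¹)^2 := by
    intro j
    rw [integral_smul_measure, integral_dirac, ENNReal.toReal_ofReal (pR_pos j).le,
      smul_eq_mul, pow_mul_cancel]
  rw [tsum_congr h1, h2, add_zero, tsum_mul_left]
  rfl

lemma orderStat_ge {n : ℕ} (f : Fin n → ℝ) (k : Fin n) (t : ℝ)
    (h : ∀ i : Fin n, k ≤ i → t ≤ f i) : t ≤ f (Tuple.sort f k) := by
  by_contra hlt
  push_neg at hlt
  have hmono := Tuple.monotone_sort f
  have hmap : ∀ i : Fin n, i ≤ k → Tuple.sort f i < k := by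
    intro i hi
    have hfi : f (Tuple.sort f i) < t := lt_of_le_of_lt (hmono hi) hlt
    by_contra hge
    push_neg at hge
    exact absurd (h _ hge) (not_le.2 hfi)
  have hcard := Finset.card_le_card_of_injOn (fun i => Tuple.sort f i)
    (fun i hi => Finset.mem_Iio.2 (hmap i (Finset.mem_Iic.1 hi)))
    ((Tuple.sort f).injective.injOn)
  rw [Fin.card_Iic, Fin.card_Iio] at hcard
  omega

lemma geom_beats_poly {C c r : ℝ} (hc : 0 < c) (hr : 1 < r) (m : ℕ) :
    ∃ j : ℕ, C ≤ c * (r^(j+1) / (((j:ℝ)+1))^(2*m)) := by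
  have hlo := isLittleO_pow_const_const_pow_of_one_lt (R := ℝ) (2*m) hr
  have heps : (0:ℝ) < c / max C c := by
    have : 0 < max C c := lt_max_of_lt_right hc
    positivity
  have hev := hlo.def heps
  rw [Filter.eventually_atTop] at hev
  obtain ⟨N, hN⟩ := hev
  refine ⟨N, ?_⟩
  have hb := hN (N+1) (by omega)
  simp only [Real.norm_eq_abs] at hb
  have hpow : (0:ℝ) < r ^ (N+1) := pow_pos (lt_trans one_pos hr) _
  have hpoly : (0:ℝ) < (((N:ℝ)+1))^(2*m) := by positivity
  have habs1 : |((N+1:ℕ):ℝ) ^ (2*m)| = (((N:ℝ)+1))^(2*m) := by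
    rw [abs_of_nonneg (by positivity)]; push_cast; ring
  have habs2 : |r ^ (N+1)| = r ^ (N+1) := abs_of_nonneg hpow.le
  rw [habs1, habs2] at hb
  have hmaxpos : 0 < max C c := lt_max_of_lt_right hc
  have key : max C c ≤ c * (r^(N+1) / (((N:ℝ)+1))^(2*m)) := by
    rw [mul_div_assoc'] at *
    rw [le_div_iff₀ hpoly]
    calc max C c * ((N:ℝ)+1)^(2*m) ≤ max C c * ((c / max C c) * r^(N+1)) := by
          exact mul_le_mul_of_nonneg_left hb hmaxpos.le
      _ = c * r^(N+1) := by field_simp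
  exact le_trans (le_max_left _ _) key

lemma W_eval (cm δ : ℝ) (hcm : 0 < cm) (m j : ℕ) :
    (cm * 2^(j+1)) ^ ((m:ℝ)+δ) * (pR j)^m
      = cm ^ ((m:ℝ)+δ) * (((2:ℝ)^δ)^(j+1) / (((j:ℝ)+1))^(2*m)) := by
  have hB : (0:ℝ) < 2^(j+1) := by positivity
  rw [Real.mul_rpow hcm.le hB.le]
  have h1 : ((2:ℝ)^(j+1)) ^ ((m:ℝ)+δ) = (2:ℝ)^((j+1)*m) * ((2:ℝ)^δ)^(j+1) := by
    rw [Real.rpow_add hB, Real.rpow_natCast, ← pow_mul]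
    congr 1
    rw [← Real.rpow_natCast ((2:ℝ)^δ) (j+1), ← Real.rpow_natCast (2:ℝ) (j+1),
      ← Real.rpow_mul (by norm_num), ← Real.rpow_mul (by norm_num), mul_comm]
  have h2 : pR j ^ m = (2:ℝ)⁻¹^((j+1)*m) * (((j:ℝ)+1)⁻¹)^(2*m) := by
    unfold pR
    rw [mul_pow, ← pow_mul, ← pow_mul, mul_comm 2 m]
  have h3 : (2:ℝ)^((j+1)*m) * (2:ℝ)⁻¹^((j+1)*m) = 1 := by
    rw [← mul_pow]; norm_num
  have h4 : (((j:ℝ)+1)⁻¹)^(2*m) = ((((j:ℝ)+1))^(2*m))⁻¹ := by rw [inv_pow]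
  rw [h1, h2, h4]
  have hpoly : (0:ℝ) < (((j:ℝ)+1))^(2*m) := by positivity
  field_simp
  nlinarith [h3, sq_nonneg ((2:ℝ)^((j+1)*m))]

theorem exists_indep_with_infinite_higher_moments
    {n : ℕ} (μ : Fin n → ℝ) (hpos : ∀ i, 0 < μ i) :
    ∃ ν : Fin n → Measure ℝ,
      (∀ i, IsProbabilityMeasure (ν i)) ∧
      (∀ i, ∀ᵐ x ∂(ν i), 0 ≤ x) ∧
      (∀ i, ∫ x, x ∂(ν i) = μ i) ∧
      (∀ k : Fin n, ∀ δ : ℝ, 0 < δ →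
        ∫⁻ f, ENNReal.ofReal
            ((orderStat (fun i (f : Fin n → ℝ) => f i) k f) ^ ((n - (k : ℕ) : ℕ) + δ))
          ∂(Measure.pi ν) = ⊤) ∧
      ((∀ i j, μ i = μ j) → ∀ i j, ν i = ν j) := by
  refine ⟨fun i => nu (μ i / Mc), fun i => nu_prob _, ?_, ?_, ?_, ?_⟩
  · intro i
    exact nu_ae_nonneg _ (le_of_lt (div_pos (hpos i) Mc_pos))
  · intro i
    rw [nu_integral _ (le_of_lt (div_pos (hpos i) Mc_pos))]
    exact div_mul_cancel₀ _ (ne_of_gt Mc_pos)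
  · intro k δ hδ
    set m : ℕ := n - (k : ℕ) with hm
    set p : ℝ := (m : ℝ) + δ with hp
    have hppos : 0 < p := by positivity
    have hne : (Finset.univ : Finset (Fin n)).Nonempty := ⟨k, Finset.mem_univ k⟩
    set cm : ℝ := Finset.univ.inf' hne (fun i => μ i / Mc) with hcm
    have hcmpos : 0 < cm := by
      rw [hcm, Finset.lt_inf'_iff]
      exact fun i _ => div_pos (hpos i) Mc_pos
    have hcmle : ∀ i, cm ≤ μ i / Mc := fun i =>
      Finset.inf'_le _ (Finset.mem_univ i)
    apply ENNReal.eq_top_of_forall_nnreal_le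
    intro rC
    -- choose j large
    have hr : (1:ℝ) < (2:ℝ)^δ :=
      (Real.one_lt_rpow_iff_of_pos (by norm_num)).2 (Or.inl ⟨by norm_num, hδ⟩)
    have hcpow : 0 < cm ^ p := Real.rpow_pos_of_pos hcmpos _
    obtain ⟨j, hj⟩ := geom_beats_poly (C := (rC : ℝ)) hcpow hr m
    set t : ℝ := cm * 2^(j+1) with hT
    have htpos : 0 < t := by positivity
    set A : Fin n → Set ℝ := fun i => if k ≤ i then Set.Ici t else Set.univ with hA
    have hAm : ∀ i, MeasurableSet (A i) := by
      intro i
      rw [hA]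
      by_cases h : k ≤ i
      · simp [h, measurableSet_Ici]
      · simp [h]
    have hSm : MeasurableSet (Set.pi Set.univ A) := MeasurableSet.univ_pi hAm
    -- measure lower bound
    have hmeas : (ENNReal.ofReal (pR j))^m ≤ Measure.pi (fun i => nu (μ i / Mc)) (Set.pi Set.univ A) := by
      rw [Measure.pi_pi]
      have hle : ∀ i ∈ Finset.univ, (if k ≤ i then ENNReal.ofReal (pR j) else 1) ≤ nu (μ i / Mc) (A i) := by
        intro i _
        rw [hA]
        by_cases h : k ≤ i
        · simp only [h, if_true]
          apply nu_tail
          exact mul_le_mul_of_nonneg_right (hcmle i) (by positivity)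
        · simp only [h, if_false]
          exact le_of_eq (measure_univ).symm
      calc (ENNReal.ofReal (pR j))^m
          = ∏ i : Fin n, (if k ≤ i then ENNReal.ofReal (pR j) else 1) := by
            rw [Finset.prod_ite, Finset.prod_const, Finset.prod_const, one_pow, mul_one]
            congr 2
            have : Finset.univ.filter (fun i : Fin n => k ≤ i) = Finset.Ici k := by
              ext i; simp [Finset.mem_Ici]
            rw [this, Fin.card_Ici]
        _ ≤ ∏ i : Fin n, nu (μ i / Mc) (A i) := Finset.prod_le_prod' hle
    -- pointwise lower bound
    have hpt : ∀ f ∈ Set.pi Set.univ A,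
        ENNReal.ofReal (t ^ p) ≤ ENNReal.ofReal
          ((orderStat (fun i (f : Fin n → ℝ) => f i) k f) ^ ((n - (k : ℕ) : ℕ) + δ)) := by
      intro f hf
      apply ENNReal.ofReal_le_ofReal
      have hge : t ≤ orderStat (fun i (f : Fin n → ℝ) => f i) k f := by
        apply orderStat_ge f k t
        intro i hi
        have := hf i (Set.mem_univ i)
        rw [hA] at this
        simp only [hi, if_true] at this
        exact this
      exact Real.rpow_le_rpow htpos.le hge hppos.le
    -- combine
    have hlb : ENNReal.ofReal (t ^ p) * (ENNReal.ofReal (pR j))^m ≤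
        ∫⁻ f, ENNReal.ofReal
            ((orderStat (fun i (f : Fin n → ℝ) => f i) k f) ^ ((n - (k : ℕ) : ℕ) + δ))
          ∂(Measure.pi (fun i => nu (μ i / Mc))) := by
      calc ENNReal.ofReal (t ^ p) * (ENNReal.ofReal (pR j))^m
          ≤ ENNReal.ofReal (t ^ p) * Measure.pi (fun i => nu (μ i / Mc)) (Set.pi Set.univ A) :=
            mul_le_mul_right hmeas _
        _ = ∫⁻ f in Set.pi Set.univ A, ENNReal.ofReal (t ^ p)
              ∂(Measure.pi (fun i => nu (μ i / Mc))) := by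
            rw [setLIntegral_const, mul_comm]
        _ ≤ ∫⁻ f in Set.pi Set.univ A, ENNReal.ofReal
              ((orderStat (fun i (f : Fin n → ℝ) => f i) k f) ^ ((n - (k : ℕ) : ℕ) + δ))
              ∂(Measure.pi (fun i => nu (μ i / Mc))) := setLIntegral_mono' hSm hpt
        _ ≤ _ := setLIntegral_le_lintegral _ _
    refine le_trans ?_ hlb
    have hWnn : 0 ≤ t ^ p := Real.rpow_nonneg htpos.le _
    rw [← ENNReal.ofReal_pow (pR_pos j).le, ← ENNReal.ofReal_mul hWnn]
    rw [ENNReal.coe_nnreal_eq]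
    apply ENNReal.ofReal_le_ofReal
    rw [hT, W_eval cm δ hcmpos m j]
    exact hj
  · intro h i j
    show nu (μ i / Mc) = nu (μ j / Mc)
    rw [h i j]
end

section
/- Let α > 1 and let g : (0,1) → [0,∞) be nondecreasing with ∫_0^1 g(t) dt < ∞. Then α ∫_0^1 (1−t)^{α−1} g(t)^α dt ≤ (∫_0^1 g(t) dt)^α. -/
open MeasureTheory Set intervalIntegral

theorem lintegral_pow_le_pow_integral_of_monotone
    (α : ℝ) (hα : 1 < α) (g : ℝ → ℝ)
    (hg0 : ∀ t ∈ Set.Ioo (0 : ℝ) 1, 0 ≤ g t)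
    (hmono : MonotoneOn g (Set.Ioo (0 : ℝ) 1))
    (hint : IntegrableOn g (Set.Ioo (0 : ℝ) 1)) :
    ENNReal.ofReal α *
        ∫⁻ t in Set.Ioo (0 : ℝ) 1, ENNReal.ofReal ((1 - t) ^ (α - 1) * g t ^ α) ≤
      ENNReal.ofReal ((∫ t in Set.Ioo (0 : ℝ) 1, g t) ^ α) := by
  have hα0 : (0:ℝ) ≤ α := by linarith
  have hα1 : (0:ℝ) ≤ α - 1 := by linarith
  have hicc : IntegrableOn g (Icc (0:ℝ) 1) := by
    rwa [integrableOn_Icc_iff_integrableOn_Ioo]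
  have hii : ∀ x y : ℝ, x ∈ Icc (0:ℝ) 1 → y ∈ Icc (0:ℝ) 1 →
      IntervalIntegrable g volume x y := by
    intro x y hx hy
    refine (hicc.mono_set ?_).intervalIntegrable
    have h01 : uIcc (0:ℝ) 1 = Icc (0:ℝ) 1 := uIcc_of_le (by norm_num)
    rw [← h01]
    exact uIcc_subset_uIcc (by rwa [h01]) (by rwa [h01])
  set G : ℝ → ℝ := fun t => ∫ s in t..(1:ℝ), g s with hGdef
  have hGioo : ∀ t ∈ Icc (0:ℝ) 1, G t = ∫ s in Ioo t 1, g s := by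
    intro t ht
    rw [hGdef]
    simp only
    rw [intervalIntegral.integral_of_le ht.2, integral_Ioc_eq_integral_Ioo]
  have hGnonneg : ∀ t ∈ Icc (0:ℝ) 1, 0 ≤ G t := by
    intro t ht
    rw [hGioo t ht]
    apply setIntegral_nonneg measurableSet_Ioo
    intro s hs
    exact hg0 s ⟨lt_of_le_of_lt ht.1 hs.1, hs.2⟩
  have hGcont : ContinuousOn G (Icc (0:ℝ) 1) := by
    have := intervalIntegral.continuousOn_primitive_interval_left
      (f := g) (a := (0:ℝ)) (b := 1) (μ := volume)
      (by rwa [uIcc_of_le (by norm_num : (0:ℝ) ≤ 1)])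
    rwa [uIcc_of_le (by norm_num : (0:ℝ) ≤ 1)] at this
  -- key pointwise bound : (1-t) * g t ≤ G t
  have key1 : ∀ t ∈ Ioo (0:ℝ) 1, (1 - t) * g t ≤ G t := by
    intro t ht
    rw [hGioo t ⟨ht.1.le, ht.2.le⟩]
    have h1 : (∫ _ in Ioo t 1, g t) = (1 - t) * g t := by
      rw [setIntegral_const, Real.volume_real_Ioo_of_le (by linarith [ht.2]),
        smul_eq_mul]
    rw [← h1]
    apply setIntegral_mono_on (integrableOn_const (by simp [Real.volume_Ioo]))
      (hint.mono_set (fun s hs => ⟨ht.1.trans hs.1, hs.2⟩)) measurableSet_Ioo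
    intro s hs
    exact hmono ht ⟨ht.1.trans hs.1, hs.2⟩ hs.1.le
  -- G is bounded by G 0
  have hGle : ∀ t ∈ Icc (0:ℝ) 1, G t ≤ G 0 := by
    intro t ht
    have hsplit : (∫ s in (0:ℝ)..t, g s) + ∫ s in t..(1:ℝ), g s = ∫ s in (0:ℝ)..(1:ℝ), g s :=
      intervalIntegral.integral_add_adjacent_intervals
        (hii 0 t (left_mem_Icc.2 (by norm_num)) ht) (hii t 1 ht (right_mem_Icc.2 (by norm_num)))
    have hpos : 0 ≤ ∫ s in (0:ℝ)..t, g s := by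
      rw [intervalIntegral.integral_of_le ht.1, integral_Ioc_eq_integral_Ioo]
      apply setIntegral_nonneg measurableSet_Ioo
      intro s hs
      exact hg0 s ⟨hs.1, hs.2.trans_le ht.2⟩
    have hG0 : G 0 = (∫ s in (0:ℝ)..t, g s) + G t := hsplit.symm
    linarith
  set F : ℝ → ℝ := fun t => -(G t ^ α) with hFdef
  have hFcont : ContinuousOn F (Icc (0:ℝ) 1) :=
    (hGcont.rpow_const (fun x _ => Or.inr hα0)).neg
  set c : ℝ → ℝ := fun x => sInf (g '' Ioo x 1) with hcdef
  have hgc : ∀ x ∈ Ioo (0:ℝ) 1, g x ≤ c x := by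
    intro x hx
    apply le_csInf ((nonempty_Ioo.2 hx.2).image g)
    rintro y ⟨s, hs, rfl⟩
    exact hmono hx ⟨hx.1.trans hs.1, hs.2⟩ hs.1.le
  have hGderiv : ∀ x ∈ Ioo (0:ℝ) 1, HasDerivWithinAt G (-(c x)) (Ioi x) x := by
    intro x hx
    have htend : Filter.Tendsto g (nhdsWithin x (Ioi x)) (nhds (c x)) := by
      apply MonotoneOn.tendsto_nhdsWithin_Ioo_right (nonempty_Ioo.2 hx.2)
        (hmono.mono (fun s hs => ⟨hx.1.trans hs.1, hs.2⟩))
      exact ⟨0, by rintro y ⟨s, hs, rfl⟩; exact hg0 s ⟨hx.1.trans hs.1, hs.2⟩⟩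
    have hmeas : StronglyMeasurableAtFilter g (nhdsWithin x (Ioi x)) := by
      refine ⟨Ioo x 1, Ioo_mem_nhdsGT_of_mem ⟨le_refl x, hx.2⟩, ?_⟩
      exact (hint.mono_set (fun s hs => ⟨hx.1.trans hs.1, hs.2⟩)).aestronglyMeasurable
    have h := intervalIntegral.integral_hasDerivWithinAt_of_tendsto_ae_left
      (f := g) (a := x) (b := 1) (c := c x) (s := Ici x) (t := Ioi x)
      (hii x 1 ⟨hx.1.le, hx.2.le⟩ (right_mem_Icc.2 (by norm_num)))
      hmeas (htend.mono_left inf_le_left)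
    exact h.mono Ioi_subset_Ici_self
  have hFderiv : ∀ x ∈ Ioo (0:ℝ) 1,
      HasDerivWithinAt F (α * G x ^ (α - 1) * c x) (Ioi x) x := by
    intro x hx
    have hpow : HasDerivAt (fun y : ℝ => y ^ α) (α * G x ^ (α - 1)) (G x) :=
      Real.hasDerivAt_rpow_const (x := G x) (p := α) (Or.inr hα.le)
    have hcomp := (hpow.comp_hasDerivWithinAt x (hGderiv x hx)).neg
    rw [show α * G x ^ (α - 1) * c x = -(α * G x ^ (α - 1) * -c x) by ring]
    exact hcomp
  set φ : ℝ → ℝ := fun t => α * ((1 - t) ^ (α - 1) * g t ^ α) with hφdef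
  have e1 : ∀ x ∈ Ioo (0:ℝ) 1,
      (1 - x) ^ (α - 1) * g x ^ α = ((1 - x) * g x) ^ (α - 1) * g x := by
    intro x hx
    have hg0x := hg0 x hx
    have h1x : (0:ℝ) ≤ 1 - x := by linarith [hx.2.le]
    rw [Real.mul_rpow h1x hg0x]
    have h2 : g x ^ α = g x ^ (α - 1) * g x := by
      nth_rewrite 3 [← Real.rpow_one (g x)]
      rw [← Real.rpow_add' hg0x (by simpa using (by linarith : α ≠ 0))]
      norm_num
    rw [h2]; ring
  have h3 : ∀ x ∈ Ioo (0:ℝ) 1, ((1 - x) * g x) ^ (α - 1) * g x ≤ G x ^ (α - 1) * g x := by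
    intro x hx
    exact mul_le_mul_of_nonneg_right
      (Real.rpow_le_rpow (mul_nonneg (by linarith [hx.2.le]) (hg0 x hx)) (key1 x hx) hα1)
      (hg0 x hx)
  have hφ_le : ∀ x ∈ Ioo (0:ℝ) 1, φ x ≤ α * G x ^ (α - 1) * c x := by
    intro x hx
    have h4 : G x ^ (α - 1) * g x ≤ G x ^ (α - 1) * c x :=
      mul_le_mul_of_nonneg_left (hgc x hx)
        (Real.rpow_nonneg (hGnonneg x ⟨hx.1.le, hx.2.le⟩) _)
    calc φ x = α * (((1 - x) * g x) ^ (α - 1) * g x) := by rw [hφdef]; simp only; rw [e1 x hx]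
      _ ≤ α * (G x ^ (α - 1) * c x) := mul_le_mul_of_nonneg_left ((h3 x hx).trans h4) hα0
      _ = α * G x ^ (α - 1) * c x := by ring
  have hφ_nonneg : ∀ x ∈ Ioo (0:ℝ) 1, 0 ≤ φ x := by
    intro x hx
    exact mul_nonneg hα0 (mul_nonneg (Real.rpow_nonneg (by linarith [hx.2.le]) _)
      (Real.rpow_nonneg (hg0 x hx) _))
  have hφ_bound : ∀ x ∈ Ioo (0:ℝ) 1, φ x ≤ α * G 0 ^ (α - 1) * g x := by
    intro x hx
    have h5 : G x ^ (α - 1) * g x ≤ G 0 ^ (α - 1) * g x :=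
      mul_le_mul_of_nonneg_right
        (Real.rpow_le_rpow (hGnonneg x ⟨hx.1.le, hx.2.le⟩) (hGle x ⟨hx.1.le, hx.2.le⟩) hα1)
        (hg0 x hx)
    calc φ x = α * (((1 - x) * g x) ^ (α - 1) * g x) := by rw [hφdef]; simp only; rw [e1 x hx]
      _ ≤ α * (G 0 ^ (α - 1) * g x) := mul_le_mul_of_nonneg_left ((h3 x hx).trans h5) hα0
      _ = α * G 0 ^ (α - 1) * g x := by ring
  -- measurability of φ
  have hrestr : volume.restrict (Icc (0:ℝ) 1) = volume.restrict (Ioo (0:ℝ) 1) :=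
    (Measure.restrict_congr_set Ioo_ae_eq_Icc).symm
  have hg_aem : AEMeasurable g (volume.restrict (Icc (0:ℝ) 1)) := by
    rw [hrestr]; exact hint.aestronglyMeasurable.aemeasurable
  have hφ_aesm : AEStronglyMeasurable φ (volume.restrict (Icc (0:ℝ) 1)) := by
    apply AEMeasurable.aestronglyMeasurable
    apply AEMeasurable.const_mul
    apply AEMeasurable.mul
    · exact ((Real.continuous_rpow_const hα1).comp
        (continuous_const.sub continuous_id)).aemeasurable
    · exact (Real.continuous_rpow_const hα0).measurable.comp_aemeasurable hg_aem
  have hφint : IntegrableOn φ (Icc (0:ℝ) 1) := by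
    apply Integrable.mono' ((hicc.const_mul (α * G 0 ^ (α - 1)))) hφ_aesm
    rw [hrestr]
    rw [ae_restrict_iff' measurableSet_Ioo]
    filter_upwards with x hx
    rw [Real.norm_eq_abs, abs_of_nonneg (hφ_nonneg x hx)]
    simpa [mul_assoc] using hφ_bound x hx
  -- fundamental theorem of calculus inequality
  have hFTC : (∫ y in (0:ℝ)..1, φ y) ≤ F 1 - F 0 :=
    intervalIntegral.integral_le_sub_of_hasDeriv_right_of_le (by norm_num) hFcont
      hFderiv hφint hφ_le
  have hG1 : G 1 = 0 := by rw [hGdef]; simp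
  have hF1 : F 1 = 0 := by
    rw [hFdef]; simp only [hG1]
    rw [Real.zero_rpow (by linarith : α ≠ 0)]; ring
  have hG0 : G 0 = ∫ t in Ioo (0:ℝ) 1, g t :=
    hGioo 0 (left_mem_Icc.2 (by norm_num))
  have hFTC' : (∫ y in Ioo (0:ℝ) 1, φ y) ≤ (∫ t in Ioo (0:ℝ) 1, g t) ^ α := by
    have h6 : (∫ y in (0:ℝ)..1, φ y) = ∫ y in Ioo (0:ℝ) 1, φ y := by
      rw [intervalIntegral.integral_of_le (by norm_num : (0:ℝ) ≤ 1),
        integral_Ioc_eq_integral_Ioo]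
    have h7 : F 1 - F 0 = (∫ t in Ioo (0:ℝ) 1, g t) ^ α := by
      rw [hF1, hFdef]; simp only; rw [hG0]; ring
    rw [← h6, ← h7]; exact hFTC
  -- convert the lintegral to an integral
  set ψ : ℝ → ℝ := fun t => (1 - t) ^ (α - 1) * g t ^ α with hψdef
  have hψint : IntegrableOn ψ (Ioo (0:ℝ) 1) := by
    have h8 := (hφint.mono_set Ioo_subset_Icc_self).const_mul α⁻¹
    have h9 : (fun x => α⁻¹ * φ x) = ψ := by
      funext x
      rw [hφdef, hψdef]
      field_simp
    rwa [h9] at h8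
  have hψnn : 0 ≤ᵐ[volume.restrict (Ioo (0:ℝ) 1)] ψ := by
    filter_upwards [ae_restrict_mem measurableSet_Ioo] with x hx
    exact mul_nonneg (Real.rpow_nonneg (by linarith [hx.2.le]) _)
      (Real.rpow_nonneg (hg0 x hx) _)
  have hlin : (∫⁻ t in Ioo (0:ℝ) 1, ENNReal.ofReal ((1 - t) ^ (α - 1) * g t ^ α))
      = ENNReal.ofReal (∫ t in Ioo (0:ℝ) 1, ψ t) :=
    (ofReal_integral_eq_lintegral_ofReal hψint hψnn).symm
  rw [hlin, ← ENNReal.ofReal_mul hα0]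
  apply ENNReal.ofReal_le_ofReal
  calc α * ∫ t in Ioo (0:ℝ) 1, ψ t = ∫ t in Ioo (0:ℝ) 1, φ t := by
        rw [hφdef, hψdef, ← MeasureTheory.integral_const_mul]
    _ ≤ (∫ t in Ioo (0:ℝ) 1, g t) ^ α := hFTC'
end

section
/- Let α > 1, θ > 0, t_0 ∈ (0,1), and g(t) = θ·1_{(t_0,1)}(t). Then α ∫_0^1 (1−t)^{α−1} g(t)^α dt = (∫_0^1 g(t) dt)^α; the same equality holds when g is constant. -/
open MeasureTheory

lemma key_integral (α : ℝ) (hα : 1 < α) (a : ℝ) (ha : a ≤ 1) :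
    ∫ t in Set.Ioo a 1, (1 - t) ^ (α - 1) = (1 - a) ^ α / α := by
  have hα0 : α ≠ 0 := by linarith
  rw [← integral_Ioc_eq_integral_Ioo, ← intervalIntegral.integral_of_le ha]
  have := intervalIntegral.integral_comp_sub_left (a := a) (b := 1)
    (fun x => x ^ (α - 1)) 1
  rw [this]
  rw [integral_rpow (Or.inl (by linarith))]
  simp only [sub_self, sub_add_cancel]
  rw [Real.zero_rpow hα0]
  ring

theorem equality_cases_moment_inequality
    (α : ℝ) (hα : 1 < α) (θ : ℝ) (hθ : 0 < θ) (t₀ : ℝ) (ht₀ : t₀ ∈ Set.Ioo (0 : ℝ) 1) :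
    (α * ∫ t in Set.Ioo (0 : ℝ) 1,
        (1 - t) ^ (α - 1) * (Set.indicator (Set.Ioo t₀ 1) (fun _ => θ) t) ^ α =
      (∫ t in Set.Ioo (0 : ℝ) 1, Set.indicator (Set.Ioo t₀ 1) (fun _ => θ) t) ^ α) ∧
    ∀ c : ℝ, 0 ≤ c →
      α * ∫ t in Set.Ioo (0 : ℝ) 1, (1 - t) ^ (α - 1) * c ^ α =
        (∫ t in Set.Ioo (0 : ℝ) 1, (fun _ => c) t) ^ α := by
  have hα0 : α ≠ 0 := by linarith
  obtain ⟨h0, h1⟩ := ht₀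
  constructor
  · -- rewrite integrand as indicator
    have hfun : ∀ t, (1 - t) ^ (α - 1) * (Set.indicator (Set.Ioo t₀ 1) (fun _ => θ) t) ^ α
        = Set.indicator (Set.Ioo t₀ 1) (fun t => (1 - t) ^ (α - 1) * θ ^ α) t := by
      intro t
      by_cases h : t ∈ Set.Ioo t₀ 1
      · simp [Set.indicator_of_mem h]
      · simp [Set.indicator_of_notMem h, Real.zero_rpow hα0]
    simp_rw [hfun]
    rw [setIntegral_indicator measurableSet_Ioo]
    have hss : Set.Ioo (0:ℝ) 1 ∩ Set.Ioo t₀ 1 = Set.Ioo t₀ 1 := by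
      rw [Set.inter_eq_self_of_subset_right]
      exact fun x hx => ⟨lt_trans h0 hx.1, hx.2⟩
    rw [hss, integral_mul_const, key_integral α hα t₀ (le_of_lt h1)]
    rw [setIntegral_indicator measurableSet_Ioo, hss, setIntegral_const]
    rw [measureReal_def, Real.volume_Ioo, smul_eq_mul]
    rw [Real.mul_rpow ENNReal.toReal_nonneg (le_of_lt hθ)]
    have : (ENNReal.ofReal (1 - t₀)).toReal = 1 - t₀ := ENNReal.toReal_ofReal (by linarith)
    rw [this]
    field_simp
  · intro c hc
    rw [integral_mul_const, key_integral α hα 0 (by norm_num), setIntegral_const]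
    rw [measureReal_def, Real.volume_Ioo, smul_eq_mul]
    simp only [sub_zero, Real.one_rpow, ENNReal.ofReal_one, ENNReal.toReal_one, one_mul]
    field_simp
end

section
/- Let F be the distribution function of a nonnegative random variable with finite positive mean. Then for all α > 1, α ∫_0^∞ x^{α−1} (1−F(x))^α dx ≤ (∫_0^∞ (1−F(x)) dx)^α, with equality when the variable takes only the values 0 and some x_0 > 0. -/
open MeasureTheory Set Filter intervalIntegral
open scoped ENNReal

lemma surv_anti (ν : Measure ℝ) [IsFiniteMeasure ν] :
    Antitone (fun x => (ν (Set.Ioi x)).toReal) := by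
  intro a b hab
  exact ENNReal.toReal_mono (measure_ne_top ν _) (measure_mono (Set.Ioi_subset_Ioi hab))

lemma surv_right_cont (ν : Measure ℝ) [IsFiniteMeasure ν] (x : ℝ) :
    Tendsto (fun y => (ν (Set.Ioi y)).toReal) (nhdsWithin x (Set.Ioi x))
      (nhds ((ν (Set.Ioi x)).toReal)) := by
  set S : ℝ → ℝ := fun y => (ν (Set.Ioi y)).toReal with hS
  rw [tendsto_order]
  constructor
  · intro b hb
    have hU : (⋃ n : ℕ, Set.Ioi (x + 1/(n+1))) = Set.Ioi x := by
      ext y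
      simp only [Set.mem_iUnion, Set.mem_Ioi]
      constructor
      · rintro ⟨n, hn⟩; have : (0:ℝ) < 1/(n+1) := by positivity
        linarith
      · intro hy
        obtain ⟨n, hn⟩ := exists_nat_gt (1/(y - x))
        refine ⟨n, ?_⟩
        have h1 : (0:ℝ) < y - x := by linarith
        have h2 : 1/(y-x) < (n:ℝ)+1 := by linarith [hn]
        have : 1/((n:ℝ)+1) < y - x := by
          rw [div_lt_iff₀ (by positivity)]
          rw [div_lt_iff₀ h1] at h2
          linarith [h2]
        linarith
    have hmono : Monotone (fun n : ℕ => Set.Ioi (x + 1/(n+1))) := by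
      intro m n hmn
      apply Set.Ioi_subset_Ioi
      gcongr
    have htend := tendsto_measure_iUnion_atTop (μ := ν) hmono
    rw [hU] at htend
    have htendR : Tendsto (fun n : ℕ => S (x + 1/(n+1))) atTop (nhds (S x)) :=
      (ENNReal.tendsto_toReal (measure_ne_top ν _)).comp htend
    have := htendR.eventually_const_lt hb
    obtain ⟨n, hn⟩ := this.exists
    have hδ : (0:ℝ) < 1/(n+1) := by positivity
    have hmem : x ∈ Set.Ico x (x + 1/(n+1)) := Set.left_mem_Ico.mpr (by linarith)
    filter_upwards [Ioo_mem_nhdsGT_of_mem hmem] with y hy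
    exact lt_of_lt_of_le hn (surv_anti ν hy.2.le)
  · intro b hb
    filter_upwards [self_mem_nhdsWithin] with y hy
    exact lt_of_le_of_lt (surv_anti ν (le_of_lt hy)) hb


lemma prim_right_deriv (S : ℝ → ℝ) (hanti : Antitone S)
    (hrc : ∀ x, Tendsto S (nhdsWithin x (Set.Ioi x)) (nhds (S x))) (x : ℝ) :
    HasDerivWithinAt (fun y => ∫ t in (0:ℝ)..y, S t) (S x) (Set.Ioi x) x := by
  have hint : ∀ a b : ℝ, IntervalIntegrable S volume a b := fun a b => hanti.intervalIntegrable
  rw [hasDerivWithinAt_iff_tendsto_slope' (notMem_Ioi_self)]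
  have hslope : ∀ y ∈ Set.Ioi x, slope (fun y => ∫ t in (0:ℝ)..y, S t) x y
      = (∫ t in x..y, S t) / (y - x) := by
    intro y hy
    rw [slope_def_field]
    congr 1
    rw [← intervalIntegral.integral_add_adjacent_intervals (hint 0 x) (hint x y)]
    ring_nf
  -- squeeze between S y and S x
  have hle : ∀ y ∈ Set.Ioi x, S y ≤ slope (fun y => ∫ t in (0:ℝ)..y, S t) x y := by
    intro y hy
    rw [hslope y hy, le_div_iff₀ (by simpa using hy)]
    calc S y * (y - x) = ∫ _ in x..y, S y := by
          rw [intervalIntegral.integral_const, smul_eq_mul]; ring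
      _ ≤ ∫ t in x..y, S t := by
          apply intervalIntegral.integral_mono_on (le_of_lt hy)
            (intervalIntegrable_const) (hint x y)
          intro t ht
          exact hanti ht.2
  have hge : ∀ y ∈ Set.Ioi x, slope (fun y => ∫ t in (0:ℝ)..y, S t) x y ≤ S x := by
    intro y hy
    rw [hslope y hy, div_le_iff₀ (by simpa using hy)]
    calc (∫ t in x..y, S t) ≤ ∫ _ in x..y, S x := by
          apply intervalIntegral.integral_mono_on (le_of_lt hy) (hint x y)
            (intervalIntegrable_const)
          intro t ht
          exact hanti ht.1
      _ = S x * (y - x) := by rw [intervalIntegral.integral_const, smul_eq_mul]; ring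
  apply tendsto_of_tendsto_of_tendsto_of_le_of_le'
    (hrc x) tendsto_const_nhds
  · exact eventually_nhdsWithin_of_forall hle
  · exact eventually_nhdsWithin_of_forall hge

lemma key_ftc (S : ℝ → ℝ) (hanti : Antitone S) (hS0 : ∀ x, 0 ≤ S x) (hS1 : ∀ x, S x ≤ 1)
    (hrc : ∀ x, Tendsto S (nhdsWithin x (Set.Ioi x)) (nhds (S x)))
    {α : ℝ} (hα : 1 < α) {T : ℝ} (hT : 0 ≤ T) :
    ∫ y in (0:ℝ)..T, α * (y ^ (α-1) * S y ^ α) ≤ (∫ t in (0:ℝ)..T, S t) ^ α := by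
  have hint : ∀ a b : ℝ, IntervalIntegrable S volume a b := fun a b => hanti.intervalIntegrable
  set G : ℝ → ℝ := fun y => ∫ t in (0:ℝ)..y, S t with hGdef
  have hG0 : G 0 = 0 := intervalIntegral.integral_same
  have hGcont : Continuous G := intervalIntegral.continuous_primitive hint 0
  have hGnonneg : ∀ y, 0 ≤ y → 0 ≤ G y := by
    intro y hy
    apply intervalIntegral.integral_nonneg hy
    intro t _; exact hS0 t
  have hGy : ∀ y, 0 ≤ y → y * S y ≤ G y := by
    intro y hy
    calc y * S y = ∫ _ in (0:ℝ)..y, S y := by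
          rw [intervalIntegral.integral_const, smul_eq_mul, sub_zero]
      _ ≤ G y := by
          apply intervalIntegral.integral_mono_on hy intervalIntegrable_const (hint 0 y)
          intro t ht; exact hanti ht.2
  have hcont : ContinuousOn (fun y => G y ^ α) (Set.Icc 0 T) := by
    apply Continuous.continuousOn
    rw [continuous_iff_continuousAt]
    intro y
    exact (Real.continuousAt_rpow_const (G y) α (Or.inr (by linarith))).comp hGcont.continuousAt
  have hderiv : ∀ y ∈ Set.Ioo 0 T, HasDerivWithinAt (fun y => G y ^ α)
      (α * G y ^ (α - 1) * S y) (Set.Ioi y) y := by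
    intro y _
    have h1 : HasDerivAt (fun u : ℝ => u ^ α) (α * G y ^ (α - 1)) (G y) :=
      Real.hasDerivAt_rpow_const (Or.inr hα.le)
    exact h1.comp_hasDerivWithinAt y (prim_right_deriv S hanti hrc y)
  have hmeas : Measurable S := hanti.measurable
  have hφmeas : Measurable (fun y : ℝ => α * (y ^ (α-1) * S y ^ α)) := by
    apply Measurable.const_mul
    exact (measurable_id.pow_const _).mul ((hmeas.pow_const _))
  have hφint : IntegrableOn (fun y : ℝ => α * (y ^ (α-1) * S y ^ α)) (Set.Icc 0 T) := by
    constructor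
    · exact hφmeas.aestronglyMeasurable.restrict
    · apply HasFiniteIntegral.restrict_of_bounded (C := α * T ^ (α-1)) measure_Icc_lt_top
      filter_upwards [ae_restrict_mem measurableSet_Icc] with y hy
      have h1 : y ^ (α-1) ≤ T ^ (α-1) := Real.rpow_le_rpow hy.1 hy.2 (by linarith)
      have h2 : S y ^ α ≤ 1 := Real.rpow_le_one (hS0 y) (hS1 y) (by linarith)
      have h3 : (0:ℝ) ≤ y ^ (α-1) := Real.rpow_nonneg hy.1 _
      have h4 : (0:ℝ) ≤ S y ^ α := Real.rpow_nonneg (hS0 y) _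
      rw [Real.norm_eq_abs, abs_of_nonneg (mul_nonneg (by linarith) (mul_nonneg h3 h4))]
      have h5 : y ^ (α-1) * S y ^ α ≤ T ^ (α-1) := by nlinarith
      nlinarith
  have hφle : ∀ y ∈ Set.Ioo 0 T, α * (y ^ (α-1) * S y ^ α) ≤ α * G y ^ (α - 1) * S y := by
    intro y hy
    rcases eq_or_lt_of_le (hS0 y) with h0 | h0
    · rw [← h0, Real.zero_rpow (by linarith), mul_zero, mul_zero, mul_zero]
    · have e1 : S y ^ α = S y ^ (α - 1) * S y := by
        rw [← Real.rpow_add_one (ne_of_gt h0)]; ring_nf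
      have e2 : y ^ (α-1) * S y ^ (α-1) = (y * S y) ^ (α-1) :=
        (Real.mul_rpow hy.1.le (hS0 y)).symm
      have e3 : (y * S y) ^ (α-1) ≤ G y ^ (α-1) :=
        Real.rpow_le_rpow (mul_nonneg hy.1.le (hS0 y)) (hGy y hy.1.le) (by linarith)
      calc α * (y ^ (α-1) * S y ^ α) = α * ((y * S y) ^ (α-1) * S y) := by
            rw [e1, ← e2]; ring
        _ ≤ α * (G y ^ (α-1) * S y) := by
            apply mul_le_mul_of_nonneg_left _ (by linarith)
            exact mul_le_mul_of_nonneg_right e3 (hS0 y)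
        _ = α * G y ^ (α - 1) * S y := by ring
  have := intervalIntegral.integral_le_sub_of_hasDeriv_right_of_le hT hcont hderiv hφint hφle
  calc (∫ y in (0:ℝ)..T, α * (y ^ (α-1) * S y ^ α)) ≤ G T ^ α - G 0 ^ α := this
    _ = G T ^ α := by rw [hG0, Real.zero_rpow (by linarith), sub_zero]

lemma phi_int (S : ℝ → ℝ) (hmeas : Measurable S) (hS0 : ∀ x, 0 ≤ S x) (hS1 : ∀ x, S x ≤ 1)
    {α : ℝ} (hα : 1 < α) {T : ℝ} (hT : 0 ≤ T) :
    IntegrableOn (fun y : ℝ => α * (y ^ (α-1) * S y ^ α)) (Set.Icc 0 T) := by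
  constructor
  · exact (((measurable_id.pow_const _).mul ((hmeas.pow_const _))).const_mul _).aestronglyMeasurable.restrict
  · apply HasFiniteIntegral.restrict_of_bounded (C := α * T ^ (α-1)) measure_Icc_lt_top
    filter_upwards [ae_restrict_mem measurableSet_Icc] with y hy
    have h1 : y ^ (α-1) ≤ T ^ (α-1) := Real.rpow_le_rpow hy.1 hy.2 (by linarith)
    have h2 : S y ^ α ≤ 1 := Real.rpow_le_one (hS0 y) (hS1 y) (by linarith)
    have h3 : (0:ℝ) ≤ y ^ (α-1) := Real.rpow_nonneg hy.1 _
    have h4 : (0:ℝ) ≤ S y ^ α := Real.rpow_nonneg (hS0 y) _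
    rw [Real.norm_eq_abs, abs_of_nonneg (mul_nonneg (by linarith) (mul_nonneg h3 h4))]
    have h5 : y ^ (α-1) * S y ^ α ≤ T ^ (α-1) := by nlinarith
    nlinarith

theorem survival_power_integral_le
    (ν : Measure ℝ) [IsProbabilityMeasure ν]
    (hnonneg : ∀ᵐ x ∂ν, 0 ≤ x)
    (μ : ℝ) (hμ : 0 < μ)
    (hmean : ∫ x in Set.Ici (0 : ℝ), (ν (Set.Ioi x)).toReal = μ) :
    (∀ α : ℝ, 1 < α →
      ENNReal.ofReal α *
          ∫⁻ x in Set.Ici (0 : ℝ), ENNReal.ofReal (x ^ (α - 1) * (ν (Set.Ioi x)).toReal ^ α) ≤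
        ENNReal.ofReal (μ ^ α)) ∧
    ∀ α : ℝ, 1 < α → ∀ x₀ : ℝ, 0 < x₀ → ∀ p : ℝ, 0 < p → p ≤ 1 →
      ν = ENNReal.ofReal (1 - p) • Measure.dirac (0 : ℝ) + ENNReal.ofReal p • Measure.dirac x₀ →
        ENNReal.ofReal α *
            ∫⁻ x in Set.Ici (0 : ℝ), ENNReal.ofReal (x ^ (α - 1) * (ν (Set.Ioi x)).toReal ^ α) =
          ENNReal.ofReal (μ ^ α) := by
  have hS0 : ∀ x, 0 ≤ (ν (Set.Ioi x)).toReal := fun x => ENNReal.toReal_nonneg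
  have hS1 : ∀ x, (ν (Set.Ioi x)).toReal ≤ 1 := by
    intro x
    have h1 : ν (Set.Ioi x) ≤ 1 := prob_le_one
    calc (ν (Set.Ioi x)).toReal ≤ (1 : ℝ≥0∞).toReal :=
          ENNReal.toReal_mono ENNReal.one_ne_top h1
      _ = 1 := ENNReal.toReal_one
  have hanti := surv_anti ν
  have hmeasS : Measurable (fun x => (ν (Set.Ioi x)).toReal) := hanti.measurable
  constructor
  · -- inequality
    intro α hα
    have hSint : IntegrableOn (fun x => (ν (Set.Ioi x)).toReal) (Set.Ici (0:ℝ)) := by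
      by_contra h
      rw [integral_undef h] at hmean
      exact hμ.ne hmean
    have hGle : ∀ T : ℝ, 0 ≤ T → (∫ t in (0:ℝ)..T, (ν (Set.Ioi t)).toReal) ≤ μ := by
      intro T hT
      rw [intervalIntegral.integral_of_le hT, ← hmean]
      exact setIntegral_mono_set hSint (Filter.Eventually.of_forall hS0)
        (HasSubset.Subset.eventuallyLE (Set.Ioc_subset_Icc_self.trans
          (Set.Icc_subset_Ici_self)))
    rw [← lintegral_const_mul' _ _ ENNReal.ofReal_ne_top]
    have hpt : ∀ x : ℝ, ENNReal.ofReal α * ENNReal.ofReal (x ^ (α - 1) * (ν (Set.Ioi x)).toReal ^ α)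
        = ENNReal.ofReal (α * (x ^ (α - 1) * (ν (Set.Ioi x)).toReal ^ α)) := fun x =>
      (ENNReal.ofReal_mul (by linarith)).symm
    simp_rw [hpt]
    set φ : ℝ → ℝ := fun x => α * (x ^ (α - 1) * (ν (Set.Ioi x)).toReal ^ α) with hφdef
    have hφmeas : Measurable φ :=
      ((measurable_id.pow_const _).mul ((hmeasS.pow_const _))).const_mul _
    have key : ∀ n : ℕ, ∫⁻ x in Set.Icc (0:ℝ) n, ENNReal.ofReal (φ x)
        ≤ ENNReal.ofReal (μ ^ α) := by
      intro n
      have hφint : IntegrableOn φ (Set.Icc 0 (n:ℝ)) :=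
        phi_int _ hmeasS hS0 hS1 hα n.cast_nonneg
      rw [← ofReal_integral_eq_lintegral_ofReal hφint ?nn]
      case nn =>
        filter_upwards [ae_restrict_mem measurableSet_Icc] with y hy
        have h3 : (0:ℝ) ≤ y ^ (α-1) := Real.rpow_nonneg hy.1 _
        have h4 : (0:ℝ) ≤ (ν (Set.Ioi y)).toReal ^ α := Real.rpow_nonneg (hS0 y) _
        positivity
      apply ENNReal.ofReal_le_ofReal
      rw [integral_Icc_eq_integral_Ioc, ← intervalIntegral.integral_of_le n.cast_nonneg]
      calc (∫ y in (0:ℝ)..(n:ℝ), φ y)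
          ≤ (∫ t in (0:ℝ)..(n:ℝ), (ν (Set.Ioi t)).toReal) ^ α :=
            key_ftc _ hanti hS0 hS1 (surv_right_cont ν) hα n.cast_nonneg
        _ ≤ μ ^ α := Real.rpow_le_rpow
            (intervalIntegral.integral_nonneg n.cast_nonneg (fun t _ => hS0 t))
            (hGle n n.cast_nonneg) (by linarith)
    have hsup : ∫⁻ x in Set.Ici (0:ℝ), ENNReal.ofReal (φ x)
        = ⨆ n : ℕ, ∫⁻ x in Set.Icc (0:ℝ) (n:ℝ), ENNReal.ofReal (φ x) := by
      rw [← lintegral_indicator measurableSet_Ici]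
      have heq : (Set.Ici (0:ℝ)).indicator (fun x => ENNReal.ofReal (φ x))
          = fun x => ⨆ n : ℕ, (Set.Icc (0:ℝ) (n:ℝ)).indicator
              (fun x => ENNReal.ofReal (φ x)) x := by
        funext x
        by_cases hx : 0 ≤ x
        · obtain ⟨n, hn⟩ := exists_nat_ge x
          rw [Set.indicator_of_mem (Set.mem_Ici.mpr hx)]
          apply le_antisymm
          · exact le_iSup_of_le n (by rw [Set.indicator_of_mem (Set.mem_Icc.mpr ⟨hx, hn⟩)])
          · exact iSup_le fun m => Set.indicator_le_self _ _ x
        · rw [Set.indicator_of_notMem (fun h => hx (Set.mem_Ici.mp h))]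
          symm
          simp only [ENNReal.iSup_eq_zero]
          intro n
          rw [Set.indicator_of_notMem (fun h => hx h.1)]
      rw [heq, lintegral_iSup]
      · congr 1
        funext n
        rw [lintegral_indicator measurableSet_Icc]
      · exact fun n => (ENNReal.measurable_ofReal.comp hφmeas).indicator measurableSet_Icc
      · intro m n hmn
        apply Set.indicator_le_indicator_of_subset
        · exact Set.Icc_subset_Icc le_rfl (by exact_mod_cast hmn)
        · exact fun x => zero_le
    rw [hsup]
    exact iSup_le key
  · -- equality case
    intro α hα x₀ hx₀ p hp hp1 hν
    have hα0 : (0:ℝ) < α := by linarith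
    have hSval : ∀ x : ℝ, 0 ≤ x → (ν (Set.Ioi x)).toReal = if x < x₀ then p else 0 := by
      intro x hx
      rw [hν]
      rw [Measure.add_apply, Measure.smul_apply, Measure.smul_apply, smul_eq_mul, smul_eq_mul,
        Measure.dirac_apply' _ measurableSet_Ioi, Measure.dirac_apply' _ measurableSet_Ioi]
      have h0 : (0:ℝ) ∉ Set.Ioi x := by simp [Set.mem_Ioi]; exact hx
      rw [Set.indicator_of_notMem h0, mul_zero, zero_add]
      by_cases hxx : x < x₀
      · rw [Set.indicator_of_mem (Set.mem_Ioi.mpr hxx), if_pos hxx]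
        simp [ENNReal.toReal_ofReal hp.le]
      · rw [Set.indicator_of_notMem (by simpa using hxx), if_neg hxx]
        simp
    have hμval : μ = x₀ * p := by
      rw [← hmean]
      rw [setIntegral_congr_fun measurableSet_Ici
        (g := (Set.Ico (0:ℝ) x₀).indicator (fun _ => p)) ?he]
      case he =>
        intro x hx
        simp only [hSval x hx]
        by_cases hxx : x < x₀
        · rw [if_pos hxx, Set.indicator_of_mem (Set.mem_Ico.mpr ⟨hx, hxx⟩)]
        · rw [if_neg hxx, Set.indicator_of_notMem (fun h => hxx h.2)]
      rw [setIntegral_indicator measurableSet_Ico,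
        Set.inter_eq_self_of_subset_right Set.Ico_subset_Ici_self, setIntegral_const,
        Real.volume_real_Ico_of_le hx₀.le, sub_zero, smul_eq_mul]
    -- compute the lintegral
    have hsplit : Set.Ici (0:ℝ) = Set.Ico 0 x₀ ∪ Set.Ici x₀ := (Set.Ico_union_Ici_eq_Ici hx₀.le).symm
    rw [hsplit, lintegral_union measurableSet_Ici
      (Set.disjoint_left.mpr (fun x hx hx' => absurd hx.2 (not_lt.mpr hx')))]
    have hzero : ∫⁻ x in Set.Ici x₀, ENNReal.ofReal (x ^ (α - 1) * (ν (Set.Ioi x)).toReal ^ α) = 0 := by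
      rw [setLIntegral_congr_fun measurableSet_Ici
        (g := fun _ => 0) ?hg, lintegral_zero]
      case hg =>
        intro x hx
        beta_reduce
        rw [hSval x (hx₀.le.trans hx), if_neg (not_lt.mpr hx),
          Real.zero_rpow (by linarith), mul_zero, ENNReal.ofReal_zero]
    rw [hzero, add_zero]
    have hmain : ∫⁻ x in Set.Ico 0 x₀, ENNReal.ofReal (x ^ (α - 1) * (ν (Set.Ioi x)).toReal ^ α)
        = ENNReal.ofReal (x₀ ^ α / α * p ^ α) := by
      rw [setLIntegral_congr_fun measurableSet_Ico
        (g := fun x => ENNReal.ofReal (x ^ (α - 1) * p ^ α)) ?hg2]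
      case hg2 =>
        intro x hx
        beta_reduce
        rw [hSval x hx.1, if_pos hx.2]
      have hint : IntegrableOn (fun x : ℝ => x ^ (α - 1) * p ^ α) (Set.Ico 0 x₀) := by
        constructor
        · exact ((measurable_id.pow_const _).mul_const _).aestronglyMeasurable.restrict
        · apply HasFiniteIntegral.restrict_of_bounded (C := x₀ ^ (α-1) * p ^ α) measure_Ico_lt_top
          filter_upwards [ae_restrict_mem measurableSet_Ico] with y hy
          have h1 : y ^ (α-1) ≤ x₀ ^ (α-1) := Real.rpow_le_rpow hy.1 hy.2.le (by linarith)
          have h3 : (0:ℝ) ≤ y ^ (α-1) := Real.rpow_nonneg hy.1 _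
          have h4 : (0:ℝ) ≤ p ^ α := Real.rpow_nonneg hp.le _
          rw [Real.norm_eq_abs, abs_of_nonneg (mul_nonneg h3 h4)]
          exact mul_le_mul_of_nonneg_right h1 h4
      rw [← ofReal_integral_eq_lintegral_ofReal hint ?nn2]
      case nn2 =>
        filter_upwards [ae_restrict_mem measurableSet_Ico] with y hy
        exact mul_nonneg (Real.rpow_nonneg hy.1 _) (Real.rpow_nonneg hp.le _)
      congr 1
      rw [integral_Ico_eq_integral_Ioo, ← integral_Ioc_eq_integral_Ioo,
        ← intervalIntegral.integral_of_le hx₀.le, intervalIntegral.integral_mul_const,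
        integral_rpow (Or.inl (by linarith))]
      rw [sub_add_cancel, Real.zero_rpow (by linarith), sub_zero]
    rw [hmain, ← ENNReal.ofReal_mul hα0.le]
    congr 1
    rw [hμval, Real.mul_rpow hx₀.le hp.le]
    field_simp
end

section
/- Let n ≥ 3, k ∈ {2,...,n−1}, α ∈ [1, n+1−k), and let G_{k:n}(x) = Σ_{j=k}^n C(n,j) x^j (1−x)^{n−j} with density g_{k:n}(x) = x^{k−1}(1−x)^{n−k}/B(k, n+1−k). Then the equation α(1 − G_{k:n}(ρ)) = (1−ρ) g_{k:n}(ρ) has a unique solution ρ ∈ (0,1), and moreover ρ < (k−1)/(n−α). -/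
/-- Distribution function of the `k`-th order statistic of `n` iid uniforms (1-indexed `k`). -/
noncomputable def Gkn (n k : ℕ) (x : ℝ) : ℝ :=
  ∑ j ∈ Finset.Icc k n, (n.choose j : ℝ) * x ^ j * (1 - x) ^ (n - j)

/-- Density of the `k`-th order statistic of `n` iid uniforms (1-indexed `k`). -/
noncomputable def gkn (n k : ℕ) (x : ℝ) : ℝ :=
  ((n.factorial : ℝ) / ((k - 1).factorial * (n - k).factorial)) * x ^ (k - 1) * (1 - x) ^ (n - k)

/-- Auxiliary polynomial `D(t) = ∑_{j=0}^{K} C(n,j) t^(K-j)`. -/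
noncomputable def Dpoly (n K : ℕ) (t : ℝ) : ℝ :=
  ∑ j ∈ Finset.range (K + 1), (n.choose j : ℝ) * t ^ (K - j)

lemma Dpoly_mono (n K : ℕ) {t₁ t₂ : ℝ} (h0 : 0 ≤ t₁) (h : t₁ ≤ t₂) :
    Dpoly n K t₁ ≤ Dpoly n K t₂ := by
  apply Finset.sum_le_sum
  intro j _
  exact mul_le_mul_of_nonneg_left (pow_le_pow_left₀ h0 h _) (Nat.cast_nonneg _)

lemma Dpoly_strict (n K : ℕ) (hK : 1 ≤ K) {t₁ t₂ : ℝ} (h0 : 0 ≤ t₁) (h : t₁ < t₂) :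
    Dpoly n K t₁ < Dpoly n K t₂ := by
  apply Finset.sum_lt_sum
  · intro j _
    exact mul_le_mul_of_nonneg_left (pow_le_pow_left₀ h0 h.le _) (Nat.cast_nonneg _)
  · refine ⟨0, Finset.mem_range.mpr (Nat.succ_pos K), ?_⟩
    simpa using pow_lt_pow_left₀ h h0 (by omega : K - 0 ≠ 0)

lemma sum_shift (n K : ℕ) {ρ : ℝ} (hρ : ρ ≠ 0) :
    ∑ j ∈ Finset.range (K + 1), (n.choose j : ℝ) * ρ ^ j * (1 - ρ) ^ (K - j)
      = ρ ^ K * Dpoly n K ((1 - ρ) / ρ) := by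
  rw [Dpoly, Finset.mul_sum]
  refine Finset.sum_congr rfl fun j hj => ?_
  have hj' : j ≤ K := Nat.lt_succ_iff.mp (Finset.mem_range.mp hj)
  have hpow : ρ ^ K = ρ ^ j * ρ ^ (K - j) := by
    rw [← pow_add]; congr 1; omega
  have hne : ρ ^ (K - j) ≠ 0 := pow_ne_zero _ hρ
  rw [div_pow, hpow]
  field_simp

lemma one_sub_Gkn (n k : ℕ) (hk : k ≤ n) (ρ : ℝ) :
    1 - Gkn n k ρ = ∑ j ∈ Finset.range k, (n.choose j : ℝ) * ρ ^ j * (1 - ρ) ^ (n - j) := by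
  have h := add_pow ρ (1 - ρ) n
  have h2 : ρ + (1 - ρ) = 1 := by ring
  rw [h2, one_pow] at h
  have hb : (∑ j ∈ Finset.range (n + 1), (n.choose j : ℝ) * ρ ^ j * (1 - ρ) ^ (n - j)) = 1 := by
    rw [show (∑ j ∈ Finset.range (n + 1), (n.choose j : ℝ) * ρ ^ j * (1 - ρ) ^ (n - j))
        = ∑ j ∈ Finset.range (n + 1), ρ ^ j * (1 - ρ) ^ (n - j) * (n.choose j : ℝ) from
      Finset.sum_congr rfl fun j _ => by ring]
    exact h.symm
  have hsplit : (∑ j ∈ Finset.range k, (n.choose j : ℝ) * ρ ^ j * (1 - ρ) ^ (n - j))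
      + (∑ j ∈ Finset.Icc k n, (n.choose j : ℝ) * ρ ^ j * (1 - ρ) ^ (n - j))
      = ∑ j ∈ Finset.range (n + 1), (n.choose j : ℝ) * ρ ^ j * (1 - ρ) ^ (n - j) := by
    rw [Finset.range_eq_Ico, Finset.range_eq_Ico, ← Finset.Ico_add_one_right_eq_Icc k n]
    exact Finset.sum_Ico_consecutive (fun j => (n.choose j : ℝ) * ρ ^ j * (1 - ρ) ^ (n - j)) (Nat.zero_le k) (by omega)
  rw [Gkn]
  rw [hb] at hsplit
  linarith

lemma gkn_const (n k : ℕ) (hk : 2 ≤ k) (hkn : k + 1 ≤ n) :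
    ((n.factorial : ℝ) / (((k - 1).factorial : ℝ) * ((n - k).factorial : ℝ)))
      = (n.choose (k - 1) : ℝ) * ((n : ℝ) + 1 - k) := by
  have h1 : n.choose (k - 1) * (k - 1).factorial * (n - (k - 1)).factorial = n.factorial :=
    Nat.choose_mul_factorial_mul_factorial (by omega)
  have h2 : n - (k - 1) = (n - k) + 1 := by omega
  rw [h2, Nat.factorial_succ] at h1
  have hM : ((n - k + 1 : ℕ) : ℝ) = (n : ℝ) + 1 - k := by
    have : ((n - k : ℕ) : ℝ) = (n : ℝ) - k := Nat.cast_sub (by omega)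
    push_cast [this]; ring
  have hR := congrArg (Nat.cast : ℕ → ℝ) h1
  push_cast at hR
  rw [div_eq_iff (by positivity : (((k - 1).factorial : ℝ) * ((n - k).factorial : ℝ)) ≠ 0)]
  rw [← hM]
  push_cast
  linear_combination -hR

lemma eq_iff_aux (n k : ℕ) (hk : 2 ≤ k) (hkn : k + 1 ≤ n) (α ρ : ℝ)
    (hρ0 : 0 < ρ) (hρ1 : ρ < 1) :
    (α * (1 - Gkn n k ρ) = (1 - ρ) * gkn n k ρ) ↔
      α * Dpoly n (k - 1) ((1 - ρ) / ρ) = (n.choose (k - 1) : ℝ) * ((n : ℝ) + 1 - k) := by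
  set K := k - 1 with hKdef
  set M := n - k + 1 with hMdef
  have hKk : K + 1 = k := by omega
  have hρ' : (0 : ℝ) < 1 - ρ := by linarith
  have hsum : 1 - Gkn n k ρ
      = (∑ j ∈ Finset.range k, (n.choose j : ℝ) * ρ ^ j * (1 - ρ) ^ (K - j)) * (1 - ρ) ^ M := by
    rw [one_sub_Gkn n k (by omega) ρ, Finset.sum_mul]
    refine Finset.sum_congr rfl fun j hj => ?_
    have hj' : j < k := Finset.mem_range.mp hj
    have hnj : (K - j) + M = n - j := by omega
    rw [mul_assoc ((n.choose j : ℝ) * ρ ^ j), ← pow_add, hnj]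
  have hss : (∑ j ∈ Finset.range k, (n.choose j : ℝ) * ρ ^ j * (1 - ρ) ^ (K - j))
      = ρ ^ K * Dpoly n K ((1 - ρ) / ρ) := by
    rw [← hKk]; exact sum_shift n K hρ0.ne'
  have hg : (1 - ρ) * gkn n k ρ
      = (n.choose K : ℝ) * ((n : ℝ) + 1 - k) * (ρ ^ K * (1 - ρ) ^ M) := by
    rw [gkn]
    rw [show ((n.factorial : ℝ) / (((k - 1).factorial : ℝ) * ((n - k).factorial : ℝ)))
        = (n.choose (k - 1) : ℝ) * ((n : ℝ) + 1 - k) from gkn_const n k hk hkn]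
    rw [show M = (n - k) + 1 from rfl, pow_succ]
    ring
  have hEquiv : α * (1 - Gkn n k ρ) - (1 - ρ) * gkn n k ρ
      = (ρ ^ K * (1 - ρ) ^ M) * (α * Dpoly n K ((1 - ρ) / ρ)
        - (n.choose K : ℝ) * ((n : ℝ) + 1 - k)) := by
    rw [hsum, hss, hg]; ring
  have hne : (ρ ^ K * (1 - ρ) ^ M) ≠ 0 := by positivity
  constructor
  · intro h
    have h0 : (ρ ^ K * (1 - ρ) ^ M) * (α * Dpoly n K ((1 - ρ) / ρ)
        - (n.choose K : ℝ) * ((n : ℝ) + 1 - k)) = 0 := by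
      rw [← hEquiv]; linarith
    have := (mul_eq_zero.mp h0).resolve_left hne
    linarith
  · intro h
    have h0 : α * Dpoly n K ((1 - ρ) / ρ) - (n.choose K : ℝ) * ((n : ℝ) + 1 - k) = 0 := by
      linarith
    have := hEquiv
    rw [h0, mul_zero] at this
    linarith

lemma choose_bound (n K : ℕ) (hKn : K ≤ n) :
    ∀ i, i ≤ K → n.choose (K - i) * (n - K + 1) ^ i ≤ n.choose K * K ^ i := by
  intro i
  induction i with
  | zero => simp
  | succ i ih =>
    intro h
    have hih := ih (by omega)
    have hid := Nat.choose_succ_right_eq n (K - (i + 1))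
    have e1 : K - (i + 1) + 1 = K - i := by omega
    have e2 : n - (K - (i + 1)) = n - K + (i + 1) := by omega
    rw [e1, e2] at hid
    have step : n.choose (K - (i + 1)) * (n - K + 1) ≤ n.choose (K - i) * K := by
      calc n.choose (K - (i + 1)) * (n - K + 1)
          ≤ n.choose (K - (i + 1)) * (n - K + (i + 1)) := by gcongr <;> omega
        _ = n.choose (K - i) * (K - i) := hid.symm
        _ ≤ n.choose (K - i) * K := by gcongr <;> omega
    calc n.choose (K - (i + 1)) * (n - K + 1) ^ (i + 1)
        = (n.choose (K - (i + 1)) * (n - K + 1)) * (n - K + 1) ^ i := by ring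
      _ ≤ (n.choose (K - i) * K) * (n - K + 1) ^ i := Nat.mul_le_mul_right _ step
      _ = K * (n.choose (K - i) * (n - K + 1) ^ i) := by ring
      _ ≤ K * (n.choose K * K ^ i) := Nat.mul_le_mul_left _ hih
      _ = n.choose K * K ^ (i + 1) := by ring

lemma key_ineq (n k : ℕ) (hk : 2 ≤ k) (hkn : k + 1 ≤ n) (α : ℝ) (hα : 1 ≤ α)
    (hα' : α < (n : ℝ) + 1 - k) :
    α * Dpoly n (k - 1) (((n : ℝ) + 1 - k - α) / ((k : ℝ) - 1))
      < (n.choose (k - 1) : ℝ) * ((n : ℝ) + 1 - k) := by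
  set K := k - 1 with hKdef
  have hKr : ((K : ℕ) : ℝ) = (k : ℝ) - 1 := by
    rw [hKdef, Nat.cast_sub (by omega)]; norm_num
  set Mr : ℝ := (n : ℝ) + 1 - k with hMrdef
  set t₀ : ℝ := (Mr - α) / ((k : ℝ) - 1) with ht₀def
  have hk2 : (2 : ℝ) ≤ (k : ℝ) := by exact_mod_cast hk
  have hKpos : (0 : ℝ) < (k : ℝ) - 1 := by linarith
  have hMα : (0 : ℝ) < Mr - α := by linarith
  have ht₀ : 0 ≤ t₀ := le_of_lt (div_pos hMα hKpos)
  have hMr1 : (0 : ℝ) < Mr + 1 := by linarith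
  set s : ℝ := (Mr - α) / (Mr + 1) with hsdef
  have hs0 : 0 ≤ s := le_of_lt (div_pos hMα hMr1)
  have hs1 : s < 1 := by rw [div_lt_one hMr1]; linarith
  set C : ℝ := (n.choose K : ℝ) with hCdef
  have hCpos : (0 : ℝ) < C := by
    rw [hCdef]; exact_mod_cast Nat.choose_pos (by omega : K ≤ n)
  have hMcast : ((n - K + 1 : ℕ) : ℝ) = Mr + 1 := by
    have h1 : ((n - K : ℕ) : ℝ) = (n : ℝ) - K := Nat.cast_sub (by omega)
    push_cast [h1]
    rw [hKr, hMrdef]; ring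
  -- termwise bound
  have hterm : ∀ i ∈ Finset.range (K + 1), (n.choose (K - i) : ℝ) * t₀ ^ i ≤ C * s ^ i := by
    intro i hi
    have hi' : i ≤ K := by have := Finset.mem_range.mp hi; omega
    have hb := choose_bound n K (by omega) i hi'
    have hbR : ((n.choose (K - i)) : ℝ) * ((n - K + 1 : ℕ) : ℝ) ^ i
        ≤ C * ((K : ℕ) : ℝ) ^ i := by
      rw [hCdef]; exact_mod_cast hb
    rw [hMcast, hKr] at hbR
    have key2 : C * s ^ i = (C * ((k : ℝ) - 1) ^ i) * (t₀ ^ i / (Mr + 1) ^ i) := by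
      rw [hsdef, ht₀def, div_pow, div_pow]
      field_simp
    calc (n.choose (K - i) : ℝ) * t₀ ^ i
        = ((n.choose (K - i) : ℝ) * (Mr + 1) ^ i) * (t₀ ^ i / (Mr + 1) ^ i) := by
          field_simp
      _ ≤ (C * ((k : ℝ) - 1) ^ i) * (t₀ ^ i / (Mr + 1) ^ i) := by
          apply mul_le_mul_of_nonneg_right hbR (by positivity)
      _ = C * s ^ i := key2.symm
  have hD : Dpoly n K t₀ = ∑ i ∈ Finset.range (K + 1), (n.choose (K - i) : ℝ) * t₀ ^ i := by
    rw [Dpoly, ← Finset.sum_range_reflect (fun j => (n.choose j : ℝ) * t₀ ^ (K - j)) (K + 1)]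
    refine Finset.sum_congr rfl fun i hi => ?_
    have hi' : i ≤ K := by have := Finset.mem_range.mp hi; omega
    have e1 : K + 1 - 1 - i = K - i := by omega
    have e2 : K - (K - i) = i := by omega
    rw [e1, e2]
  have hsum : Dpoly n K t₀ ≤ C * ∑ i ∈ Finset.range (K + 1), s ^ i := by
    rw [hD, Finset.mul_sum]; exact Finset.sum_le_sum hterm
  have hgeo : ∑ i ∈ Finset.range (K + 1), s ^ i ≤ 1 / (1 - s) := by
    rw [le_div_iff₀ (by linarith : (0 : ℝ) < 1 - s)]
    have hg := geom_sum_mul s (K + 1)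
    nlinarith [pow_nonneg hs0 (K + 1)]
  have hx : (Mr + 1) / (α + 1) < Mr / α := by
    rw [div_lt_div_iff₀ (by linarith) (by linarith)]
    nlinarith
  have h1s : 1 - s = (α + 1) / (Mr + 1) := by
    rw [hsdef]; field_simp; ring
  have hfin : α * (C * (1 / (1 - s))) < C * Mr := by
    rw [h1s, one_div_div]
    calc α * (C * ((Mr + 1) / (α + 1)))
        < α * (C * (Mr / α)) := by
          apply mul_lt_mul_of_pos_left (mul_lt_mul_of_pos_left hx hCpos) (by linarith)
      _ = C * Mr := by field_simp
  have hαpos : (0 : ℝ) < α := by linarith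
  calc α * Dpoly n K t₀ ≤ α * (C * ∑ i ∈ Finset.range (K + 1), s ^ i) := by
        apply mul_le_mul_of_nonneg_left hsum hαpos.le
    _ ≤ α * (C * (1 / (1 - s))) := by
        apply mul_le_mul_of_nonneg_left (mul_le_mul_of_nonneg_left hgeo hCpos.le) hαpos.le
    _ < C * Mr := hfin

theorem exists_unique_root_of_density_equation
    (n k : ℕ) (hn : 3 ≤ n) (hk : 2 ≤ k) (hk' : k ≤ n - 1)
    (α : ℝ) (hα : 1 ≤ α) (hα' : α < n + 1 - k) :
    (∃! ρ : ℝ, ρ ∈ Set.Ioo (0 : ℝ) 1 ∧ α * (1 - Gkn n k ρ) = (1 - ρ) * gkn n k ρ) ∧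
    ∀ ρ : ℝ, ρ ∈ Set.Ioo (0 : ℝ) 1 → α * (1 - Gkn n k ρ) = (1 - ρ) * gkn n k ρ →
      ρ < (k - 1) / (n - α) := by
  have hkn : k + 1 ≤ n := by omega
  set K := k - 1 with hKdef
  have hK1 : 1 ≤ K := by omega
  have hKk : K + 1 = k := by omega
  have hKr : ((K : ℕ) : ℝ) = (k : ℝ) - 1 := by
    rw [hKdef, Nat.cast_sub (by omega)]; norm_num
  set C : ℝ := (n.choose K : ℝ) with hCdef
  have hCpos : (0 : ℝ) < C := by
    rw [hCdef]; exact_mod_cast Nat.choose_pos (by omega : K ≤ n)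
  set Mr : ℝ := (n : ℝ) + 1 - k with hMrdef
  have hαM : α < Mr := hα'
  have hk2 : (2 : ℝ) ≤ (k : ℝ) := by exact_mod_cast hk
  have hkn' : (k : ℝ) + 1 ≤ (n : ℝ) := by exact_mod_cast hkn
  have hαpos : (0 : ℝ) < α := by linarith
  have hiff : ∀ ρ ∈ Set.Ioo (0 : ℝ) 1,
      (α * (1 - Gkn n k ρ) = (1 - ρ) * gkn n k ρ) ↔
        α * Dpoly n K ((1 - ρ) / ρ) = C * Mr := fun ρ hρ =>
    eq_iff_aux n k hk hkn α ρ hρ.1 hρ.2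
  -- the function for the IVT
  set f : ℝ → ℝ := fun ρ =>
    α * (∑ j ∈ Finset.range (K + 1), (n.choose j : ℝ) * ρ ^ j * (1 - ρ) ^ (K - j))
      - C * Mr * ρ ^ K with hfdef
  have hfc : Continuous f := by
    apply Continuous.sub
    · exact continuous_const.mul (continuous_finset_sum _ fun j _ => by fun_prop)
    · fun_prop
  have hfeq : ∀ ρ : ℝ, 0 < ρ → f ρ = ρ ^ K * (α * Dpoly n K ((1 - ρ) / ρ) - C * Mr) := by
    intro ρ hρ
    simp only [hfdef]
    rw [sum_shift n K hρ.ne']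
    ring
  have hf0 : f 0 = α := by
    simp only [hfdef]
    rw [Finset.sum_eq_single_of_mem 0 (Finset.mem_range.mpr (by omega))]
    · simp [zero_pow (by omega : K ≠ 0)]
    · intro j hj hj0
      simp [zero_pow hj0]
  have hf1 : f 1 = C * (α - Mr) := by
    simp only [hfdef]
    rw [Finset.sum_eq_single_of_mem K (Finset.mem_range.mpr (by omega))]
    · simp; ring
    · intro j hj hjK
      have : K - j ≠ 0 := by have := Finset.mem_range.mp hj; omega
      simp [zero_pow this]
  have hmem : (0 : ℝ) ∈ Set.Ioo (f 1) (f 0) := by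
    constructor
    · rw [hf1]; nlinarith
    · rw [hf0]; linarith
  obtain ⟨ρ₀, hρ₀, hfρ₀⟩ := intermediate_value_Ioo' (by norm_num : (0 : ℝ) ≤ 1)
    hfc.continuousOn hmem
  have hDρ₀ : α * Dpoly n K ((1 - ρ₀) / ρ₀) = C * Mr := by
    have := hfeq ρ₀ hρ₀.1
    rw [hfρ₀] at this
    have hne : ρ₀ ^ K ≠ 0 := pow_ne_zero _ hρ₀.1.ne'
    have := (mul_eq_zero.mp this.symm).resolve_left hne
    linarith
  -- uniqueness helper
  have tpos : ∀ ρ : ℝ, ρ ∈ Set.Ioo (0 : ℝ) 1 → 0 < (1 - ρ) / ρ := by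
    intro ρ hρ
    exact div_pos (by linarith [hρ.2]) hρ.1
  have tanti : ∀ a b : ℝ, a ∈ Set.Ioo (0 : ℝ) 1 → b ∈ Set.Ioo (0 : ℝ) 1 → a < b →
      (1 - b) / b < (1 - a) / a := by
    intro a b ha hb hab
    rw [div_lt_div_iff₀ hb.1 ha.1]
    nlinarith
  have huniq : ∀ a b : ℝ, a ∈ Set.Ioo (0 : ℝ) 1 → b ∈ Set.Ioo (0 : ℝ) 1 →
      α * Dpoly n K ((1 - a) / a) = C * Mr → α * Dpoly n K ((1 - b) / b) = C * Mr → a = b := by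
    intro a b ha hb hDa hDb
    by_contra hne
    rcases lt_or_gt_of_ne hne with h | h
    · have := Dpoly_strict n K hK1 (tpos b hb).le (tanti a b ha hb h)
      nlinarith
    · have := Dpoly_strict n K hK1 (tpos a ha).le (tanti b a hb ha h)
      nlinarith
  constructor
  · refine ⟨ρ₀, ⟨hρ₀, (hiff ρ₀ hρ₀).mpr hDρ₀⟩, ?_⟩
    rintro y ⟨hy, hyeq⟩
    exact huniq y ρ₀ hy hρ₀ ((hiff y hy).mp hyeq) hDρ₀
  · intro ρ hρ heq
    have hD : α * Dpoly n K ((1 - ρ) / ρ) = C * Mr := (hiff ρ hρ).mp heq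
    have hkey := key_ineq n k hk hkn α hα hα'
    have hkey' : α * Dpoly n K ((Mr - α) / ((k : ℝ) - 1)) < C * Mr := by
      convert hkey using 3
    have hDlt : Dpoly n K ((Mr - α) / ((k : ℝ) - 1)) < Dpoly n K ((1 - ρ) / ρ) := by
      have h1 : α * Dpoly n K ((Mr - α) / ((k : ℝ) - 1)) < α * Dpoly n K ((1 - ρ) / ρ) := by
        rw [hD]; exact hkey'
      exact lt_of_mul_lt_mul_left h1 hαpos.le
    have ht₀nonneg : 0 ≤ (Mr - α) / ((k : ℝ) - 1) := by
      apply div_nonneg (by linarith) (by linarith)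
    have ht : (Mr - α) / ((k : ℝ) - 1) < (1 - ρ) / ρ := by
      by_contra hcon
      push_neg at hcon
      exact absurd (Dpoly_mono n K (tpos ρ hρ).le hcon) (not_le.mpr hDlt)
    have hcross : (Mr - α) * ρ < (1 - ρ) * ((k : ℝ) - 1) := by
      rw [div_lt_div_iff₀ (by linarith : (0 : ℝ) < (k : ℝ) - 1) hρ.1] at ht
      exact ht
    have hnα : (0 : ℝ) < (n : ℝ) - α := by
      have : Mr ≤ (n : ℝ) - 1 := by rw [hMrdef]; linarith
      linarith
    rw [lt_div_iff₀ hnα]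
    have hexp : ρ * ((n : ℝ) - α) = (Mr - α) * ρ + ρ * ((k : ℝ) - 1) := by
      rw [hMrdef]; ring
    have hexp2 : (1 - ρ) * ((k : ℝ) - 1) = ((k : ℝ) - 1) - ρ * ((k : ℝ) - 1) := by ring
    linarith
end

section
/- Let n ≥ 3, k ∈ {2,...,n−1}, α ∈ [1, n+1−k), G_{k:n}(x) = Σ_{j=k}^n C(n,j) x^j(1−x)^{n−j}, and ρ the unique root in (0,1) of α(1−G_{k:n}(ρ)) = (1−ρ)g_{k:n}(ρ), where g_{k:n} = G'_{k:n}. Then for all x ∈ [0,1], 1 − G_{k:n}(x) ≤ A_{k:n}(α)(1−x)^α where A_{k:n}(α) = (1−G_{k:n}(ρ))/(1−ρ)^α, with equality if and only if x = ρ or x = 1. -/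
lemma hasDerivAt_one_sub_pow (m : ℕ) (x : ℝ) :
    HasDerivAt (fun y : ℝ => (1 - y) ^ m) (-((m : ℝ) * (1 - x) ^ (m - 1))) x := by
  have h1 : HasDerivAt (fun y : ℝ => 1 - y) (-1) x := by
    simpa using (hasDerivAt_id' x).const_sub (1:ℝ)
  have := (hasDerivAt_pow m (1 - x)).comp x h1
  simpa [mul_comm, Function.comp_def] using this

lemma hasDerivAt_Gkn (n k : ℕ) (hk : 1 ≤ k) (hkn : k ≤ n) (x : ℝ) :
    HasDerivAt (Gkn n k) (gkn n k x) x := by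
  set u : ℕ → ℝ := fun j => (n : ℝ) * ((n-1).choose j : ℝ) * x ^ j * (1 - x) ^ (n - 1 - j) with hu
  have hterm : ∀ j ∈ Finset.Icc k n,
      HasDerivAt (fun y : ℝ => (n.choose j : ℝ) * y ^ j * (1 - y) ^ (n - j))
        (u (j - 1) - u j) x := by
    intro j hj
    rw [Finset.mem_Icc] at hj
    have h1 : HasDerivAt (fun y : ℝ => (n.choose j : ℝ) * y ^ j)
        ((n.choose j : ℝ) * ((j : ℝ) * x ^ (j - 1))) x := (hasDerivAt_pow j x).const_mul _
    have h3 := h1.mul (hasDerivAt_one_sub_pow (n - j) x)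
    refine h3.congr_deriv ?_
    symm
    have e1 : (n : ℝ) * ((n-1).choose (j-1) : ℝ) = (n.choose j : ℝ) * (j : ℝ) := by
      have hnat : n * ((n-1).choose (j-1)) = n.choose j * j := by
        obtain ⟨j', rfl⟩ : ∃ j', j = j' + 1 := ⟨j - 1, by omega⟩
        obtain ⟨n', rfl⟩ : ∃ n', n = n' + 1 := ⟨n - 1, by omega⟩
        simpa using Nat.add_one_mul_choose_eq n' j'
      exact_mod_cast hnat
    have e2 : (n : ℝ) * ((n-1).choose j : ℝ) = (n.choose j : ℝ) * ((n - j : ℕ) : ℝ) := by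
      have hnat : n * ((n-1).choose j) = n.choose j * (n - j) := by
        have t1 := Nat.choose_succ_right_eq n j
        have t2 := Nat.add_one_mul_choose_eq (n-1) j
        rw [show n - 1 + 1 = n from by omega] at t2
        rw [t2, t1]
      exact_mod_cast hnat
    simp only [hu]
    rw [show n - 1 - (j-1) = n - j from by omega, show n - 1 - j = n - j - 1 from by omega]
    linear_combination (x ^ (j-1) * (1-x) ^ (n-j)) * e1 - (x ^ j * (1-x) ^ (n-j-1)) * e2
  have hsum := HasDerivAt.fun_sum hterm
  have htel : ∑ j ∈ Finset.Icc k n, (u (j-1) - u j) = u (k-1) - u n := by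
    rw [← Finset.Ico_add_one_right_eq_Icc, Finset.sum_Ico_eq_sum_range]
    calc ∑ i ∈ Finset.range (n + 1 - k), (u (k + i - 1) - u (k + i))
        = ∑ i ∈ Finset.range (n + 1 - k),
            ((fun i => u (k-1+i)) i - (fun i => u (k-1+i)) (i+1)) := by
          refine Finset.sum_congr rfl (fun i _ => ?_)
          simp only
          congr 2 <;> omega
      _ = u (k-1+0) - u (k-1+(n+1-k)) := Finset.sum_range_sub' _ _
      _ = u (k-1) - u n := by rw [show k-1+(n+1-k) = n from by omega]; norm_num
  have hun : u n = 0 := by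
    simp [hu, Nat.choose_eq_zero_of_lt (show n-1 < n by omega)]
  have huk : u (k-1) = gkn n k x := by
    simp only [hu, gkn]
    rw [show n - 1 - (k-1) = n - k from by omega]
    congr 1
    congr 1
    have key : ((n-1).choose (k-1) : ℝ) * (k-1).factorial * (n-k).factorial
        = (n-1).factorial := by
      have h := Nat.choose_mul_factorial_mul_factorial (show k-1 ≤ n-1 by omega)
      rw [show n-1-(k-1) = n-k from by omega] at h
      exact_mod_cast h
    have key2 : (n:ℝ) * (n-1).factorial = n.factorial := by
      exact_mod_cast Nat.mul_factorial_pred (show n ≠ 0 by omega)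
    have f1 : ((k-1).factorial : ℝ) ≠ 0 := by positivity
    have f2 : ((n-k).factorial : ℝ) ≠ 0 := by positivity
    field_simp
    linear_combination (n:ℝ) * key + key2
  rw [htel, hun, sub_zero, huk] at hsum
  exact hsum

lemma Gkn_one (n k : ℕ) (hkn : k ≤ n) : Gkn n k 1 = 1 := by
  unfold Gkn
  rw [Finset.sum_eq_single n]
  · simp
  · intro j hj hjn
    rw [Finset.mem_Icc] at hj
    have hnj : n - j ≠ 0 := by omega
    simp [zero_pow hnj]
  · intro h
    exact absurd (Finset.mem_Icc.2 ⟨hkn, le_refl n⟩) h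

lemma hasDerivAt_phi (n k : ℕ) (hn : 3 ≤ n) (hk : 2 ≤ k) (hk' : k + 1 ≤ n) (α : ℝ) (x : ℝ) :
    HasDerivAt (fun y => α * (1 - Gkn n k y) - (1 - y) * gkn n k y)
      (((n.factorial : ℝ) / ((k - 1).factorial * (n - k).factorial)) * x ^ (k-2) *
        (1-x) ^ (n-k) * (((n:ℝ) - α) * x - ((k:ℝ) - 1))) x := by
  set c : ℝ := (n.factorial : ℝ) / ((k - 1).factorial * (n - k).factorial) with hc
  have h1sub : HasDerivAt (fun y : ℝ => 1 - y) (-1) x := by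
    simpa using (hasDerivAt_id' x).const_sub (1:ℝ)
  have hg : HasDerivAt (gkn n k)
      ((c * (((k-1:ℕ) : ℝ) * x ^ (k-1-1))) * (1-x) ^ (n-k)
        + (c * x ^ (k-1)) * (-(((n-k:ℕ) : ℝ) * (1-x) ^ (n-k-1)))) x := by
    have hx1 : HasDerivAt (fun y : ℝ => c * y ^ (k-1))
        (c * (((k-1:ℕ) : ℝ) * x ^ (k-1-1))) x := (hasDerivAt_pow (k-1) x).const_mul c
    exact hx1.mul (hasDerivAt_one_sub_pow (n-k) x)
  have hF : HasDerivAt (fun y => α * (1 - Gkn n k y)) (α * (0 - gkn n k x)) x :=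
    ((hasDerivAt_const x (1:ℝ)).sub (hasDerivAt_Gkn n k (by omega) (by omega) x)).const_mul α
  have h2 : HasDerivAt (fun y => (1 - y) * gkn n k y)
      ((-1) * gkn n k x + (1-x) * ((c * (((k-1:ℕ) : ℝ) * x ^ (k-1-1))) * (1-x) ^ (n-k)
        + (c * x ^ (k-1)) * (-(((n-k:ℕ) : ℝ) * (1-x) ^ (n-k-1))))) x := h1sub.mul hg
  have hphi := hF.sub h2
  refine hphi.congr_deriv ?_
  have px : x ^ (k-1) = x ^ (k-2) * x := by
    rw [show k-1 = (k-2)+1 from by omega, pow_succ]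
  have pB : (1-x) ^ (n-k) = (1-x) ^ (n-k-1) * (1-x) := by
    rw [← pow_succ]
    congr 1
    omega
  have ck : ((k-1:ℕ) : ℝ) = (k:ℝ) - 1 := by
    push_cast [Nat.cast_sub (show 1 ≤ k by omega)]; ring
  have cn : ((n-k:ℕ) : ℝ) = (n:ℝ) - (k:ℝ) := by
    push_cast [Nat.cast_sub (show k ≤ n by omega)]; ring
  rw [show k-1-1 = k-2 from by omega, gkn, ← hc, px, pB, ck, cn]
  ring

theorem survival_Gkn_le_Akn_mul_rpow
    (n k : ℕ) (hn : 3 ≤ n) (hk : 2 ≤ k) (hk' : k ≤ n - 1)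
    (α : ℝ) (hα : 1 ≤ α) (hα' : α < n + 1 - k)
    (ρ : ℝ) (hρ : ρ ∈ Set.Ioo (0 : ℝ) 1)
    (hroot : α * (1 - Gkn n k ρ) = (1 - ρ) * gkn n k ρ) :
    ∀ x ∈ Set.Icc (0 : ℝ) 1,
      (1 - Gkn n k x ≤ (1 - Gkn n k ρ) / (1 - ρ) ^ α * (1 - x) ^ α) ∧
      (1 - Gkn n k x = (1 - Gkn n k ρ) / (1 - ρ) ^ α * (1 - x) ^ α ↔ x = ρ ∨ x = 1) := by
  have hkn : k + 1 ≤ n := by omega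
  set c : ℝ := (n.factorial : ℝ) / ((k - 1).factorial * (n - k).factorial) with hc
  have hcpos : 0 < c := by
    rw [hc]
    positivity
  set φ : ℝ → ℝ := fun y => α * (1 - Gkn n k y) - (1 - y) * gkn n k y with hφ
  have hφd : ∀ y : ℝ, HasDerivAt φ
      (c * y ^ (k-2) * (1-y) ^ (n-k) * (((n:ℝ) - α) * y - ((k:ℝ) - 1))) y :=
    fun y => hasDerivAt_phi n k hn hk hkn α y
  have hφcont : Continuous φ := by
    have : Differentiable ℝ φ := fun y => (hφd y).differentiableAt
    exact this.continuous
  -- the critical point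
  have hden : (0:ℝ) < (n:ℝ) - α := by
    have : (k:ℝ) ≥ 2 := by exact_mod_cast hk
    linarith
  have hnum : (0:ℝ) < (k:ℝ) - 1 := by
    have : (k:ℝ) ≥ 2 := by exact_mod_cast hk
    linarith
  have hkna : (k:ℝ) - 1 < (n:ℝ) - α := by linarith
  set xs : ℝ := ((k:ℝ) - 1) / ((n:ℝ) - α) with hxs
  have hxs0 : 0 < xs := div_pos hnum hden
  have hxs1 : xs < 1 := (div_lt_one hden).2 hkna
  have hxs_eq : ((n:ℝ) - α) * xs = (k:ℝ) - 1 := by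
    rw [hxs]; field_simp [hden.ne']
  -- strict antitone on [0, xs]
  have hanti : StrictAntiOn φ (Set.Icc 0 xs) := by
    apply strictAntiOn_of_deriv_neg (convex_Icc _ _) hφcont.continuousOn
    intro y hy
    rw [interior_Icc] at hy
    rw [(hφd y).deriv]
    have h1 : 0 < c * y ^ (k-2) * (1-y) ^ (n-k) :=
      mul_pos (mul_pos hcpos (pow_pos hy.1 _))
        (pow_pos (by linarith [hy.2.trans hxs1]) _)
    have h2 : ((n:ℝ) - α) * y - ((k:ℝ) - 1) < 0 := by
      have := mul_lt_mul_of_pos_left hy.2 hden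
      rw [hxs_eq] at this
      linarith
    exact mul_neg_of_pos_of_neg h1 h2
  -- strict monotone on [xs, 1]
  have hmono : StrictMonoOn φ (Set.Icc xs 1) := by
    apply strictMonoOn_of_deriv_pos (convex_Icc _ _) hφcont.continuousOn
    intro y hy
    rw [interior_Icc] at hy
    rw [(hφd y).deriv]
    have h1 : 0 < c * y ^ (k-2) * (1-y) ^ (n-k) :=
      mul_pos (mul_pos hcpos (pow_pos (hxs0.trans hy.1) _))
        (pow_pos (by linarith [hy.2]) _)
    have h2 : 0 < ((n:ℝ) - α) * y - ((k:ℝ) - 1) := by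
      have := mul_lt_mul_of_pos_left hy.1 hden
      rw [hxs_eq] at this
      linarith
    exact mul_pos h1 h2
  have hφ1 : φ 1 = 0 := by
    simp [hφ, Gkn_one n k (by omega)]
  have hφρ : φ ρ = 0 := by
    simp [hφ, hroot]
  -- ρ < xs
  have hρxs : ρ < xs := by
    by_contra hcon
    push_neg at hcon
    have : φ ρ < φ 1 := hmono ⟨hcon, hρ.2.le⟩ ⟨hxs1.le, le_refl 1⟩ hρ.2
    rw [hφ1, hφρ] at this
    exact lt_irrefl 0 this
  -- sign of φ
  have hφpos : ∀ y, 0 ≤ y → y < ρ → 0 < φ y := by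
    intro y hy0 hyρ
    have := hanti ⟨hy0, (hyρ.trans hρxs).le⟩ ⟨hρ.1.le, hρxs.le⟩ hyρ
    rw [hφρ] at this
    exact this
  have hφneg : ∀ y, ρ < y → y < 1 → φ y < 0 := by
    intro y hρy hy1
    rcases le_or_gt y xs with h | h
    · have := hanti ⟨hρ.1.le, hρxs.le⟩ ⟨hρ.1.le.trans hρy.le, h⟩ hρy
      rw [hφρ] at this
      exact this
    · have := hmono ⟨h.le, hy1.le⟩ ⟨hxs1.le, le_refl 1⟩ hy1
      rw [hφ1] at this
      exact this
  -- the function h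
  set H : ℝ → ℝ := fun y => (1 - Gkn n k y) * (1 - y) ^ (-α) with hH
  have hHd : ∀ y : ℝ, y < 1 → HasDerivAt H (φ y * (1-y) ^ (-α - 1)) y := by
    intro y hy1
    have hy1' : (0:ℝ) < 1 - y := by linarith
    have h1sub : HasDerivAt (fun z : ℝ => 1 - z) (-1) y := by
      simpa using (hasDerivAt_id' y).const_sub (1:ℝ)
    have hr : HasDerivAt (fun z : ℝ => (1 - z) ^ (-α))
        ((-α) * (1-y) ^ (-α - 1) * (-1)) y :=
      (Real.hasDerivAt_rpow_const (Or.inl (ne_of_gt hy1'))).comp y h1sub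
    have hF : HasDerivAt (fun z => 1 - Gkn n k z) (0 - gkn n k y) y :=
      (hasDerivAt_const y (1:ℝ)).sub (hasDerivAt_Gkn n k (by omega) (by omega) y)
    have := hF.mul hr
    refine this.congr_deriv ?_
    have hsplit := Real.rpow_add hy1' (-α - 1) 1
    rw [Real.rpow_one, show -α - 1 + 1 = -α by ring] at hsplit
    rw [hsplit]
    simp only [hφ]
    ring
  have hHmono : StrictMonoOn H (Set.Icc 0 ρ) := by
    apply strictMonoOn_of_deriv_pos (convex_Icc _ _)
    · intro y hy
      exact (hHd y (lt_of_le_of_lt hy.2 hρ.2)).continuousAt.continuousWithinAt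
    · intro y hy
      rw [interior_Icc] at hy
      rw [(hHd y (hy.2.trans hρ.2)).deriv]
      have h1 : 0 < φ y := hφpos y hy.1.le hy.2
      have h2 : (0:ℝ) < (1-y) ^ (-α - 1) :=
        Real.rpow_pos_of_pos (by linarith [hy.2.trans hρ.2]) _
      exact mul_pos h1 h2
  have hHanti : StrictAntiOn H (Set.Ico ρ 1) := by
    apply strictAntiOn_of_deriv_neg (convex_Ico _ _)
    · intro y hy
      exact (hHd y hy.2).continuousAt.continuousWithinAt
    · intro y hy
      rw [interior_Ico] at hy
      rw [(hHd y hy.2).deriv]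
      have h1 : φ y < 0 := hφneg y hy.1 hy.2
      have h2 : (0:ℝ) < (1-y) ^ (-α - 1) := Real.rpow_pos_of_pos (by linarith [hy.2]) _
      exact mul_neg_of_neg_of_pos h1 h2
  -- key comparison
  have hkey : ∀ x, 0 ≤ x → x < 1 → x ≠ ρ → H x < H ρ := by
    intro x hx0 hx1 hxρ
    rcases lt_or_gt_of_ne hxρ with h | h
    · exact hHmono ⟨hx0, h.le⟩ ⟨hρ.1.le, le_refl ρ⟩ h
    · exact hHanti ⟨le_refl ρ, hρ.2⟩ ⟨h.le, hx1⟩ h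
  have hρ1 : (0:ℝ) < 1 - ρ := by linarith [hρ.2]
  have hAρ : H ρ = (1 - Gkn n k ρ) / (1 - ρ) ^ α := by
    rw [hH]
    simp only
    rw [Real.rpow_neg hρ1.le, div_eq_mul_inv]
  -- main
  intro x hx
  rcases eq_or_lt_of_le hx.2 with hx1 | hx1
  · -- x = 1
    subst hx1
    have hG1 : Gkn n k 1 = 1 := Gkn_one n k (by omega)
    have hz : ((1:ℝ) - 1) ^ α = 0 := by
      rw [sub_self, Real.zero_rpow (by linarith : α ≠ 0)]
    constructor
    · rw [hG1, hz]; simp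
    · constructor
      · intro _; exact Or.inr rfl
      · intro _; rw [hG1, hz]; simp
  · -- x < 1
    have hx1' : (0:ℝ) < 1 - x := by linarith
    have hpx : (0:ℝ) < (1-x) ^ α := Real.rpow_pos_of_pos hx1' α
    have hHx : H x = (1 - Gkn n k x) / (1 - x) ^ α := by
      rw [hH]
      simp only
      rw [Real.rpow_neg hx1'.le, div_eq_mul_inv]
    constructor
    · rcases eq_or_ne x ρ with rfl | hne
      · rw [div_mul_cancel₀]
        exact ne_of_gt (Real.rpow_pos_of_pos hρ1 α)
      · have := hkey x hx.1 hx1 hne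
        rw [hHx, hAρ] at this
        have := (div_le_iff₀ hpx).1 this.le
        linarith
    · constructor
      · intro heq
        by_contra hcon
        push_neg at hcon
        have hne : x ≠ ρ := hcon.1
        have hlt := hkey x hx.1 hx1 hne
        rw [hHx, hAρ] at hlt
        rw [heq] at hlt
        rw [mul_div_assoc] at hlt
        rw [div_self (ne_of_gt hpx)] at hlt
        simp at hlt
      · intro hor
        rcases hor with rfl | h1
        · rw [div_mul_cancel₀]
          exact ne_of_gt (Real.rpow_pos_of_pos hρ1 α)
        · exact absurd h1 (ne_of_lt hx1)
end

section
/- For k = 2, n ≥ 3 and α ∈ [1, n−1), the unique root of α(1 − G_{2:n}(ρ)) = (1−ρ)g_{2:n}(ρ) in (0,1) is ρ = α / ((n−1)(n−α)), and the corresponding constant is A_{2:n}(α) = (1 + α/(n−α))^{n−α} (1 − α/(n−1))^{n−1−α}. -/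
/-- Density of the `2`-nd order statistic of `n` iid uniforms. -/
noncomputable def g2n (n : ℕ) (x : ℝ) : ℝ :=
  n * (n - 1) * x * (1 - x) ^ (n - 2)

lemma Gkn_aux (n : ℕ) (hn : 2 ≤ n) (x : ℝ) :
    1 - Gkn n 2 x = (1 - x) ^ (n - 1) * (1 + ((n : ℝ) - 1) * x) := by
  have hset : Finset.range (n + 1) = insert 0 (insert 1 (Finset.Icc 2 n)) := by
    ext j; simp only [Finset.mem_range, Finset.mem_insert, Finset.mem_Icc]; omega
  have hbin : ∑ j ∈ Finset.range (n + 1),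
      (n.choose j : ℝ) * x ^ j * (1 - x) ^ (n - j) = 1 := by
    have h := add_pow x (1 - x) n
    have hx : x + (1 - x) = 1 := by ring
    rw [hx, one_pow] at h
    calc ∑ j ∈ Finset.range (n + 1), (n.choose j : ℝ) * x ^ j * (1 - x) ^ (n - j)
        = ∑ j ∈ Finset.range (n + 1), x ^ j * (1 - x) ^ (n - j) * (n.choose j : ℝ) :=
          Finset.sum_congr rfl fun j _ => by ring
      _ = 1 := h.symm
  have h0 : (0:ℕ) ∉ insert 1 (Finset.Icc 2 n) := by simp
  have h1 : (1:ℕ) ∉ Finset.Icc 2 n := by simp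
  rw [hset, Finset.sum_insert h0, Finset.sum_insert h1] at hbin
  have hG : Gkn n 2 x = 1 - ((1 - x) ^ n + (n : ℝ) * x * (1 - x) ^ (n - 1)) := by
    simp only [Gkn]
    simp only [Nat.choose_zero_right, Nat.choose_one_right, pow_zero, pow_one,
      Nat.cast_one, Nat.sub_zero] at hbin
    linarith
  rw [hG]
  have hn1 : n = (n - 1) + 1 := by omega
  rw [show (1-x)^n = (1-x)^(n-1) * (1-x) by rw [← pow_succ, ← hn1]]
  ring

theorem root_and_constant_for_k_eq_two
    (n : ℕ) (hn : 3 ≤ n) (α : ℝ) (hα : 1 ≤ α) (hα' : α < n - 1) :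
    (α / ((n - 1) * (n - α)) ∈ Set.Ioo (0 : ℝ) 1) ∧
    (α * (1 - Gkn n 2 (α / ((n - 1) * (n - α)))) =
      (1 - α / ((n - 1) * (n - α))) * g2n n (α / ((n - 1) * (n - α)))) ∧
    (∀ ρ ∈ Set.Ioo (0 : ℝ) 1,
      α * (1 - Gkn n 2 ρ) = (1 - ρ) * g2n n ρ → ρ = α / ((n - 1) * (n - α))) ∧
    (1 - Gkn n 2 (α / ((n - 1) * (n - α)))) / (1 - α / ((n - 1) * (n - α))) ^ α =
      (1 + α / (n - α)) ^ ((n : ℝ) - α) * (1 - α / (n - 1)) ^ ((n : ℝ) - 1 - α) := by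
  have hα0 : 0 < α := by linarith
  have hb : (1:ℝ) < (n:ℝ) - 1 := by linarith
  have ha : (1:ℝ) < (n:ℝ) - α := by linarith
  have hc : (0:ℝ) < (n:ℝ) - 1 - α := by linarith
  have hnpos : (0:ℝ) < n := by linarith
  have hden : (0:ℝ) < ((n:ℝ) - 1) * ((n:ℝ) - α) := by
    apply mul_pos <;> linarith
  have hρpos : 0 < α / (((n:ℝ) - 1) * ((n:ℝ) - α)) := div_pos hα0 hden
  have hρ1 : α / (((n:ℝ) - 1) * ((n:ℝ) - α)) < 1 := by
    rw [div_lt_one hden]; nlinarith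
  have h1ρ : 0 < 1 - α / (((n:ℝ) - 1) * ((n:ℝ) - α)) := by linarith
  -- reduce the equation to a polynomial equation
  have key : ∀ ρ : ℝ, 0 < ρ → ρ < 1 →
      (α * (1 - Gkn n 2 ρ) = (1 - ρ) * g2n n ρ ↔
        α * (1 + ((n:ℝ) - 1) * ρ) = (n:ℝ) * ((n:ℝ) - 1) * ρ) := by
    intro ρ h0 h1
    rw [Gkn_aux n (by omega) ρ]
    have hp : (0:ℝ) < (1 - ρ) ^ (n - 1) := pow_pos (by linarith) _
    have hg : (1 - ρ) * g2n n ρ = (1 - ρ) ^ (n - 1) * ((n:ℝ) * ((n:ℝ) - 1) * ρ) := by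
      simp only [g2n]
      rw [show n - 1 = (n - 2) + 1 from by omega, pow_succ]
      ring
    rw [hg]
    constructor
    · intro h
      exact mul_left_cancel₀ hp.ne' (by linear_combination h)
    · intro h
      linear_combination (1 - ρ) ^ (n - 1) * h
  have hpoly : α * (1 + ((n:ℝ) - 1) * (α / (((n:ℝ) - 1) * ((n:ℝ) - α)))) =
      (n:ℝ) * ((n:ℝ) - 1) * (α / (((n:ℝ) - 1) * ((n:ℝ) - α))) := by
    field_simp
    ring
  refine ⟨⟨hρpos, hρ1⟩, (key _ hρpos hρ1).mpr hpoly, ?_, ?_⟩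
  · rintro ρ ⟨h0, h1⟩ heq
    have h := (key ρ h0 h1).mp heq
    rw [eq_div_iff hden.ne']
    linear_combination -h
  · -- the constant
    have h1mρ : 1 - α / (((n:ℝ) - 1) * ((n:ℝ) - α)) =
        (n:ℝ) * ((n:ℝ) - 1 - α) / (((n:ℝ) - 1) * ((n:ℝ) - α)) := by
      field_simp; ring
    have hplus : 1 + ((n:ℝ) - 1) * (α / (((n:ℝ) - 1) * ((n:ℝ) - α))) =
        (n:ℝ) / ((n:ℝ) - α) := by
      field_simp; ring
    have hr1 : 1 + α / ((n:ℝ) - α) = (n:ℝ) / ((n:ℝ) - α) := by field_simp; ring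
    have hr2 : 1 - α / ((n:ℝ) - 1) = ((n:ℝ) - 1 - α) / ((n:ℝ) - 1) := by field_simp
    rw [Gkn_aux n (by omega), h1mρ, hplus, hr1, hr2]
    set p : ℝ := (n:ℝ) / ((n:ℝ) - α) with hp_def
    set r : ℝ := ((n:ℝ) - 1 - α) / ((n:ℝ) - 1) with hr_def
    set q : ℝ := (n:ℝ) * ((n:ℝ) - 1 - α) / (((n:ℝ) - 1) * ((n:ℝ) - α)) with hq_def
    have hp : 0 < p := by apply div_pos <;> linarith
    have hr : 0 < r := by apply div_pos <;> linarith
    have hq : 0 < q := by apply div_pos; nlinarith; exact hden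
    have hqpr : q = p * r := by rw [hq_def, hp_def, hr_def]; field_simp
    have hnat : (q : ℝ) ^ (n - 1 : ℕ) = q ^ ((n:ℝ) - 1) := by
      rw [← Real.rpow_natCast q (n - 1), Nat.cast_sub (by omega), Nat.cast_one]
    rw [hnat]
    calc q ^ ((n:ℝ) - 1) * p / q ^ α
        = q ^ ((n:ℝ) - 1) / q ^ α * p := by ring
      _ = q ^ ((n:ℝ) - 1 - α) * p := by rw [← Real.rpow_sub hq]
      _ = (p * r) ^ ((n:ℝ) - 1 - α) * p := by rw [← hqpr]
      _ = p ^ ((n:ℝ) - 1 - α) * r ^ ((n:ℝ) - 1 - α) * p := by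
          rw [Real.mul_rpow hp.le hr.le]
      _ = p ^ ((n:ℝ) - 1 - α + 1) * r ^ ((n:ℝ) - 1 - α) := by
          rw [Real.rpow_add hp, Real.rpow_one]; ring
      _ = p ^ ((n:ℝ) - α) * r ^ ((n:ℝ) - 1 - α) := by
          rw [show (n:ℝ) - 1 - α + 1 = (n:ℝ) - α from by ring]
end
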